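/- arXiv:2008.01138 — 8 statements merged into one kernel-verified Lean document; each statement's English description precedes it below -/
import Mathlib

section
/- Let r ≥ 2 and n ≥ 1. There exist independent random variables X_1, …, X_n taking values in {0, 1, …, r} such that the entropy of S_n = X_1 + ⋯ + X_n equals w₀·H(B_n) + (1 − w₀)·(H(B_{n−1}) + log₂(r − 1)) + h(w₀), where w₀ = 2^{H(B_n) − H(B_{n−1})} / (r − 1 + 2^{H(B_n) − H(B_{n−1})}). Consequently, the maximum of H(S_n) over all choices of the distributions of X_1, …, X_n is at least this value. -/
open MeasureTheory ProbabilityTheory Real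

/-- The binary entropy function `h(p) = -p log₂ p - (1-p) log₂ (1-p)`
(with the convention `0 · log₂ 0 = 0`, automatic since `Real.logb 2 0 = 0`). -/
noncomputable def binEnt (p : ℝ) : ℝ :=
  -(p * Real.logb 2 p) - (1 - p) * Real.logb 2 (1 - p)

/-- The Shannon entropy (in bits) of the Binomial(m, 1/2) distribution,
`H(B_m) = -∑_{k=0}^m C(m,k) 2^{-m} log₂ (C(m,k) 2^{-m})`. -/
noncomputable def HB (m : ℕ) : ℝ :=
  -∑ k ∈ Finset.range (m + 1),
      ((m.choose k : ℝ) * (2 : ℝ) ^ (-(m : ℤ))) *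
        Real.logb 2 ((m.choose k : ℝ) * (2 : ℝ) ^ (-(m : ℤ)))

/-- The Shannon entropy (in bits) of an `ℕ`-valued random variable `S` taking
values in `{0, 1, …, N}`:  `H(S) = -∑_{j=0}^N P(S = j) log₂ P(S = j)`. -/
noncomputable def entS {Ω : Type*} [MeasurableSpace Ω] (μ : Measure Ω)
    (S : Ω → ℕ) (N : ℕ) : ℝ :=
  -∑ j ∈ Finset.range (N + 1),
      (μ {ω | S ω = j}).toReal * Real.logb 2 (μ {ω | S ω = j}).toReal

namespace MaxEntAux

/-- weight function for the auxiliary coordinates: `1/2` on `{0, r}`, `0` elsewhere. -/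
noncomputable def q1 (r : ℕ) : Fin (r + 1) → ℝ :=
  fun x => if x = 0 ∨ x = Fin.last r then 2⁻¹ else 0

/-- weight function for the first coordinate. -/
noncomputable def q0 (r : ℕ) (w : ℝ) : Fin (r + 1) → ℝ :=
  fun x => if x = 0 ∨ x = Fin.last r then w / 2 else (1 - w) / ((r : ℝ) - 1)

lemma last_ne_zero {r : ℕ} (hr : 1 ≤ r) : (Fin.last r) ≠ (0 : Fin (r + 1)) := by
  simp [Fin.ext_iff]; omega

lemma filter_pair {r : ℕ} :
    (Finset.univ.filter (fun x : Fin (r + 1) => x = 0 ∨ x = Fin.last r)) =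
      ({0, Fin.last r} : Finset (Fin (r + 1))) := by
  ext x; simp [Finset.mem_filter]

lemma sum_ite_pair {r : ℕ} (hr : 1 ≤ r) (a b : ℝ) :
    ∑ x : Fin (r + 1), (if x = 0 ∨ x = Fin.last r then a else b) =
      2 * a + ((r : ℝ) - 1) * b := by
  rw [Finset.sum_ite]
  rw [Finset.sum_const, Finset.sum_const, filter_pair]
  have hcard : ({0, Fin.last r} : Finset (Fin (r + 1))).card = 2 := by
    rw [Finset.card_insert_of_notMem (by simp [(last_ne_zero hr).symm])]
    simp
  have hcard2 : (Finset.univ.filter (fun x : Fin (r + 1) =>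
      ¬(x = 0 ∨ x = Fin.last r))).card = r - 1 := by
    rw [Finset.filter_not, Finset.card_sdiff_of_subset (Finset.subset_univ _), filter_pair, hcard]
    simp
  rw [hcard, hcard2]
  have : ((r - 1 : ℕ) : ℝ) = (r : ℝ) - 1 := by
    push_cast [Nat.cast_sub hr]; ring
  simp [nsmul_eq_mul, this]

lemma q1_sum {r : ℕ} (hr : 1 ≤ r) : ∑ x, q1 r x = 1 := by
  unfold q1; rw [sum_ite_pair hr]; ring

lemma q0_sum {r : ℕ} (hr : 2 ≤ r) (w : ℝ) : ∑ x, q0 r w x = 1 := by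
  unfold q0; rw [sum_ite_pair (by omega)]
  have : (r : ℝ) - 1 ≠ 0 := by
    have : (2 : ℝ) ≤ (r : ℝ) := by exact_mod_cast hr
    intro h; nlinarith
  field_simp
  ring




/-- binomial(m,1/2) weight -/
noncomputable def bw (m k : ℕ) : ℝ := (m.choose k : ℝ) * (2 : ℝ) ^ (-(m : ℤ))

noncomputable def gsum (r m t : ℕ) : ℝ :=
  ∑ v : Fin m → Fin (r + 1),
    if (∑ i, ((v i : ℕ))) = t then (∏ i, q1 r (v i)) else 0

lemma gsum_succ (r m t : ℕ) :
    gsum r (m + 1) t =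
      ∑ a : Fin (r + 1), q1 r a * (if (a : ℕ) ≤ t then gsum r m (t - (a : ℕ)) else 0) := by
  unfold gsum
  rw [← Equiv.sum_comp (Fin.consEquiv (fun _ => Fin (r + 1)))]
  rw [Fintype.sum_prod_type]
  refine Finset.sum_congr rfl fun a _ => ?_
  have hcond : ∀ vs : Fin m → Fin (r + 1),
      (∑ i, ((Fin.cons a vs : Fin (m+1) → Fin (r+1)) i : ℕ)) = (a : ℕ) + ∑ i, (vs i : ℕ) := by
    intro vs
    rw [Fin.sum_univ_succ]
    simp
  have hprod : ∀ vs : Fin m → Fin (r + 1),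
      (∏ i, q1 r ((Fin.cons a vs : Fin (m+1) → Fin (r+1)) i)) = q1 r a * ∏ i, q1 r (vs i) := by
    intro vs
    rw [Fin.prod_univ_succ]
    simp
  simp only [Fin.consEquiv_apply, hcond, hprod]
  by_cases h : (a : ℕ) ≤ t
  · simp only [if_pos h, Finset.mul_sum]
    refine Finset.sum_congr rfl fun vs _ => ?_
    have hiff : ((a : ℕ) + ∑ i, (vs i : ℕ) = t) ↔ (∑ i, (vs i : ℕ) = t - (a : ℕ)) := by omega
    rw [if_congr hiff rfl rfl]
    split <;> simp
  · simp only [if_neg h, mul_zero]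
    rw [Finset.sum_eq_zero]
    intro vs _
    have : ¬ ((a : ℕ) + ∑ i, (vs i : ℕ) = t) := by omega
    rw [if_neg this]

lemma last_ne_zero' {r : ℕ} (hr : 1 ≤ r) : (0 : Fin (r + 1)) ≠ Fin.last r := by
  simp [Fin.ext_iff]; omega

lemma gsum_succ' (r : ℕ) (hr : 1 ≤ r) (m t : ℕ) :
    gsum r (m + 1) t =
      2⁻¹ * gsum r m t + 2⁻¹ * (if r ≤ t then gsum r m (t - r) else 0) := by
  rw [gsum_succ]
  rw [← Finset.sum_subset (Finset.subset_univ ({0, Fin.last r} : Finset (Fin (r+1))))]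
  · rw [Finset.sum_pair (last_ne_zero' hr)]
    have h0 : q1 r 0 = 2⁻¹ := by simp [q1]
    have hl : q1 r (Fin.last r) = 2⁻¹ := by simp [q1]
    rw [h0, hl]
    simp [Fin.val_last]
  · intro x _ hx
    have : q1 r x = 0 := by
      simp only [Finset.mem_insert, Finset.mem_singleton] at hx
      push_neg at hx
      simp [q1, hx.1, hx.2]
    rw [this, zero_mul]

lemma gsum_eq (r : ℕ) (hr : 1 ≤ r) :
    ∀ m t, gsum r m t = if r ∣ t then bw m (t / r) else 0 := by
  intro m
  induction m with
  | zero =>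
    intro t
    unfold gsum
    rw [Fintype.sum_unique]
    simp only [Finset.univ_eq_empty, Finset.sum_empty, Finset.prod_empty]
    by_cases h : t = 0
    · subst h; simp [bw]
    · rw [if_neg (by simpa using Ne.symm h)]
      by_cases hd : r ∣ t
      · obtain ⟨k, rfl⟩ := hd
        have hk : 0 < k := Nat.pos_of_ne_zero (fun h' => h (by rw [h', mul_zero]))
        rw [if_pos ⟨k, rfl⟩, Nat.mul_div_cancel_left _ (by omega : 0 < r)]
        simp [bw, Nat.choose_eq_zero_of_lt hk]
      · rw [if_neg hd]
  | succ m ih =>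
    intro t
    rw [gsum_succ' r hr, ih, ih]
    have h2 : (2 : ℝ) ^ (-((m + 1 : ℕ) : ℤ)) = 2⁻¹ * (2 : ℝ) ^ (-(m : ℤ)) := by
      rw [← zpow_neg_one, ← zpow_add₀ (two_ne_zero)]
      congr 1
      push_cast
      ring
    by_cases hd : r ∣ t
    · obtain ⟨k, rfl⟩ := hd
      rcases Nat.eq_zero_or_pos k with hk | hk
      · subst hk
        rw [Nat.mul_zero]
        rw [if_pos (dvd_zero r), if_neg (by omega : ¬ r ≤ 0), if_pos (dvd_zero r)]
        rw [Nat.zero_div]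
        simp only [bw, Nat.choose_zero_right, Nat.cast_one, one_mul, h2]
        ring
      · obtain ⟨k', rfl⟩ : ∃ k', k = k' + 1 := ⟨k - 1, by omega⟩
        have hle : r ≤ r * (k' + 1) := Nat.le_mul_of_pos_right r (by omega)
        have hsub : r * (k' + 1) - r = r * k' := by rw [Nat.mul_succ]; omega
        have d1 : r ∣ r * (k' + 1) := ⟨k' + 1, rfl⟩
        have d2 : r ∣ r * k' := ⟨k', rfl⟩
        simp only [if_pos d1, if_pos hle, hsub, if_pos d2]
        rw [Nat.mul_div_cancel_left _ (by omega : 0 < r),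
          Nat.mul_div_cancel_left _ (by omega : 0 < r)]
        simp only [bw, Nat.choose_succ_succ m k', h2]
        push_cast
        ring
    · rw [if_neg hd, if_neg hd]
      have hz : (if r ≤ t then (if r ∣ t - r then bw m ((t - r) / r) else 0) else 0) = 0 := by
        split
        · rw [if_neg]
          intro hdd
          apply hd
          have := dvd_add hdd (dvd_refl r)
          rwa [Nat.sub_add_cancel ‹r ≤ t›] at this
        · rfl
      rw [hz]
      ring



/-! ### Measure-theoretic layer -/

noncomputable def qq (r : ℕ) (w : ℝ) (m : ℕ) : Fin (m + 1) → Fin (r + 1) → ℝ :=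
  fun i => if i = 0 then q0 r w else q1 r

lemma qq_nonneg {r m : ℕ} {w : ℝ} (hr : 1 ≤ r) (hw0 : 0 ≤ w) (hw1 : w ≤ 1) :
    ∀ (i : Fin (m + 1)) x, 0 ≤ qq r w m i x := by
  intro i x
  have h1 : (0:ℝ) ≤ (r : ℝ) - 1 := by
    have : (1:ℝ) ≤ (r:ℝ) := by exact_mod_cast hr
    linarith
  unfold qq
  by_cases hi : i = 0
  · rw [if_pos hi]; unfold q0; split
    · linarith
    · apply div_nonneg <;> linarith
  · rw [if_neg hi]; unfold q1; split <;> norm_num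

lemma qq_sum {r m : ℕ} {w : ℝ} (hr : 2 ≤ r) (i : Fin (m + 1)) :
    ∑ x, qq r w m i x = 1 := by
  unfold qq
  by_cases hi : i = 0
  · simp only [if_pos hi]; exact q0_sum hr w
  · simp only [if_neg hi]; exact q1_sum (by omega)

/-- the summed weight of configurations with total `s` -/
noncomputable def Psum (r : ℕ) (w : ℝ) (m : ℕ) (s : ℕ) : ℝ :=
  ∑ ω : Fin (m + 1) → Fin (r + 1),
    if (∑ i, ((ω i : ℕ))) = s then ∏ i, qq r w m i (ω i) else 0

lemma Psum_nonneg {r m : ℕ} {w : ℝ} (hr : 1 ≤ r) (hw0 : 0 ≤ w) (hw1 : w ≤ 1) (s : ℕ) :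
    0 ≤ Psum r w m s := by
  apply Finset.sum_nonneg
  intro ω _
  split
  · exact Finset.prod_nonneg fun i _ => qq_nonneg hr hw0 hw1 i (ω i)
  · exact le_refl 0

lemma meas_finset {α : Type*} [MeasurableSpace α] [MeasurableSingletonClass α]
    (μ : Measure α) (F : Finset α) : μ ↑F = ∑ ω ∈ F, μ {ω} := by
  have h : (↑F : Set α) = ⋃ ω ∈ F, ({ω} : Set α) := by ext x; simp
  rw [h, measure_biUnion_finset]
  · intro x _ y _ hxy
    simp [Set.disjoint_singleton_left, hxy]
  · exact fun b _ => measurableSet_singleton b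

lemma indep_coords {ι : Type*} [Fintype ι] [DecidableEq ι] {β : Type*} [MeasurableSpace β]
    (μi : ι → Measure β) [∀ i, IsProbabilityMeasure (μi i)] :
    iIndepFun (fun (i : ι) (ω : ι → β) => ω i) (Measure.pi μi) := by
  rw [iIndepFun_iff_measure_inter_preimage_eq_mul]
  intro S sets hsets
  have key : ∀ (T : Finset ι) (f : ∀ _ : ι, Set β), (∀ i ∈ T, MeasurableSet (f i)) →
      Measure.pi μi (⋂ i ∈ T, (fun ω : ι → β => ω i) ⁻¹' f i) = ∏ i ∈ T, μi i (f i) := by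
    intro T f hf
    have hU : (⋂ i ∈ T, (fun ω : ι → β => ω i) ⁻¹' f i) =
        Set.pi Set.univ (fun i => if i ∈ T then f i else Set.univ) := by
      ext ω
      simp only [Set.mem_iInter, Set.mem_preimage, Set.mem_pi, Set.mem_univ, true_implies]
      constructor
      · intro h i
        by_cases hi : i ∈ T
        · rw [if_pos hi]; exact h i hi
        · rw [if_neg hi]; trivial
      · intro h i hi
        have := h i
        rwa [if_pos hi] at this
    rw [hU, Measure.pi_pi]
    have : ∀ i : ι, μi i (if i ∈ T then f i else Set.univ) =
        (if i ∈ T then μi i (f i) else 1) := by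
      intro i
      by_cases hi : i ∈ T
      · rw [if_pos hi, if_pos hi]
      · rw [if_neg hi, if_neg hi, measure_univ]
    rw [Finset.prod_congr rfl (fun i _ => this i)]
    rw [Finset.prod_ite_mem Finset.univ T (fun i => μi i (f i)), Finset.univ_inter]
  rw [key S sets hsets]
  refine Finset.prod_congr rfl fun i hi => ?_
  have := key ({i} : Finset ι) sets
    (by intro j hj; rw [Finset.mem_singleton] at hj; rw [hj]; exact hsets i hi)
  simpa using this.symm

lemma ofReal_prod_of_nonneg {α : Type*} {s : Finset α} {f : α → ℝ} (h : ∀ i ∈ s, 0 ≤ f i) :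
    ENNReal.ofReal (∏ i ∈ s, f i) = ∏ i ∈ s, ENNReal.ofReal (f i) := by
  induction s using Finset.cons_induction with
  | empty => simp
  | cons a s ha ih =>
    rw [Finset.prod_cons, Finset.prod_cons, ENNReal.ofReal_mul (h a (Finset.mem_cons_self a s)),
      ih (fun i hi => h i (Finset.mem_cons_of_mem hi))]

lemma meas_sum_eq {r m : ℕ} {w : ℝ} (hr : 1 ≤ r) (hw0 : 0 ≤ w) (hw1 : w ≤ 1)
    (P : Fin (m + 1) → PMF (Fin (r + 1)))
    (hP : ∀ i x, P i x = ENNReal.ofReal (qq r w m i x)) (s : ℕ) :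
    Measure.pi (fun i => (P i).toMeasure) {ω | (∑ i, ((ω i : ℕ))) = s}
      = ENNReal.ofReal (Psum r w m s) := by
  have hset : {ω : Fin (m + 1) → Fin (r + 1) | (∑ i, ((ω i : ℕ))) = s} =
      ↑(Finset.univ.filter fun ω : Fin (m + 1) → Fin (r + 1) => (∑ i, ((ω i : ℕ))) = s) := by
    ext ω; simp
  rw [hset, meas_finset]
  have hsingle : ∀ ω : Fin (m + 1) → Fin (r + 1),
      (Measure.pi (fun i => (P i).toMeasure)) {ω} =
        ENNReal.ofReal (∏ i, qq r w m i (ω i)) := by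
    intro ω
    rw [← Set.univ_pi_singleton ω, Measure.pi_pi]
    have hone : ∀ i, (P i).toMeasure {ω i} = ENNReal.ofReal (qq r w m i (ω i)) := by
      intro i
      rw [PMF.toMeasure_apply_singleton _ _ (measurableSet_singleton _), hP]
    rw [Finset.prod_congr rfl fun i _ => hone i,
      ofReal_prod_of_nonneg (fun i _ => qq_nonneg hr hw0 hw1 i (ω i))]
  rw [Finset.sum_congr rfl fun ω _ => hsingle ω]
  rw [← ENNReal.ofReal_sum_of_nonneg
    (fun ω _ => Finset.prod_nonneg fun i _ => qq_nonneg hr hw0 hw1 i (ω i))]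
  congr 1
  rw [Psum, Finset.sum_filter]

lemma Psum_split (r m : ℕ) (w : ℝ) (s : ℕ) :
    Psum r w m s =
      ∑ a : Fin (r + 1), q0 r w a * (if (a : ℕ) ≤ s then gsum r m (s - (a : ℕ)) else 0) := by
  unfold Psum
  rw [← Equiv.sum_comp (Fin.consEquiv (fun _ => Fin (r + 1)))]
  rw [Fintype.sum_prod_type]
  refine Finset.sum_congr rfl fun a _ => ?_
  have hcond : ∀ vs : Fin m → Fin (r + 1),
      (∑ i, ((Fin.cons a vs : Fin (m+1) → Fin (r+1)) i : ℕ)) = (a : ℕ) + ∑ i, (vs i : ℕ) := by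
    intro vs
    rw [Fin.sum_univ_succ]
    simp
  have hprod : ∀ vs : Fin m → Fin (r + 1),
      (∏ i, qq r w m i ((Fin.cons a vs : Fin (m+1) → Fin (r+1)) i)) =
        q0 r w a * ∏ i, q1 r (vs i) := by
    intro vs
    rw [Fin.prod_univ_succ]
    simp [qq, Fin.succ_ne_zero, q0]
  simp only [Fin.consEquiv_apply, hcond, hprod]
  unfold gsum
  by_cases h : (a : ℕ) ≤ s
  · simp only [if_pos h, Finset.mul_sum]
    refine Finset.sum_congr rfl fun vs _ => ?_
    have hiff : ((a : ℕ) + ∑ i, (vs i : ℕ) = s) ↔ (∑ i, (vs i : ℕ) = s - (a : ℕ)) := by omega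
    rw [if_congr hiff rfl rfl]
    split <;> simp
  · simp only [if_neg h, mul_zero]
    rw [Finset.sum_eq_zero]
    intro vs _
    have : ¬ ((a : ℕ) + ∑ i, (vs i : ℕ) = s) := by omega
    rw [if_neg this]

lemma not_dvd_helper {r j k a : ℕ} (hr : 0 < r) (hj : j < r) (ha : a ≤ r) (haj : a ≠ j)
    (har : a = r → 1 ≤ j) (hle : a ≤ j + r * k) : ¬ r ∣ (j + r * k - a) := by
  rintro ⟨q, hq⟩
  have heq : j + r * k = r * q + a := by
    have := (Nat.sub_eq_iff_eq_add hle).mp hq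
    omega
  have h1 : (j + r * k) % r = j := by
    rw [Nat.mul_comm, Nat.add_mul_mod_self_right, Nat.mod_eq_of_lt hj]
  have h2 : (r * q + a) % r = a % r := by
    rw [Nat.mul_comm, Nat.add_comm, Nat.add_mul_mod_self_right]
  rw [heq, h2] at h1
  rcases Nat.lt_or_ge a r with h | h
  · rw [Nat.mod_eq_of_lt h] at h1; exact haj h1
  · have har' : a = r := le_antisymm ha h
    rw [har', Nat.mod_self] at h1
    have := har har'
    omega

lemma bw_half (m : ℕ) :
    (2 : ℝ) ^ (-((m + 1 : ℕ) : ℤ)) = 2⁻¹ * (2 : ℝ) ^ (-(m : ℤ)) := by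
  rw [← zpow_neg_one, ← zpow_add₀ (two_ne_zero)]
  congr 1
  push_cast
  ring

lemma bw_succ_zero (m : ℕ) : bw (m + 1) 0 = 2⁻¹ * bw m 0 := by
  unfold bw
  rw [bw_half]
  simp

lemma bw_pascal (m k : ℕ) : bw (m + 1) (k + 1) = 2⁻¹ * bw m (k + 1) + 2⁻¹ * bw m k := by
  unfold bw
  rw [bw_half, Nat.choose_succ_succ]
  push_cast
  ring

lemma Psum_mul {r m : ℕ} {w : ℝ} (hr : 2 ≤ r) (k : ℕ) :
    Psum r w m (r * k) = w * bw (m + 1) k := by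
  rw [Psum_split]
  rw [← Finset.sum_subset (Finset.subset_univ ({0, Fin.last r} : Finset (Fin (r + 1))))]
  · rw [Finset.sum_pair (last_ne_zero' (by omega))]
    have h00 : q0 r w 0 = w / 2 := by simp [q0]
    have h0l : q0 r w (Fin.last r) = w / 2 := by simp [q0]
    rw [h00, h0l]
    simp only [Fin.val_zero, Fin.val_last, Nat.sub_zero]
    simp only [Nat.zero_le, ↓reduceIte]
    cases k with
    | zero =>
      rw [Nat.mul_zero, if_neg (by omega : ¬ r ≤ 0)]
      rw [gsum_eq r (by omega), if_pos (dvd_zero r), Nat.zero_div]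
      rw [bw_succ_zero]
      ring
    | succ k' =>
      have hle : r ≤ r * (k' + 1) := Nat.le_mul_of_pos_right r (by omega)
      have hsub : r * (k' + 1) - r = r * k' := by rw [Nat.mul_succ]; omega
      rw [if_pos hle, hsub, gsum_eq r (by omega), gsum_eq r (by omega)]
      rw [if_pos ⟨k' + 1, rfl⟩, if_pos ⟨k', rfl⟩,
        Nat.mul_div_cancel_left _ (by omega : 0 < r),
        Nat.mul_div_cancel_left _ (by omega : 0 < r)]
      rw [bw_pascal]
      ring
  · intro a _ ha'
    simp only [Finset.mem_insert, Finset.mem_singleton] at ha'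
    push_neg at ha'
    have hv0 : (a : ℕ) ≠ 0 := by
      intro h; exact ha'.1 (by apply Fin.ext; simpa using h)
    have hvr : (a : ℕ) ≠ r := by
      intro h; exact ha'.2 (by apply Fin.ext; simp [h, Fin.val_last])
    have hva : (a : ℕ) ≤ r := Fin.is_le a
    by_cases hle : (a : ℕ) ≤ r * k
    · rw [if_pos hle, gsum_eq r (by omega)]
      have hnd : ¬ r ∣ (r * k - (a : ℕ)) := by
        have := not_dvd_helper (show 0 < r by omega) (show 0 < r by omega) hva hv0
          (fun h => absurd h hvr) (show (a : ℕ) ≤ 0 + r * k by omega)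
        simpa using this
      rw [if_neg hnd, mul_zero]
    · rw [if_neg hle, mul_zero]

lemma Psum_off {r m : ℕ} {w : ℝ} (hr : 2 ≤ r) {j : ℕ} (hj1 : 1 ≤ j) (hjr : j < r) (k : ℕ) :
    Psum r w m (j + r * k) = ((1 - w) / ((r : ℝ) - 1)) * bw m k := by
  rw [Psum_split]
  have haj : (⟨j, by omega⟩ : Fin (r + 1)) ∈ (Finset.univ : Finset (Fin (r + 1))) :=
    Finset.mem_univ _
  rw [Finset.sum_eq_single (⟨j, by omega⟩ : Fin (r + 1))]
  · have hq : q0 r w ⟨j, by omega⟩ = (1 - w) / ((r : ℝ) - 1) := by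
      unfold q0
      rw [if_neg]
      push_neg
      constructor
      · intro h
        have := congrArg Fin.val h
        simp at this
        omega
      · intro h
        have := congrArg Fin.val h
        simp [Fin.val_last] at this
        omega
    rw [hq]
    have hle : ((⟨j, by omega⟩ : Fin (r + 1)) : ℕ) ≤ j + r * k := by simp
    rw [if_pos hle]
    have hsub : j + r * k - ((⟨j, by omega⟩ : Fin (r + 1)) : ℕ) = r * k := by simp
    rw [hsub, gsum_eq r (by omega), if_pos ⟨k, rfl⟩,
      Nat.mul_div_cancel_left _ (by omega : 0 < r)]
  · intro b _ hb
    have hbj : (b : ℕ) ≠ j := by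
      intro h; exact hb (by apply Fin.ext; simpa using h)
    by_cases hle : (b : ℕ) ≤ j + r * k
    · rw [if_pos hle, gsum_eq r (by omega),
        if_neg (not_dvd_helper (by omega) hjr (Fin.is_le b) hbj (fun _ => hj1) hle), mul_zero]
    · rw [if_neg hle, mul_zero]
  · intro h; exact absurd (Finset.mem_univ _) h

/-! ### Entropy assembly -/

lemma HB_eq (m : ℕ) :
    HB m = -∑ k ∈ Finset.range (m + 1), bw m k * Real.logb 2 (bw m k) := rfl

lemma bw_sum (m : ℕ) : ∑ k ∈ Finset.range (m + 1), bw m k = 1 := by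
  unfold bw
  rw [← Finset.sum_mul, ← Nat.cast_sum, Nat.sum_range_choose]
  rw [zpow_neg, zpow_natCast]
  push_cast
  rw [mul_inv_cancel₀]
  positivity

lemma bw_pos {m k : ℕ} (hk : k ≤ m) : 0 < bw m k := by
  unfold bw
  have : 0 < m.choose k := Nat.choose_pos hk
  positivity

lemma sum_mul_logb {c : ℝ} (hc : 0 < c) (M : ℕ) :
    ∑ k ∈ Finset.range (M + 1), (c * bw M k) * Real.logb 2 (c * bw M k) =
      c * Real.logb 2 c - c * HB M := by
  have hterm : ∀ k ∈ Finset.range (M + 1),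
      (c * bw M k) * Real.logb 2 (c * bw M k) =
        c * (bw M k * Real.logb 2 (bw M k)) + (bw M k) * (c * Real.logb 2 c) := by
    intro k hk
    have hb : 0 < bw M k := bw_pos (by simpa [Nat.lt_succ_iff] using hk)
    rw [Real.logb_mul hc.ne' hb.ne']
    ring
  rw [Finset.sum_congr rfl hterm, Finset.sum_add_distrib, ← Finset.mul_sum, ← Finset.sum_mul,
    bw_sum, one_mul]
  have h2 : ∑ k ∈ Finset.range (M + 1), bw M k * Real.logb 2 (bw M k) = -HB M := by
    rw [HB_eq]; ring
  rw [h2]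
  ring

lemma range_union (r m : ℕ) (hr : 2 ≤ r) :
    Finset.range ((m + 1) * r + 1) =
      (Finset.range (m + 2)).image (fun k => r * k) ∪
        ((Finset.Ico 1 r) ×ˢ (Finset.range (m + 1))).image (fun p => p.1 + r * p.2) := by
  ext s
  simp only [Finset.mem_union, Finset.mem_image, Finset.mem_range, Finset.mem_product,
    Finset.mem_Ico, Prod.exists]
  constructor
  · intro hs
    by_cases hd : r ∣ s
    · obtain ⟨k, rfl⟩ := hd
      left
      refine ⟨k, ?_, rfl⟩
      by_contra hk
      push_neg at hk
      have : (m + 2) * r ≤ k * r := Nat.mul_le_mul_right r hk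
      have h1 : r * k = k * r := Nat.mul_comm r k
      have h2 : (m + 1) * r + r = (m + 2) * r := by ring
      omega
    · right
      refine ⟨s % r, s / r, ⟨⟨?_, ?_⟩, ?_⟩, ?_⟩
      · rcases Nat.eq_zero_or_pos (s % r) with h | h
        · exact absurd (Nat.dvd_iff_mod_eq_zero.mpr h) hd
        · exact h
      · exact Nat.mod_lt s (by omega)
      · -- s / r < m + 1
        by_contra hk
        push_neg at hk
        have h1 : (m + 1) * r ≤ (s / r) * r := Nat.mul_le_mul_right r hk
        have h2 : r * (s / r) + s % r = s := Nat.div_add_mod s r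
        have h3 : s % r ≠ 0 := fun h => hd (Nat.dvd_iff_mod_eq_zero.mpr h)
        have h4 : r * (s / r) = (s / r) * r := Nat.mul_comm _ _
        omega
      · have h2 : r * (s / r) + s % r = s := Nat.div_add_mod s r
        omega
  · rintro (⟨k, hk, rfl⟩ | ⟨j, k, ⟨⟨hj1, hjr⟩, hk⟩, rfl⟩)
    · have : r * k ≤ r * (m + 1) := Nat.mul_le_mul_left r (by omega)
      have h1 : r * (m + 1) = (m + 1) * r := Nat.mul_comm _ _
      omega
    · have : r * k ≤ r * m := Nat.mul_le_mul_left r (by omega)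
      have h1 : r * m + r = (m + 1) * r := by ring
      omega

lemma range_disjoint (r m : ℕ) (hr : 2 ≤ r) :
    Disjoint ((Finset.range (m + 2)).image (fun k => r * k))
      (((Finset.Ico 1 r) ×ˢ (Finset.range (m + 1))).image (fun p => p.1 + r * p.2)) := by
  rw [Finset.disjoint_left]
  rintro s hs hs'
  simp only [Finset.mem_image, Finset.mem_range, Finset.mem_product, Finset.mem_Ico,
    Prod.exists] at hs hs'
  obtain ⟨k, _, rfl⟩ := hs
  obtain ⟨j, k', ⟨⟨hj1, hjr⟩, _⟩, heq⟩ := hs'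
  have h1 : (j + r * k') % r = j := by
    rw [Nat.mul_comm, Nat.add_mul_mod_self_right, Nat.mod_eq_of_lt hjr]
  have h2 : (r * k) % r = 0 := by
    rw [Nat.mul_comm, Nat.mul_mod_left]
  rw [← heq] at h2
  omega

lemma sum_range_decomp (r m : ℕ) (hr : 2 ≤ r) (F : ℕ → ℝ) :
    ∑ s ∈ Finset.range ((m + 1) * r + 1), F s =
      (∑ k ∈ Finset.range (m + 2), F (r * k)) +
        ∑ p ∈ (Finset.Ico 1 r) ×ˢ (Finset.range (m + 1)), F (p.1 + r * p.2) := by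
  rw [range_union r m hr, Finset.sum_union (range_disjoint r m hr)]
  congr 1
  · rw [Finset.sum_image]
    intro x _ y _ h
    exact Nat.eq_of_mul_eq_mul_left (by omega) h
  · rw [Finset.sum_image]
    rintro ⟨j1, k1⟩ h1 ⟨j2, k2⟩ h2 heq
    simp only [Finset.mem_coe, Finset.mem_product, Finset.mem_Ico, Finset.mem_range] at h1 h2
    dsimp only at heq
    have hm1 : (j1 + r * k1) % r = j1 := by
      rw [Nat.mul_comm, Nat.add_mul_mod_self_right, Nat.mod_eq_of_lt h1.1.2]
    have hm2 : (j2 + r * k2) % r = j2 := by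
      rw [Nat.mul_comm, Nat.add_mul_mod_self_right, Nat.mod_eq_of_lt h2.1.2]
    have hj : j1 = j2 := by rw [← hm1, ← hm2, heq]
    have hk : k1 = k2 := by
      subst hj
      have := Nat.eq_of_mul_eq_mul_left (show 0 < r by omega) (by omega : r * k1 = r * k2)
      exact this
    simp [hj, hk]

theorem aux (r m : ℕ) (hr : 2 ≤ r) (w : ℝ) (hw0 : 0 < w) (hw1 : w < 1) :
    ∃ (Ω : Type) (_ : MeasurableSpace Ω) (μ : Measure Ω) (_ : IsProbabilityMeasure μ)
      (X : Fin (m + 1) → Ω → ℕ),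
      (∀ i, Measurable (X i)) ∧
      iIndepFun X μ ∧
      (∀ i ω, X i ω ≤ r) ∧
      entS μ (fun ω => ∑ i, X i ω) ((m + 1) * r) =
        w * HB (m + 1) + (1 - w) * (HB m + Real.logb 2 ((r : ℝ) - 1)) + binEnt w := by
  have hrR : (0 : ℝ) < (r : ℝ) - 1 := by
    have : (2 : ℝ) ≤ (r : ℝ) := by exact_mod_cast hr
    linarith
  let P : Fin (m + 1) → PMF (Fin (r + 1)) := fun i =>
    PMF.ofFintype (fun x => ENNReal.ofReal (qq r w m i x))
      (by rw [← ENNReal.ofReal_sum_of_nonneg (fun x _ => qq_nonneg (by omega) hw0.le hw1.le i x),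
            qq_sum hr i, ENNReal.ofReal_one])
  refine ⟨Fin (m + 1) → Fin (r + 1), inferInstance,
    Measure.pi (fun i => (P i).toMeasure), inferInstance,
    fun i ω => ((ω i : ℕ)), ?_, ?_, ?_, ?_⟩
  · exact fun i => Measurable.comp Measurable.of_discrete (measurable_pi_apply i)
  · exact (indep_coords (fun i => (P i).toMeasure)).comp (fun _ => Fin.val)
      (fun _ => Measurable.of_discrete)
  · exact fun i ω => Fin.is_le (ω i)
  · have hP : ∀ i x, P i x = ENNReal.ofReal (qq r w m i x) := fun i x => rfl
    have hPs : ∀ s, ((Measure.pi fun i => (P i).toMeasure)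
        {ω : Fin (m + 1) → Fin (r + 1) | (∑ i, ((ω i : ℕ))) = s}).toReal = Psum r w m s := by
      intro s
      rw [meas_sum_eq (by omega) hw0.le hw1.le P hP s,
        ENNReal.toReal_ofReal (Psum_nonneg (by omega) hw0.le hw1.le s)]
    unfold entS
    rw [Finset.sum_congr rfl (fun j _ => by rw [hPs j])]
    rw [sum_range_decomp r m hr (fun s => Psum r w m s * Real.logb 2 (Psum r w m s))]
    have S1 : ∑ k ∈ Finset.range (m + 2),
        Psum r w m (r * k) * Real.logb 2 (Psum r w m (r * k)) =
          w * Real.logb 2 w - w * HB (m + 1) := by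
      have h := sum_mul_logb hw0 (m + 1)
      rw [← h]
      exact Finset.sum_congr rfl fun k _ => by rw [Psum_mul hr]
    have hc : (0 : ℝ) < (1 - w) / ((r : ℝ) - 1) := div_pos (by linarith) hrR
    have S2 : ∑ p ∈ (Finset.Ico 1 r) ×ˢ (Finset.range (m + 1)),
        Psum r w m (p.1 + r * p.2) * Real.logb 2 (Psum r w m (p.1 + r * p.2)) =
          (1 - w) * (Real.logb 2 (1 - w) - Real.logb 2 ((r : ℝ) - 1)) - (1 - w) * HB m := by
      rw [Finset.sum_product]
      have inner : ∀ j ∈ Finset.Ico 1 r,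
          (∑ k ∈ Finset.range (m + 1),
            Psum r w m (j + r * k) * Real.logb 2 (Psum r w m (j + r * k))) =
          ((1 - w) / ((r : ℝ) - 1)) * Real.logb 2 ((1 - w) / ((r : ℝ) - 1)) -
            ((1 - w) / ((r : ℝ) - 1)) * HB m := by
        intro j hj
        obtain ⟨hj1, hjr⟩ := Finset.mem_Ico.mp hj
        rw [Finset.sum_congr rfl (fun k _ => by rw [Psum_off hr hj1 hjr k])]
        exact sum_mul_logb hc m
      rw [Finset.sum_congr rfl inner, Finset.sum_const, Nat.card_Ico, nsmul_eq_mul]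
      have hcast : ((r - 1 : ℕ) : ℝ) = (r : ℝ) - 1 := by
        push_cast [Nat.cast_sub (by omega : 1 ≤ r)]
        ring
      rw [hcast, Real.logb_div (by linarith : (1 : ℝ) - w ≠ 0) (ne_of_gt hrR)]
      field_simp
    rw [S1, S2]
    unfold binEnt
    ring

end MaxEntAux

/-- For `r ≥ 2`, `n ≥ 1`, there exist independent random variables
`X_1, …, X_n` with values in `{0, 1, …, r}` whose sum `S_n` has entropy exactly
`w₀ H(B_n) + (1-w₀)(H(B_{n-1}) + log₂(r-1)) + h(w₀)`, where
`w₀ = 2^{H(B_n)-H(B_{n-1})} / (r - 1 + 2^{H(B_n)-H(B_{n-1})})`.  Consequently the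
maximum of `H(S_n)` over all choices of the distributions is at least this value. -/
theorem maxEnt_lower_bound (r n : ℕ) (hr : 2 ≤ r) (hn : 1 ≤ n)
    (w₀ : ℝ)
    (hw₀ : w₀ = (2 : ℝ) ^ (HB n - HB (n - 1)) /
        ((r : ℝ) - 1 + (2 : ℝ) ^ (HB n - HB (n - 1)))) :
    ∃ (Ω : Type) (_ : MeasurableSpace Ω) (μ : Measure Ω) (_ : IsProbabilityMeasure μ)
      (X : Fin n → Ω → ℕ),
      (∀ i, Measurable (X i)) ∧
      iIndepFun X μ ∧
      (∀ i ω, X i ω ≤ r) ∧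
      entS μ (fun ω => ∑ i, X i ω) (n * r) =
        w₀ * HB n + (1 - w₀) * (HB (n - 1) + Real.logb 2 ((r : ℝ) - 1)) + binEnt w₀ := by
  obtain ⟨m, rfl⟩ : ∃ m, n = m + 1 := ⟨n - 1, by omega⟩
  have hsub : (m + 1) - 1 = m := rfl
  rw [hsub] at hw₀ ⊢
  have hx : (0 : ℝ) < (2 : ℝ) ^ (HB (m + 1) - HB m) := Real.rpow_pos_of_pos two_pos _
  have hrR : (0 : ℝ) < (r : ℝ) - 1 := by
    have : (2 : ℝ) ≤ (r : ℝ) := by exact_mod_cast hr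
    linarith
  have hw0 : 0 < w₀ := by
    rw [hw₀]
    exact div_pos hx (by linarith)
  have hw1 : w₀ < 1 := by
    rw [hw₀, div_lt_one (by linarith)]
    linarith
  exact MaxEntAux.aux r m hr w₀ hw0 hw1
end

section
/- Let r ≥ 2 and let X_1, X_2 be independent random variables taking values in {0, 1, …, r}. Then H(X_1 + X_2) ≤ 1 + w₀/2 + (1 − w₀) log₂(r − 1) + h(w₀), where w₀ = √2 / (r − 1 + √2); moreover, there exists a choice of the distributions of X_1 and X_2 for which equality holds, i.e. max over all distributions of H(X_1 + X_2) equals 1 + w₀/2 + (1 − w₀) log₂(r − 1) + h(w₀). -/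
open MeasureTheory ProbabilityTheory Real

section Aux
open Set

lemma hd_g (x : ℝ) (h1 : (0:ℝ) < 1 + x) (h2 : (0:ℝ) < 1 - x) :
    HasDerivAt (fun y : ℝ => Real.log (1+y) - Real.log (1-y) - 2*y)
      (1/(1+x) + 1/(1-x) - 2) x := by
  have hA : HasDerivAt (fun y : ℝ => (1+y)) 1 x := by
    simpa using (hasDerivAt_id x).const_add 1
  have hB : HasDerivAt (fun y : ℝ => (1-y)) (-1) x := by
    simpa using (hasDerivAt_id x).const_sub 1
  have hL1 : HasDerivAt (fun y : ℝ => Real.log (1+y)) (1/(1+x)) x := by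
    simpa using hA.log (ne_of_gt h1)
  have hL2 : HasDerivAt (fun y : ℝ => Real.log (1-y)) (-1/(1-x)) x := by
    simpa using hB.log (ne_of_gt h2)
  have hid : HasDerivAt (fun y : ℝ => 2*y) 2 x := by
    simpa using (hasDerivAt_id x).const_mul 2
  have := (hL1.sub hL2).sub hid
  refine this.congr_deriv ?_; ring

-- step 1 : log(1+x) - log(1-x) - 2x ≥ 0 on [0,1)
lemma step1 : ∀ x ∈ Ico (0:ℝ) 1, 0 ≤ Real.log (1+x) - Real.log (1-x) - 2*x := by
  have hmono : MonotoneOn (fun y : ℝ => Real.log (1+y) - Real.log (1-y) - 2*y) (Ico (0:ℝ) 1) := by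
    apply monotoneOn_of_deriv_nonneg (convex_Ico 0 1)
    · apply ContinuousOn.sub (ContinuousOn.sub ?_ ?_) (by fun_prop)
      · apply ContinuousOn.log (by fun_prop)
        intro x hx; simp only [mem_Ico] at hx; nlinarith
      · apply ContinuousOn.log (by fun_prop)
        intro x hx; simp only [mem_Ico] at hx; nlinarith
    · intro x hx
      rw [interior_Ico] at hx
      simp only [mem_Ioo] at hx
      exact ((hd_g x (by linarith) (by linarith)).differentiableAt).differentiableWithinAt
    · intro x hx
      rw [interior_Ico] at hx
      simp only [mem_Ioo] at hx
      rw [(hd_g x (by linarith) (by linarith)).deriv]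
      have h1 : (0:ℝ) < 1 + x := by linarith
      have h2 : (0:ℝ) < 1 - x := by linarith
      rw [div_add_div _ _ (ne_of_gt h1) (ne_of_gt h2), sub_nonneg, le_div_iff₀ (by positivity)]
      nlinarith
  intro x hx
  have h0 : (0:ℝ) ∈ Ico (0:ℝ) 1 := by constructor <;> norm_num
  have := hmono h0 hx hx.1
  simpa using this

lemma core_ineq : ∀ x ∈ Icc (0:ℝ) 1, x^2 ≤ (1+x)*Real.log (1+x) + (1-x)*Real.log (1-x) := by
  have hmono : MonotoneOn (fun y : ℝ => (1+y)*Real.log (1+y) + (1-y)*Real.log (1-y) - y^2) (Ico (0:ℝ) 1) := by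
    apply monotoneOn_of_deriv_nonneg (convex_Ico 0 1)
    · apply ContinuousOn.sub (ContinuousOn.add ?_ ?_) (by fun_prop)
      · apply ContinuousOn.mul (by fun_prop)
        apply ContinuousOn.log (by fun_prop)
        intro x hx; simp only [mem_Ico] at hx; nlinarith
      · apply ContinuousOn.mul (by fun_prop)
        apply ContinuousOn.log (by fun_prop)
        intro x hx; simp only [mem_Ico] at hx; nlinarith
    · intro x hx
      rw [interior_Ico] at hx
      simp only [mem_Ioo] at hx
      have h1 : (0:ℝ) < 1 + x := by linarith
      have h2 : (0:ℝ) < 1 - x := by linarith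
      have hA : HasDerivAt (fun y : ℝ => (1+y)) 1 x := by
        simpa using (hasDerivAt_id x).const_add 1
      have hB : HasDerivAt (fun y : ℝ => (1-y)) (-1) x := by
        simpa using (hasDerivAt_id x).const_sub 1
      have hL1 := hA.log (ne_of_gt h1)
      have hL2 := hB.log (ne_of_gt h2)
      exact (((hA.mul hL1).add (hB.mul hL2)).sub (by simpa using hasDerivAt_pow 2 x)).differentiableAt.differentiableWithinAt
    · intro x hx
      rw [interior_Ico] at hx
      simp only [mem_Ioo] at hx
      have h1 : (0:ℝ) < 1 + x := by linarith
      have h2 : (0:ℝ) < 1 - x := by linarith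
      have hd : HasDerivAt (fun y : ℝ => (1+y)*Real.log (1+y) + (1-y)*Real.log (1-y) - y^2)
          (Real.log (1+x) - Real.log (1-x) - 2*x) x := by
        have hA : HasDerivAt (fun y : ℝ => (1+y)) 1 x := by
          simpa using (hasDerivAt_id x).const_add 1
        have hB : HasDerivAt (fun y : ℝ => (1-y)) (-1) x := by
          simpa using (hasDerivAt_id x).const_sub 1
        have hL1 : HasDerivAt (fun y : ℝ => Real.log (1+y)) (1/(1+x)) x := by
          simpa using hA.log (ne_of_gt h1)
        have hL2 : HasDerivAt (fun y : ℝ => Real.log (1-y)) (-1/(1-x)) x := by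
          simpa using hB.log (ne_of_gt h2)
        have := ((hA.mul hL1).add (hB.mul hL2)).sub (by simpa using hasDerivAt_pow 2 x)
        refine this.congr_deriv ?_
        field_simp
        ring
      rw [hd.deriv]
      exact step1 x ⟨le_of_lt hx.1, hx.2⟩
  intro x hx
  rcases eq_or_lt_of_le hx.2 with h1 | h1
  · subst h1
    norm_num [Real.log_zero]
    nlinarith [Real.log_two_gt_d9]
  · have h0 : (0:ℝ) ∈ Ico (0:ℝ) 1 := by constructor <;> norm_num
    have := hmono h0 ⟨hx.1, h1⟩ hx.1
    norm_num [Real.log_one] at this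
    nlinarith [this]

lemma corner_aux (A C w : ℝ) (hC : 0 ≤ C) (hle : C ≤ A) (hw : A + C = w) (hwpos : 0 < w) :
    2*w*Real.log w - 2*A*Real.log A - 2*C*Real.log C ≤
      (3/2)*w*Real.log 2 + 2*(A*C/w)*Real.log 2 := by
  have hlog2 : 0 < Real.log 2 := Real.log_pos (by norm_num)
  have hlog2' : Real.log 2 < 1 := by
    have := Real.log_two_lt_d9; linarith
  rcases eq_or_lt_of_le hC with hC0 | hCpos
  · have hAw : A = w := by linarith [hC0]
    rw [← hC0, hAw]
    simp [Real.log_zero]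
    positivity
  · have hApos : 0 < A := lt_of_lt_of_le hCpos hle
    set x := (A - C)/w with hxdef
    have hxw : x * w = A - C := by rw [hxdef]; field_simp
    have hx0 : 0 ≤ x := div_nonneg (by linarith) (le_of_lt hwpos)
    have hx1 : x ≤ 1 := by rw [hxdef, div_le_one hwpos]; linarith
    have h1x : 1 + x = 2*A/w := by
      rw [eq_div_iff (ne_of_gt hwpos)]; linarith [hxw]
    have h2x : 1 - x = 2*C/w := by
      rw [eq_div_iff (ne_of_gt hwpos)]; linarith [hxw]
    have hcore := core_ineq x ⟨hx0, hx1⟩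
    rw [h1x, h2x] at hcore
    have hlA : Real.log (2*A/w) = Real.log 2 + Real.log A - Real.log w := by
      rw [Real.log_div (by positivity) (ne_of_gt hwpos), Real.log_mul (by norm_num) (ne_of_gt hApos)]
    have hlC : Real.log (2*C/w) = Real.log 2 + Real.log C - Real.log w := by
      rw [Real.log_div (by positivity) (ne_of_gt hwpos), Real.log_mul (by norm_num) (ne_of_gt hCpos)]
    rw [hlA, hlC] at hcore
    have hxsq : x^2 * w = w - 4*(A*C/w) := by
      rw [hxdef]; field_simp; linear_combination (A+C+w) * hw
    have hcw : x^2 * w ≤ 2*A*(Real.log 2 + Real.log A - Real.log w)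
        + 2*C*(Real.log 2 + Real.log C - Real.log w) := by
      have h := mul_le_mul_of_nonneg_right hcore (le_of_lt hwpos)
      calc x^2 * w ≤ ((2*A/w)*(Real.log 2 + Real.log A - Real.log w)
          + (2*C/w)*(Real.log 2 + Real.log C - Real.log w)) * w := h
        _ = _ := by field_simp
    have key : 0 ≤ (x^2*w) * (2 - Real.log 2) :=
      mul_nonneg (mul_nonneg (sq_nonneg x) hwpos.le) (by linarith)
    have hac : A*C/w = (w - x^2*w)/4 := by linarith [hxsq]
    rw [hac]
    have hwl : A*Real.log 2 + C*Real.log 2 = w*Real.log 2 := by rw [← add_mul, hw]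
    have hwlw : A*Real.log w + C*Real.log w = w*Real.log w := by rw [← add_mul, hw]
    nlinarith [hcw, key, hwl, hwlw]

lemma corner (A C w : ℝ) (hA : 0 ≤ A) (hC : 0 ≤ C) (hw : A + C = w) (hwpos : 0 < w) :
    2*w*Real.log w - 2*A*Real.log A - 2*C*Real.log C ≤
      (3/2)*w*Real.log 2 + 2*(A*C/w)*Real.log 2 := by
  rcases le_total C A with hle | hle
  · exact corner_aux A C w hC hle hw hwpos
  · have := corner_aux C A w hA hle (by linarith) hwpos
    calc 2*w*Real.log w - 2*A*Real.log A - 2*C*Real.log C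
        = 2*w*Real.log w - 2*C*Real.log C - 2*A*Real.log A := by ring
      _ ≤ (3/2)*w*Real.log 2 + 2*(C*A/w)*Real.log 2 := this
      _ = (3/2)*w*Real.log 2 + 2*(A*C/w)*Real.log 2 := by ring

lemma gibbs_term (s q : ℝ) (hs : 0 ≤ s) (hq : 0 ≤ q) (h0 : q = 0 → s = 0) :
    -(s*Real.log s) ≤ -(s*Real.log q) + (q - s) := by
  rcases eq_or_lt_of_le hs with h | hspos
  · simp [← h, hq]
  · have hqpos : 0 < q := by
      rcases eq_or_lt_of_le hq with h' | h'
      · exact absurd (h0 h'.symm) (by linarith)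
      · exact h'
    have := Real.log_le_sub_one_of_pos (show 0 < q/s by positivity)
    rw [Real.log_div (ne_of_gt hqpos) (ne_of_gt hspos)] at this
    have h2 := mul_le_mul_of_nonneg_left this (le_of_lt hspos)
    rw [mul_sub] at h2
    have h3 : s * (q/s) = q := by field_simp
    nlinarith [h2, h3]


set_option maxHeartbeats 1000000 in
lemma partB (r : ℕ) (hr : 2 ≤ r)
    (w₀ : ℝ) (hw₀ : w₀ = Real.sqrt 2 / ((r : ℝ) - 1 + Real.sqrt 2))
    (s : ℕ → ℝ) (hs0 : ∀ j, 0 ≤ s j)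
    (hsum : ∑ j ∈ Finset.range (2*r+1), s j = 1)
    (hcons : 4 * s 0 * s (2*r) ≤ (s r)^2) :
    -∑ j ∈ Finset.range (2*r+1), s j * Real.logb 2 (s j) ≤
      1 + w₀ / 2 + (1 - w₀) * Real.logb 2 ((r : ℝ) - 1) + binEnt w₀ := by
  have hL2 : 0 < Real.log 2 := Real.log_pos (by norm_num)
  have hsq2 : 0 < Real.sqrt 2 := Real.sqrt_pos.mpr (by norm_num)
  have hr1 : (1:ℝ) ≤ (r:ℝ) - 1 := by
    have : (2:ℝ) ≤ (r:ℝ) := by exact_mod_cast hr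
    linarith
  have hr1' : (0:ℝ) < (r:ℝ) - 1 := by linarith
  have hD : (0:ℝ) < (r:ℝ) - 1 + Real.sqrt 2 := by positivity
  have hw₀pos : 0 < w₀ := by rw [hw₀]; positivity
  have hw₀lt1 : w₀ < 1 := by rw [hw₀, div_lt_one hD]; linarith
  have h1w₀ : 0 < 1 - w₀ := by linarith
  have hkey : Real.log (1-w₀) + Real.log 2 / 2 = Real.log w₀ + Real.log ((r:ℝ)-1) := by
    have hprod : (1-w₀) * Real.sqrt 2 = w₀ * ((r:ℝ)-1) := by
      rw [hw₀]; field_simp; ring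
    have h := congrArg Real.log hprod
    rw [Real.log_mul (ne_of_gt h1w₀) (ne_of_gt hsq2),
        Real.log_mul (ne_of_gt hw₀pos) (ne_of_gt hr1'),
        Real.log_sqrt (by norm_num)] at h
    linarith
  -- index bookkeeping
  have h0r : (0:ℕ) ≠ r := by omega
  have h02r : (0:ℕ) ≠ 2*r := by omega
  have hr2r : r ≠ 2*r := by omega
  set K : Finset ℕ := {0, r, 2*r} with hK
  have hKsub : K ⊆ Finset.range (2*r+1) := by
    intro x hx
    simp only [hK, Finset.mem_insert, Finset.mem_singleton] at hx
    rcases hx with h|h|h <;> subst h <;> simp only [Finset.mem_range] <;> omega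
  have hKsum : ∀ f : ℕ → ℝ, ∑ j ∈ K, f j = f 0 + f r + f (2*r) := by
    intro f
    rw [hK, Finset.sum_insert (by simp [h0r, h02r]), Finset.sum_insert (by simp [hr2r]),
      Finset.sum_singleton]
    ring
  have hsplit : ∀ f : ℕ → ℝ, ∑ j ∈ Finset.range (2*r+1), f j
      = ∑ j ∈ Finset.range (2*r+1) \ K, f j + (f 0 + f r + f (2*r)) := by
    intro f
    rw [← Finset.sum_sdiff hKsub, hKsum]
  have hKcard : K.card = 3 := by
    rw [hK, Finset.card_insert_of_notMem (by simp [h0r, h02r]),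
      Finset.card_insert_of_notMem (by simp [hr2r]), Finset.card_singleton]
  have hJcard : (Finset.range (2*r+1) \ K).card = 2*r - 2 := by
    rw [Finset.card_sdiff_of_subset hKsub, Finset.card_range, hKcard]; omega
  have hJcardR : (((Finset.range (2*r+1) \ K).card : ℕ) : ℝ) = 2*(r:ℝ) - 2 := by
    rw [hJcard]
    have h2 : 2 ≤ 2*r := by omega
    push_cast [Nat.cast_sub h2]
    ring
  -- abbreviations
  set a := s 0 with ha
  set v := s r with hv
  set c := s (2*r) with hc
  have hva : 0 ≤ a := hs0 0
  have hvv : 0 ≤ v := hs0 r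
  have hvc : 0 ≤ c := hs0 (2*r)
  clear_value a v c
  set w : ℝ := a + v + c with hwdef
  clear_value w
  have hw0 : 0 ≤ w := by rw [hwdef]; positivity
  set tS : ℝ := ∑ j ∈ Finset.range (2*r+1) \ K, s j with htSdef
  clear_value tS
  have htSnn : 0 ≤ tS := by rw [htSdef]; exact Finset.sum_nonneg (fun j _ => hs0 j)
  have htS : tS = 1 - w := by
    have := hsplit s
    rw [hsum] at this
    rw [htSdef, hwdef, ha, hv, hc]
    linarith [this]
  have hw1 : w ≤ 1 := by linarith
  -- interior Gibbs bound
  set u : ℝ := (1-w₀)/(2*((r:ℝ)-1)) with hu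
  clear_value u
  have hupos : 0 < u := by rw [hu]; positivity
  have hlogu : Real.log u = Real.log (1-w₀) - (Real.log 2 + Real.log ((r:ℝ)-1)) := by
    rw [hu, Real.log_div (ne_of_gt h1w₀) (by positivity),
      Real.log_mul (by norm_num) (ne_of_gt hr1')]
  have hinterior : -∑ j ∈ Finset.range (2*r+1) \ K, s j * Real.log (s j) ≤
      -(tS * Real.log u) + ((2*(r:ℝ)-2) * u - tS) := by
    have h1 : ∀ j ∈ Finset.range (2*r+1) \ K, -(s j * Real.log (s j)) ≤
        -(s j * Real.log u) + (u - s j) := by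
      intro j _
      exact gibbs_term (s j) u (hs0 j) hupos.le (fun h => absurd h (ne_of_gt hupos))
    have h2 := Finset.sum_le_sum h1
    have e1 : ∑ j ∈ Finset.range (2*r+1) \ K, -(s j * Real.log (s j))
        = -∑ j ∈ Finset.range (2*r+1) \ K, s j * Real.log (s j) :=
      Finset.sum_neg_distrib _
    have e2 : ∑ j ∈ Finset.range (2*r+1) \ K, (-(s j * Real.log u) + (u - s j))
        = -(tS * Real.log u) + ((2*(r:ℝ)-2) * u - tS) := by
      rw [Finset.sum_add_distrib, Finset.sum_sub_distrib, Finset.sum_const, nsmul_eq_mul,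
        Finset.sum_neg_distrib, ← Finset.sum_mul, hJcardR, ← htSdef]
    rw [e1, e2] at h2
    exact h2
  -- corner Gibbs bound
  have hcornerB : -(a * Real.log a + v * Real.log v + c * Real.log c) ≤
      -(w * Real.log w₀) + (3/2)*w*Real.log 2 + (w₀ - w) := by
    rcases eq_or_lt_of_le hw0 with hwz | hwpos
    · have haz : a = 0 := by rw [hwdef] at hwz; linarith
      have hvz : v = 0 := by rw [hwdef] at hwz; linarith
      have hcz : c = 0 := by rw [hwdef] at hwz; linarith
      rw [haz, hvz, hcz, ← hwz]
      simp
      linarith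
    · set A' : ℝ := a + v/2 with hA'def
      set C' : ℝ := c + v/2 with hC'def
      clear_value A' C'
      have hA'0 : 0 ≤ A' := by rw [hA'def]; linarith
      have hC'0 : 0 ≤ C' := by rw [hC'def]; linarith
      have hACw : A' + C' = w := by rw [hA'def, hC'def, hwdef]; ring
      have hwne : w ≠ 0 := ne_of_gt hwpos
      set Q0 : ℝ := w₀*A'^2/w^2 with hQ0
      set Qr : ℝ := 2*w₀*A'*C'/w^2 with hQr
      set Q2r : ℝ := w₀*C'^2/w^2 with hQ2r
      clear_value Q0 Qr Q2r
      have hQ00 : 0 ≤ Q0 := by rw [hQ0]; positivity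
      have hQr0 : 0 ≤ Qr := by rw [hQr]; positivity
      have hQ2r0 : 0 ≤ Q2r := by rw [hQ2r]; positivity
      have g0 : -(a * Real.log a) ≤ -(a * Real.log Q0) + (Q0 - a) := by
        apply gibbs_term a Q0 hva hQ00
        intro h
        rw [hQ0] at h
        rcases div_eq_zero_iff.mp h with h' | h'
        · rcases mul_eq_zero.mp h' with h'' | h''
          · exact absurd h'' (ne_of_gt hw₀pos)
          · have : A' = 0 := by
              have := pow_eq_zero_iff (n := 2) (by norm_num) |>.mp h''
              exact this
            rw [hA'def] at this; linarith
        · exact absurd (pow_eq_zero_iff (n := 2) (by norm_num) |>.mp h') hwne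
      have gr : -(v * Real.log v) ≤ -(v * Real.log Qr) + (Qr - v) := by
        apply gibbs_term v Qr hvv hQr0
        intro h
        rw [hQr] at h
        rcases div_eq_zero_iff.mp h with h' | h'
        · rcases mul_eq_zero.mp h' with h'' | h''
          · rcases mul_eq_zero.mp h'' with h3 | h3
            · norm_num at h3; exact absurd h3 (ne_of_gt hw₀pos)
            · rw [hA'def] at h3; linarith
          · rw [hC'def] at h'; linarith
        · exact absurd (pow_eq_zero_iff (n := 2) (by norm_num) |>.mp h') hwne
      have g2r : -(c * Real.log c) ≤ -(c * Real.log Q2r) + (Q2r - c) := by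
        apply gibbs_term c Q2r hvc hQ2r0
        intro h
        rw [hQ2r] at h
        rcases div_eq_zero_iff.mp h with h' | h'
        · rcases mul_eq_zero.mp h' with h'' | h''
          · exact absurd h'' (ne_of_gt hw₀pos)
          · have : C' = 0 := by
              have := pow_eq_zero_iff (n := 2) (by norm_num) |>.mp h''
              exact this
            rw [hC'def] at this; linarith
        · exact absurd (pow_eq_zero_iff (n := 2) (by norm_num) |>.mp h') hwne
      -- log expansions
      have E0 : a * Real.log Q0 = a * (Real.log w₀ + 2*Real.log A' - 2*Real.log w) := by
        by_cases haz : a = 0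
        · rw [haz]; ring
        · have hapos : 0 < a := lt_of_le_of_ne hva (Ne.symm haz)
          have hA'pos : 0 < A' := by rw [hA'def]; linarith
          rw [hQ0, Real.log_div (by positivity) (by positivity),
            Real.log_mul (ne_of_gt hw₀pos) (by positivity),
            Real.log_pow, Real.log_pow]
          push_cast
          ring
      have Er : v * Real.log Qr = v * (Real.log 2 + Real.log w₀ + Real.log A' + Real.log C' - 2*Real.log w) := by
        by_cases hvz : v = 0
        · rw [hvz]; ring
        · have hvpos : 0 < v := lt_of_le_of_ne hvv (Ne.symm hvz)
          have hA'pos : 0 < A' := by rw [hA'def]; linarith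
          have hC'pos : 0 < C' := by rw [hC'def]; linarith
          rw [hQr, Real.log_div (by positivity) (by positivity),
            Real.log_mul (by positivity) (ne_of_gt hC'pos),
            Real.log_mul (by positivity) (ne_of_gt hA'pos),
            Real.log_mul (by norm_num) (ne_of_gt hw₀pos),
            Real.log_pow]
          push_cast
          ring
      have E2r : c * Real.log Q2r = c * (Real.log w₀ + 2*Real.log C' - 2*Real.log w) := by
        by_cases hcz : c = 0
        · rw [hcz]; ring
        · have hcpos : 0 < c := lt_of_le_of_ne hvc (Ne.symm hcz)
          have hC'pos : 0 < C' := by rw [hC'def]; linarith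
          rw [hQ2r, Real.log_div (by positivity) (by positivity),
            Real.log_mul (ne_of_gt hw₀pos) (by positivity),
            Real.log_pow, Real.log_pow]
          push_cast
          ring
      -- corner lemma application
      have hco := corner A' C' w hA'0 hC'0 hACw hwpos
      -- constraint
      have hAC : 2*A'*C' ≤ v*w := by
        rw [hA'def, hC'def, hwdef]
        linarith [hcons]
      have hACL : 2*(A'*C'/w)*Real.log 2 ≤ v * Real.log 2 := by
        apply mul_le_mul_of_nonneg_right _ hL2.le
        have hd : A'*C'/w ≤ v/2 := by
          rw [div_le_div_iff₀ hwpos (by norm_num : (0:ℝ) < 2)]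
          linarith [hAC]
        linarith [hd]
      -- sum of Q's
      have hQsum : Q0 + Qr + Q2r = w₀ := by
        have e : Q0 + Qr + Q2r = w₀*(A'+C')^2/w^2 := by rw [hQ0, hQr, hQ2r]; ring
        rw [e, hACw, mul_div_assoc, div_self (pow_ne_zero 2 hwne), mul_one]
      -- combine
      have hcomb : -(a * Real.log Q0 + v * Real.log Qr + c * Real.log Q2r)
          = -(w * Real.log w₀) - v * Real.log 2 - 2*A'*Real.log A' - 2*C'*Real.log C'
            + 2*w*Real.log w := by
        rw [E0, Er, E2r, hwdef, hA'def, hC'def]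
        ring
      have hsum3 := add_le_add (add_le_add g0 gr) g2r
      linarith [hsum3, hcomb, hco, hACL, hQsum]
  -- put everything together (natural-log version)
  have hIu : (2*(r:ℝ)-2) * u = 1 - w₀ := by
    rw [hu]
    field_simp
  have htotal : -∑ j ∈ Finset.range (2*r+1), s j * Real.log (s j) ≤
      -(w * Real.log w₀) + (3/2)*w*Real.log 2
        + (1-w)*(Real.log 2 + Real.log ((r:ℝ)-1) - Real.log (1-w₀)) := by
    rw [hsplit (fun j => s j * Real.log (s j))]
    have hlu : -(tS * Real.log u) = (1-w)*(Real.log 2 + Real.log ((r:ℝ)-1) - Real.log (1-w₀)) := by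
      rw [htS, hlogu]; ring
    have h2 := hinterior
    rw [hlu, hIu, htS] at h2
    have h3 := hcornerB
    rw [← ha, ← hv, ← hc]
    linarith [h2, h3]
  -- final conversion to logb
  have hconv : ∑ j ∈ Finset.range (2*r+1), s j * Real.logb 2 (s j)
      = (∑ j ∈ Finset.range (2*r+1), s j * Real.log (s j)) / Real.log 2 := by
    rw [Finset.sum_div]
    apply Finset.sum_congr rfl
    intro j _
    rw [Real.logb, mul_div_assoc]
  rw [hconv, ← neg_div, div_le_iff₀ hL2]
  have hRL : (1 + w₀ / 2 + (1 - w₀) * Real.logb 2 ((r:ℝ) - 1) + binEnt w₀) * Real.log 2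
      = (1 + w₀/2)*Real.log 2 + (1-w₀)*Real.log ((r:ℝ)-1)
        - w₀*Real.log w₀ - (1-w₀)*Real.log (1-w₀) := by
    simp only [binEnt, Real.logb]
    field_simp
    ring
  rw [hRL]
  have hfin : -(w * Real.log w₀) + (3/2)*w*Real.log 2
        + (1-w)*(Real.log 2 + Real.log ((r:ℝ)-1) - Real.log (1-w₀))
      = (1 + w₀/2)*Real.log 2 + (1-w₀)*Real.log ((r:ℝ)-1)
        - w₀*Real.log w₀ - (1-w₀)*Real.log (1-w₀) := by
    linear_combination (w - w₀) * hkey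
  linarith [htotal, hfin]

theorem partA (r : ℕ) (hr : 2 ≤ r)
    (w₀ : ℝ) (hw₀ : w₀ = Real.sqrt 2 / ((r : ℝ) - 1 + Real.sqrt 2))
    (Ω : Type) (mΩ : MeasurableSpace Ω) (μ : Measure Ω) (hμ : IsProbabilityMeasure μ)
    (X₁ X₂ : Ω → ℕ) (hX₁ : Measurable X₁) (hX₂ : Measurable X₂)
    (hInd : IndepFun X₁ X₂ μ) (hb₁ : ∀ ω, X₁ ω ≤ r) (hb₂ : ∀ ω, X₂ ω ≤ r) :
    entS μ (fun ω => X₁ ω + X₂ ω) (2 * r) ≤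
      1 + w₀ / 2 + (1 - w₀) * Real.logb 2 ((r : ℝ) - 1) + binEnt w₀ := by
  have hS : Measurable (fun ω => X₁ ω + X₂ ω) := hX₁.add hX₂
  set s : ℕ → ℝ := fun j => (μ {ω | X₁ ω + X₂ ω = j}).toReal with hs
  have hmeas : ∀ j : ℕ, MeasurableSet {ω | X₁ ω + X₂ ω = j} := by
    intro j
    exact hS (measurableSet_singleton j)
  have hs0 : ∀ j, 0 ≤ s j := fun j => ENNReal.toReal_nonneg
  have hsum : ∑ j ∈ Finset.range (2*r+1), s j = 1 := by
    have hdisj : (↑(Finset.range (2*r+1)) : Set ℕ).PairwiseDisjoint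
        (fun j => {ω | X₁ ω + X₂ ω = j}) := by
      intro i _ j _ hij
      simp only [Function.onFun, Set.disjoint_left]
      intro ω h1 h2
      exact hij (by rw [← h1, ← h2])
    have hunion : ⋃ j ∈ Finset.range (2*r+1), {ω | X₁ ω + X₂ ω = j} = Set.univ := by
      ext ω
      simp only [Set.mem_iUnion, Set.mem_univ, iff_true, Finset.mem_range]
      exact ⟨X₁ ω + X₂ ω, by have := hb₁ ω; have := hb₂ ω; omega, rfl⟩
    have h1 : ∑ j ∈ Finset.range (2*r+1), μ {ω | X₁ ω + X₂ ω = j} = 1 := by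
      rw [← measure_biUnion_finset hdisj (fun j _ => hmeas j), hunion, measure_univ]
    calc ∑ j ∈ Finset.range (2*r+1), s j
        = (∑ j ∈ Finset.range (2*r+1), μ {ω | X₁ ω + X₂ ω = j}).toReal := by
          rw [ENNReal.toReal_sum (fun j _ => measure_ne_top μ _)]
      _ = 1 := by rw [h1]; rfl
  -- corner identities
  have hE0 : {ω | X₁ ω + X₂ ω = 0} = X₁ ⁻¹' {0} ∩ X₂ ⁻¹' {0} := by
    ext ω
    simp only [Set.mem_setOf_eq, Set.mem_inter_iff, Set.mem_preimage, Set.mem_singleton_iff]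
    omega
  have hE2r : {ω | X₁ ω + X₂ ω = 2*r} = X₁ ⁻¹' {r} ∩ X₂ ⁻¹' {r} := by
    ext ω
    simp only [Set.mem_setOf_eq, Set.mem_inter_iff, Set.mem_preimage, Set.mem_singleton_iff]
    have := hb₁ ω; have := hb₂ ω; omega
  have hμ0 := hInd.measure_inter_preimage_eq_mul {0} {0}
      (measurableSet_singleton 0) (measurableSet_singleton 0)
  have hμ2r := hInd.measure_inter_preimage_eq_mul {r} {r}
      (measurableSet_singleton r) (measurableSet_singleton r)
  have hμ0r := hInd.measure_inter_preimage_eq_mul {0} {r}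
      (measurableSet_singleton 0) (measurableSet_singleton r)
  have hμr0 := hInd.measure_inter_preimage_eq_mul {r} {0}
      (measurableSet_singleton r) (measurableSet_singleton 0)
  set p0 : ℝ := (μ (X₁ ⁻¹' {0})).toReal with hp0
  set pr : ℝ := (μ (X₁ ⁻¹' {r})).toReal with hpr
  set q0 : ℝ := (μ (X₂ ⁻¹' {0})).toReal with hq0
  set qr : ℝ := (μ (X₂ ⁻¹' {r})).toReal with hqr
  have hs0v : s 0 = p0 * q0 := by
    rw [hs]
    show (μ {ω | X₁ ω + X₂ ω = 0}).toReal = _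
    rw [hE0, hμ0, ENNReal.toReal_mul]
  have hs2rv : s (2*r) = pr * qr := by
    rw [hs]
    show (μ {ω | X₁ ω + X₂ ω = 2*r}).toReal = _
    rw [hE2r, hμ2r, ENNReal.toReal_mul]
  have hsrv : p0 * qr + pr * q0 ≤ s r := by
    have hsub1 : X₁ ⁻¹' {0} ∩ X₂ ⁻¹' {r} ⊆ {ω | X₁ ω + X₂ ω = r} := by
      intro ω hω
      simp only [Set.mem_inter_iff, Set.mem_preimage, Set.mem_singleton_iff] at hω
      simp [Set.mem_setOf_eq, hω.1, hω.2]
    have hsub2 : X₁ ⁻¹' {r} ∩ X₂ ⁻¹' {0} ⊆ {ω | X₁ ω + X₂ ω = r} := by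
      intro ω hω
      simp only [Set.mem_inter_iff, Set.mem_preimage, Set.mem_singleton_iff] at hω
      simp [Set.mem_setOf_eq, hω.1, hω.2]
    have hdisj : Disjoint (X₁ ⁻¹' {0} ∩ X₂ ⁻¹' {r}) (X₁ ⁻¹' {r} ∩ X₂ ⁻¹' {0}) := by
      rw [Set.disjoint_left]
      intro ω h1 h2
      simp only [Set.mem_inter_iff, Set.mem_preimage, Set.mem_singleton_iff] at h1 h2
      omega
    have hmeas2 : MeasurableSet (X₁ ⁻¹' {r} ∩ X₂ ⁻¹' {0}) :=
      (hX₁ (measurableSet_singleton r)).inter (hX₂ (measurableSet_singleton 0))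
    have hle : μ (X₁ ⁻¹' {0} ∩ X₂ ⁻¹' {r}) + μ (X₁ ⁻¹' {r} ∩ X₂ ⁻¹' {0})
        ≤ μ {ω | X₁ ω + X₂ ω = r} := by
      rw [← measure_union hdisj hmeas2]
      exact measure_mono (Set.union_subset hsub1 hsub2)
    have := ENNReal.toReal_le_toReal (a := μ (X₁ ⁻¹' {0} ∩ X₂ ⁻¹' {r}) + μ (X₁ ⁻¹' {r} ∩ X₂ ⁻¹' {0}))
      (by finiteness) (measure_ne_top μ _) |>.mpr hle
    rw [ENNReal.toReal_add (measure_ne_top μ _) (measure_ne_top μ _), hμ0r, hμr0,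
      ENNReal.toReal_mul, ENNReal.toReal_mul] at this
    exact this
  have hcons : 4 * s 0 * s (2*r) ≤ (s r)^2 := by
    have h1 : 0 ≤ p0 := ENNReal.toReal_nonneg
    have h2 : 0 ≤ pr := ENNReal.toReal_nonneg
    have h3 : 0 ≤ q0 := ENNReal.toReal_nonneg
    have h4 : 0 ≤ qr := ENNReal.toReal_nonneg
    rw [hs0v, hs2rv]
    calc 4 * (p0*q0) * (pr*qr) ≤ (p0*qr + pr*q0)^2 := by nlinarith [sq_nonneg (p0*qr - pr*q0)]
      _ ≤ (s r)^2 := by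
        apply pow_le_pow_left₀ (by positivity) hsrv
  have := partB r hr w₀ hw₀ s hs0 hsum hcons
  calc entS μ (fun ω => X₁ ω + X₂ ω) (2*r)
      = -∑ j ∈ Finset.range (2*r+1), s j * Real.logb 2 (s j) := by rw [entS]
    _ ≤ _ := this

lemma indep_fst_snd {α β : Type*} [MeasurableSpace α] [MeasurableSpace β]
    (μ₁ : Measure α) (μ₂ : Measure β) [IsProbabilityMeasure μ₁] [IsProbabilityMeasure μ₂] :
    IndepFun Prod.fst Prod.snd (μ₁.prod μ₂) := by
  rw [indepFun_iff_measure_inter_preimage_eq_mul]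
  intro s t hs ht
  have h1 : Prod.fst ⁻¹' s ∩ Prod.snd ⁻¹' t = s ×ˢ t := by
    ext ω; simp [Set.mem_prod]
  have h2 : (Prod.fst : α × β → α) ⁻¹' s = s ×ˢ (Set.univ : Set β) := by
    ext ω; simp [Set.mem_prod]
  have h3 : (Prod.snd : α × β → β) ⁻¹' t = (Set.univ : Set α) ×ˢ t := by
    ext ω; simp [Set.mem_prod]
  rw [h1, h2, h3, Measure.prod_prod, Measure.prod_prod, Measure.prod_prod,
    measure_univ, measure_univ]
  ring


theorem partC (r : ℕ) (hr : 2 ≤ r)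
    (w₀ : ℝ) (hw₀ : w₀ = Real.sqrt 2 / ((r : ℝ) - 1 + Real.sqrt 2)) :
    ∃ (Ω : Type) (_ : MeasurableSpace Ω) (μ : Measure Ω) (_ : IsProbabilityMeasure μ)
      (X₁ X₂ : Ω → ℕ),
      Measurable X₁ ∧ Measurable X₂ ∧ IndepFun X₁ X₂ μ ∧
      (∀ ω, X₁ ω ≤ r) ∧ (∀ ω, X₂ ω ≤ r) ∧
      entS μ (fun ω => X₁ ω + X₂ ω) (2 * r) =
        1 + w₀ / 2 + (1 - w₀) * Real.logb 2 ((r : ℝ) - 1) + binEnt w₀ := by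
  -- basic facts about w₀
  have hL2 : 0 < Real.log 2 := Real.log_pos (by norm_num)
  have hsq2 : 0 < Real.sqrt 2 := Real.sqrt_pos.mpr (by norm_num)
  have hr1 : (1:ℝ) ≤ (r:ℝ) - 1 := by
    have : (2:ℝ) ≤ (r:ℝ) := by exact_mod_cast hr
    linarith
  have hr1' : (0:ℝ) < (r:ℝ) - 1 := by linarith
  have hD : (0:ℝ) < (r:ℝ) - 1 + Real.sqrt 2 := by positivity
  have hw₀pos : 0 < w₀ := by rw [hw₀]; positivity
  have hw₀lt1 : w₀ < 1 := by rw [hw₀, div_lt_one hD]; linarith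
  have h1w₀ : 0 < 1 - w₀ := by linarith
  -- the weight function
  set f : ℕ → ℝ := fun j => if j = 0 ∨ j = r then w₀/2 else (1-w₀)/((r:ℝ)-1) with hf
  have hf0 : ∀ j, 0 ≤ f j := by
    intro j; rw [hf]; dsimp only; split_ifs <;> positivity
  have hfr : f r = w₀/2 := by rw [hf]; simp
  have hf00 : f 0 = w₀/2 := by rw [hf]; simp
  have hfmid : ∀ j, j ≠ 0 → j ≠ r → f j = (1-w₀)/((r:ℝ)-1) := by
    intro j h1 h2; rw [hf]; simp [h1, h2]
  set W : ℕ → ENNReal := fun j => ENNReal.ofReal (f j) with hW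
  have hWne : ∀ j, W j ≠ ⊤ := fun j => ENNReal.ofReal_ne_top
  -- sum of f over range (r+1) is 1
  have hsumf : ∑ j ∈ Finset.range (r+1), f j = 1 := by
    have h0r : (0:ℕ) ≠ r := by omega
    set K : Finset ℕ := {0, r} with hK
    have hKsub : K ⊆ Finset.range (r+1) := by
      intro x hx
      simp only [hK, Finset.mem_insert, Finset.mem_singleton] at hx
      rcases hx with h|h <;> subst h <;> simp only [Finset.mem_range] <;> omega
    have hKcard : K.card = 2 := by
      rw [hK, Finset.card_insert_of_notMem (by simp [h0r]), Finset.card_singleton]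
    rw [← Finset.sum_sdiff hKsub]
    have h1 : ∑ j ∈ K, f j = w₀ := by
      rw [hK, Finset.sum_insert (by simp [h0r]), Finset.sum_singleton, hf00, hfr]
      ring
    have h2 : ∑ j ∈ Finset.range (r+1) \ K, f j
        = (((Finset.range (r+1) \ K).card : ℕ) : ℝ) * ((1-w₀)/((r:ℝ)-1)) := by
      rw [Finset.sum_congr rfl (fun j hj => ?_), Finset.sum_const, nsmul_eq_mul]
      rw [Finset.mem_sdiff, hK] at hj
      simp only [Finset.mem_insert, Finset.mem_singleton] at hj
      exact hfmid j (fun h => hj.2 (Or.inl h)) (fun h => hj.2 (Or.inr h))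
    have hcard : (Finset.range (r+1) \ K).card = r - 1 := by
      rw [Finset.card_sdiff_of_subset hKsub, Finset.card_range, hKcard]
      omega
    have hcastr : (((r-1 : ℕ)):ℝ) = (r:ℝ) - 1 := by
      have : 1 ≤ r := by omega
      push_cast [Nat.cast_sub this]
      ring
    rw [h1, h2, hcard, hcastr]
    field_simp
    ring
  -- the measures
  set μ₁ : Measure (Fin (r+1)) := ∑ i : Fin (r+1), W i.val • Measure.dirac i with hμ₁
  set μ₂ : Measure Bool := (2:ENNReal)⁻¹ • Measure.dirac false
      + (2:ENNReal)⁻¹ • Measure.dirac true with hμ₂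
  have hμ₁univ : μ₁ Set.univ = 1 := by
    rw [hμ₁, Measure.finset_sum_apply]
    simp only [Measure.smul_apply, measure_univ, smul_eq_mul, mul_one]
    rw [Fin.sum_univ_eq_sum_range (fun j => W j) (r+1), hW]
    rw [← ENNReal.ofReal_sum_of_nonneg (fun j _ => hf0 j), hsumf]
    exact ENNReal.ofReal_one
  have hμ₂univ : μ₂ Set.univ = 1 := by
    rw [hμ₂]
    simp only [Measure.coe_add, Measure.smul_apply, Pi.add_apply, measure_univ,
      smul_eq_mul, mul_one]
    exact ENNReal.inv_two_add_inv_two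
  have hP1 : IsProbabilityMeasure μ₁ := ⟨hμ₁univ⟩
  have hP2 : IsProbabilityMeasure μ₂ := ⟨hμ₂univ⟩
  refine ⟨Fin (r+1) × Bool, inferInstance, μ₁.prod μ₂, inferInstance,
    (fun i : Fin (r+1) => (i : ℕ)) ∘ Prod.fst, (fun b : Bool => cond b r 0) ∘ Prod.snd,
    Measurable.of_discrete.comp measurable_fst,
    Measurable.of_discrete.comp measurable_snd,
    (indep_fst_snd μ₁ μ₂).comp Measurable.of_discrete Measurable.of_discrete,
    (fun ω => Fin.is_le ω.1),
    (fun ω => by rcases ω with ⟨i, b⟩; cases b <;> simp),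
    ?_⟩
  -- compute the distribution of the sum
  have hSmeas : ∀ j : ℕ, MeasurableSet {ω : Fin (r+1) × Bool |
      ((fun i : Fin (r+1) => (i : ℕ)) ∘ Prod.fst) ω + ((fun b : Bool => cond b r 0) ∘ Prod.snd) ω = j} := by
    intro j
    exact ((Measurable.of_discrete.comp measurable_fst).add
      (Measurable.of_discrete.comp measurable_snd)) (measurableSet_singleton j)
  have hval : ∀ j : ℕ, (μ₁.prod μ₂) {ω : Fin (r+1) × Bool |
        ((fun i : Fin (r+1) => (i : ℕ)) ∘ Prod.fst) ω + ((fun b : Bool => cond b r 0) ∘ Prod.snd) ω = j}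
      = ∑ m ∈ Finset.range (r+1),
          W m * ((2:ENNReal)⁻¹ * (if m = j then 1 else 0) + 2⁻¹ * (if m + r = j then 1 else 0)) := by
    intro j
    rw [Measure.prod_apply (hSmeas j), hμ₁, lintegral_finset_sum_measure]
    simp only [lintegral_smul_measure, lintegral_dirac]
    have hslice : ∀ i : Fin (r+1), μ₂ (Prod.mk i ⁻¹' {ω : Fin (r+1) × Bool |
          ((fun i : Fin (r+1) => (i : ℕ)) ∘ Prod.fst) ω + ((fun b : Bool => cond b r 0) ∘ Prod.snd) ω = j})
        = (2:ENNReal)⁻¹ * (if (i:ℕ) = j then 1 else 0) + 2⁻¹ * (if (i:ℕ) + r = j then 1 else 0) := by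
      intro i
      classical
      rw [hμ₂]
      simp only [Measure.coe_add, Pi.add_apply, Measure.smul_apply, smul_eq_mul,
        Measure.dirac_apply]
      have m1 : (false ∈ Prod.mk i ⁻¹' {ω : Fin (r+1) × Bool |
          ((fun i : Fin (r+1) => (i : ℕ)) ∘ Prod.fst) ω + ((fun b : Bool => cond b r 0) ∘ Prod.snd) ω = j})
          ↔ ((i:ℕ) = j) := by simp
      have m2 : (true ∈ Prod.mk i ⁻¹' {ω : Fin (r+1) × Bool |
          ((fun i : Fin (r+1) => (i : ℕ)) ∘ Prod.fst) ω + ((fun b : Bool => cond b r 0) ∘ Prod.snd) ω = j})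
          ↔ ((i:ℕ) + r = j) := by simp
      rw [Set.indicator_apply, Set.indicator_apply]
      simp only [m1, m2, Pi.one_apply, mul_ite, mul_one, mul_zero]
    rw [Finset.sum_congr rfl (fun i _ => by rw [hslice i])]
    exact Fin.sum_univ_eq_sum_range
      (fun m => W m * ((2:ENNReal)⁻¹ * (if m = j then 1 else 0) + 2⁻¹ * (if m + r = j then 1 else 0))) (r+1)
  have hT : ∀ j : ℕ, (∑ m ∈ Finset.range (r+1),
        W m * ((2:ENNReal)⁻¹ * (if m = j then 1 else 0) + 2⁻¹ * (if m + r = j then 1 else 0)))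
      = (if j ≤ r then W j * 2⁻¹ else 0) + (if r ≤ j ∧ j ≤ 2*r then W (j-r) * 2⁻¹ else 0) := by
    intro j
    have e : ∀ m, W m * ((2:ENNReal)⁻¹ * (if m = j then 1 else 0) + 2⁻¹ * (if m + r = j then 1 else 0))
        = (if m = j then W m * 2⁻¹ else 0) + (if m = j - r ∧ r ≤ j then W m * 2⁻¹ else 0) := by
      intro m
      simp only [show (m + r = j) ↔ (m = j - r ∧ r ≤ j) from by omega]
      split_ifs <;> simp [mul_add, mul_comm] <;> ring
    rw [Finset.sum_congr rfl (fun m _ => e m), Finset.sum_add_distrib]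
    congr 1
    · rw [Finset.sum_ite_eq' (Finset.range (r+1)) j (fun m => W m * 2⁻¹)]
      simp only [show (j ∈ Finset.range (r+1)) ↔ (j ≤ r) from by
        simp only [Finset.mem_range]; omega]
    · by_cases hrj : r ≤ j
      · have hcg : ∑ m ∈ Finset.range (r+1), (if m = j - r ∧ r ≤ j then W m * 2⁻¹ else 0)
            = ∑ m ∈ Finset.range (r+1), (if m = j - r then W m * 2⁻¹ else 0) := by
          apply Finset.sum_congr rfl
          intro m _
          simp only [show (m = j - r ∧ r ≤ j) ↔ (m = j - r) from by tauto]
        rw [hcg, Finset.sum_ite_eq' (Finset.range (r+1)) (j-r) (fun m => W m * 2⁻¹)]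
        simp only [show ((j-r) ∈ Finset.range (r+1)) ↔ (r ≤ j ∧ j ≤ 2*r) from by
          simp only [Finset.mem_range]; omega]
      · rw [Finset.sum_eq_zero (fun m _ => by rw [if_neg (by tauto)]), if_neg (by tauto)]
  have hWval : ∀ j, (W j * (2:ENNReal)⁻¹).toReal = f j / 2 := by
    intro j
    rw [ENNReal.toReal_mul, hW]
    simp [ENNReal.toReal_ofReal (hf0 j), ENNReal.toReal_inv]
    ring
  set sv : ℕ → ℝ := fun j => ((μ₁.prod μ₂) {ω : Fin (r+1) × Bool |
      ((fun i : Fin (r+1) => (i : ℕ)) ∘ Prod.fst) ω + ((fun b : Bool => cond b r 0) ∘ Prod.snd) ω = j}).toReal with hsv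
  have hsvval : ∀ j : ℕ, sv j = (if j ≤ r then f j / 2 else 0) + (if r ≤ j ∧ j ≤ 2*r then f (j-r) / 2 else 0) := by
    intro j
    rw [hsv]
    show ((μ₁.prod μ₂) _).toReal = _
    rw [hval j, hT j]
    have hne1 : (if j ≤ r then W j * 2⁻¹ else 0) ≠ ⊤ := by
      split_ifs
      · exact ENNReal.mul_ne_top (hWne j) (by norm_num)
      · simp
    have hne2 : (if r ≤ j ∧ j ≤ 2*r then W (j-r) * 2⁻¹ else 0) ≠ ⊤ := by
      split_ifs
      · exact ENNReal.mul_ne_top (hWne (j-r)) (by norm_num)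
      · simp
    rw [ENNReal.toReal_add hne1 hne2]
    congr 1
    · split_ifs
      · exact hWval j
      · simp
    · split_ifs
      · exact hWval (j-r)
      · simp
  -- values of sv
  set uu : ℝ := (1-w₀)/(2*((r:ℝ)-1)) with huu
  have huupos : 0 < uu := by rw [huu]; positivity
  have hsv0 : sv 0 = w₀/4 := by
    rw [hsvval 0, if_pos (by omega), if_neg (by omega), hf00]
    ring
  have hsvr : sv r = w₀/2 := by
    rw [hsvval r, if_pos (le_refl r), if_pos (by omega), Nat.sub_self, hfr, hf00]
    ring
  have hsv2r : sv (2*r) = w₀/4 := by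
    rw [hsvval (2*r), if_neg (by omega), if_pos (by omega), show 2*r - r = r by omega, hfr]
    ring
  -- index bookkeeping for the entropy sum
  have h0r : (0:ℕ) ≠ r := by omega
  have h02r : (0:ℕ) ≠ 2*r := by omega
  have hr2r : r ≠ 2*r := by omega
  set K2 : Finset ℕ := {0, r, 2*r} with hK2
  have hK2sub : K2 ⊆ Finset.range (2*r+1) := by
    intro x hx
    simp only [hK2, Finset.mem_insert, Finset.mem_singleton] at hx
    rcases hx with h|h|h <;> subst h <;> simp only [Finset.mem_range] <;> omega
  have hK2card : K2.card = 3 := by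
    rw [hK2, Finset.card_insert_of_notMem (by simp [h0r, h02r]),
      Finset.card_insert_of_notMem (by simp [hr2r]), Finset.card_singleton]
  have hsplit2 : ∀ g : ℕ → ℝ, ∑ j ∈ Finset.range (2*r+1), g j
      = ∑ j ∈ Finset.range (2*r+1) \ K2, g j + (g 0 + g r + g (2*r)) := by
    intro g
    rw [← Finset.sum_sdiff hK2sub]
    congr 1
    rw [hK2, Finset.sum_insert (by simp [h0r, h02r]), Finset.sum_insert (by simp [hr2r]),
      Finset.sum_singleton]
    ring
  have hJ2card : ((Finset.range (2*r+1) \ K2).card : ℝ) = 2*(r:ℝ) - 2 := by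
    rw [Finset.card_sdiff_of_subset hK2sub, Finset.card_range, hK2card]
    have h2 : 2 ≤ 2*r := by omega
    rw [show 2*r+1-3 = 2*r-2 by omega]
    push_cast [Nat.cast_sub h2]
    ring
  have hr1ne : (r:ℝ) - 1 ≠ 0 := ne_of_gt hr1'
  have hsvJ : ∀ j ∈ Finset.range (2*r+1) \ K2, sv j = uu := by
    intro j hj
    rw [Finset.mem_sdiff, Finset.mem_range, hK2] at hj
    simp only [Finset.mem_insert, Finset.mem_singleton] at hj
    have hj1 : j ≤ 2*r := by omega
    have hj2 : j ≠ 0 := fun h => hj.2 (Or.inl h)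
    have hj3 : j ≠ r := fun h => hj.2 (Or.inr (Or.inl h))
    have hj4 : j ≠ 2*r := fun h => hj.2 (Or.inr (Or.inr h))
    rcases lt_or_ge j r with hlt | hge
    · rw [hsvval j, if_pos (by omega), if_neg (by omega), hfmid j hj2 hj3, huu]
      rw [add_zero, div_div, mul_comm]
    · have hgt : r < j := by omega
      rw [hsvval j, if_neg (by omega), if_pos (by omega),
        hfmid (j-r) (by omega) (by omega), huu]
      rw [zero_add, div_div, mul_comm]
  -- assemble the entropy
  have hJsum : ∑ j ∈ Finset.range (2*r+1) \ K2, sv j * Real.logb 2 (sv j)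
      = (2*(r:ℝ)-2) * (uu * Real.logb 2 uu) := by
    rw [Finset.sum_congr rfl (fun j hj => by rw [hsvJ j hj]), Finset.sum_const,
      nsmul_eq_mul, hJ2card]
  have hent : entS (μ₁.prod μ₂)
      (fun ω => ((fun i : Fin (r+1) => (i : ℕ)) ∘ Prod.fst) ω + ((fun b : Bool => cond b r 0) ∘ Prod.snd) ω)
      (2*r)
      = -((2*(r:ℝ)-2) * (uu * Real.logb 2 uu)
          + (sv 0 * Real.logb 2 (sv 0) + sv r * Real.logb 2 (sv r)
            + sv (2*r) * Real.logb 2 (sv (2*r)))) := by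
    rw [entS]
    rw [hsplit2 (fun j => sv j * Real.logb 2 (sv j))]
    rw [hJsum]
  rw [hent, hsv0, hsvr, hsv2r]
  -- final algebraic identity
  have hw₀ne : w₀ ≠ 0 := ne_of_gt hw₀pos
  have h1w₀ne : (1:ℝ) - w₀ ≠ 0 := ne_of_gt h1w₀
  have hL2ne : Real.log 2 ≠ 0 := ne_of_gt hL2
  have hlog4 : Real.log (w₀/4) = Real.log w₀ - 2*Real.log 2 := by
    rw [Real.log_div hw₀ne (by norm_num), show (4:ℝ) = 2^2 by norm_num, Real.log_pow]
    push_cast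
    ring
  have hlog2w : Real.log (w₀/2) = Real.log w₀ - Real.log 2 := by
    rw [Real.log_div hw₀ne (by norm_num)]
  have hloguu : Real.log uu = Real.log (1-w₀) - (Real.log 2 + Real.log ((r:ℝ)-1)) := by
    rw [huu, Real.log_div h1w₀ne (by positivity), Real.log_mul (by norm_num) hr1ne]
  simp only [binEnt, Real.logb, hlog4, hlog2w, hloguu]
  simp only [huu]
  field_simp
  ring

end Aux

/-- For `r ≥ 2` and independent random variables `X₁, X₂` with values
in `{0, 1, …, r}`, the entropy of `S₂ = X₁ + X₂` satisfies
`H(S₂) ≤ 1 + w₀/2 + (1-w₀) log₂(r-1) + h(w₀)` where `w₀ = √2/(r-1+√2)`, and the bound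
is attained by some choice of the distributions, i.e. it equals `max H(S₂)`. -/

theorem maxEnt_sum_two (r : ℕ) (hr : 2 ≤ r)
    (w₀ : ℝ) (hw₀ : w₀ = Real.sqrt 2 / ((r : ℝ) - 1 + Real.sqrt 2)) :
    (∀ (Ω : Type) (_ : MeasurableSpace Ω) (μ : Measure Ω), IsProbabilityMeasure μ →
      ∀ X₁ X₂ : Ω → ℕ, Measurable X₁ → Measurable X₂ → IndepFun X₁ X₂ μ →
        (∀ ω, X₁ ω ≤ r) → (∀ ω, X₂ ω ≤ r) →
        entS μ (fun ω => X₁ ω + X₂ ω) (2 * r) ≤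
          1 + w₀ / 2 + (1 - w₀) * Real.logb 2 ((r : ℝ) - 1) + binEnt w₀) ∧
    (∃ (Ω : Type) (_ : MeasurableSpace Ω) (μ : Measure Ω) (_ : IsProbabilityMeasure μ)
      (X₁ X₂ : Ω → ℕ),
      Measurable X₁ ∧ Measurable X₂ ∧ IndepFun X₁ X₂ μ ∧
      (∀ ω, X₁ ω ≤ r) ∧ (∀ ω, X₂ ω ≤ r) ∧
      entS μ (fun ω => X₁ ω + X₂ ω) (2 * r) =
        1 + w₀ / 2 + (1 - w₀) * Real.logb 2 ((r : ℝ) - 1) + binEnt w₀) := by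
  constructor
  · intro Ω mΩ μ hμ X₁ X₂ h1 h2 h3 h4 h5
    exact partA r hr w₀ hw₀ Ω mΩ μ hμ X₁ X₂ h1 h2 h3 h4 h5
  · exact partC r hr w₀ hw₀
end

section
/- Let r ≥ 2, n ≥ 1, and 0 < w₀ < 1. Let X_1, …, X_n be independent random variables with P(X_i = 0) = P(X_i = r) = 1/2 for i = 1, …, n − 1, and P(X_n = 0) = P(X_n = r) = w₀/2, P(X_n = j) = (1 − w₀)/(r − 1) for j = 1, …, r − 1. Then the entropy of S_n = X_1 + ⋯ + X_n equals w₀·H(B_n) + (1 − w₀)·(H(B_{n−1}) + log₂(r − 1)) + h(w₀). -/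
open MeasureTheory ProbabilityTheory Real

section Helpers

lemma meas_add_eq_sum {Ω : Type*} [MeasurableSpace Ω] (μ : Measure Ω)
    {Y T : Ω → ℕ} (hY : Measurable Y) (hT : Measurable T) (r : ℕ) (hYr : ∀ ω, Y ω ≤ r)
    (hind : IndepFun T Y μ) (m : ℕ) :
    μ {ω | Y ω + T ω = m} =
      ∑ j ∈ Finset.range (r+1),
        if j ≤ m then μ (Y ⁻¹' {j}) * μ (T ⁻¹' {m - j}) else 0 := by
  have hdecomp : {ω | Y ω + T ω = m}
      = ⋃ j ∈ Finset.range (r+1), (Y ⁻¹' {j} ∩ {ω | Y ω + T ω = m}) := by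
    ext ω
    simp only [Set.mem_setOf_eq, Set.mem_iUnion, Set.mem_inter_iff, Set.mem_preimage,
      Set.mem_singleton_iff, Finset.mem_range]
    constructor
    · intro h; exact ⟨Y ω, by have := hYr ω; omega, rfl, h⟩
    · rintro ⟨j, _, _, h⟩; exact h
  have hmeasS : MeasurableSet {ω | Y ω + T ω = m} := by
    have : {ω | Y ω + T ω = m} = (fun ω => Y ω + T ω) ⁻¹' {m} := rfl
    rw [this]
    exact (hY.add hT) (measurableSet_singleton m)
  rw [hdecomp, measure_biUnion_finset ?_ ?_]
  · refine Finset.sum_congr rfl fun j hj => ?_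
    by_cases hjm : j ≤ m
    · rw [if_pos hjm]
      have hset : Y ⁻¹' {j} ∩ {ω | Y ω + T ω = m} = T ⁻¹' {m - j} ∩ Y ⁻¹' {j} := by
        ext ω
        simp only [Set.mem_inter_iff, Set.mem_preimage, Set.mem_singleton_iff,
          Set.mem_setOf_eq]
        constructor
        · rintro ⟨h1, h2⟩; exact ⟨by omega, h1⟩
        · rintro ⟨h1, h2⟩; exact ⟨h2, by omega⟩
      rw [hset, hind.measure_inter_preimage_eq_mul _ _ (measurableSet_singleton _)
        (measurableSet_singleton _), mul_comm]
    · rw [if_neg hjm]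
      have hset : Y ⁻¹' {j} ∩ {ω | Y ω + T ω = m} = ∅ := by
        ext ω
        simp only [Set.mem_inter_iff, Set.mem_preimage, Set.mem_singleton_iff,
          Set.mem_setOf_eq, Set.mem_empty_iff_false, iff_false, not_and]
        intro h1 h2; omega
      rw [hset, measure_empty]
  · intro i _ j _ hij
    refine Set.disjoint_left.mpr ?_
    rintro ω ⟨h1, _⟩ ⟨h2, _⟩
    exact hij (h1.symm.trans h2)
  · intro j _
    exact (hY (measurableSet_singleton j)).inter hmeasS

lemma sum_meas_eq_one {Ω : Type*} [MeasurableSpace Ω] (μ : Measure Ω) [IsProbabilityMeasure μ]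
    {Y : Ω → ℕ} (hY : Measurable Y) (r : ℕ) (hYr : ∀ ω, Y ω ≤ r) :
    ∑ j ∈ Finset.range (r+1), μ (Y ⁻¹' {j}) = 1 := by
  rw [← measure_biUnion_finset ?_ ?_]
  · have : ⋃ j ∈ Finset.range (r+1), Y ⁻¹' {j} = Set.univ := by
      ext ω
      simp only [Set.mem_iUnion, Set.mem_preimage, Set.mem_singleton_iff, Finset.mem_range,
        Set.mem_univ, iff_true]
      exact ⟨Y ω, by have := hYr ω; omega, rfl⟩
    rw [this, measure_univ]
  · intro i _ j _ hij
    refine Set.disjoint_left.mpr ?_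
    rintro ω h1 h2
    exact hij ((Set.mem_singleton_iff.mp h1).symm.trans (Set.mem_singleton_iff.mp h2))
  · exact fun j _ => hY (measurableSet_singleton j)

lemma meas_middle_zero {Ω : Type*} [MeasurableSpace Ω] (μ : Measure Ω) [IsProbabilityMeasure μ]
    {Y : Ω → ℕ} (hY : Measurable Y) {r : ℕ} (hr : 2 ≤ r) (hYr : ∀ ω, Y ω ≤ r)
    (h0 : μ (Y ⁻¹' {0}) = 2⁻¹) (hrr : μ (Y ⁻¹' {r}) = 2⁻¹)
    {j : ℕ} (hj0 : j ≠ 0) (hjr : j ≠ r) : μ (Y ⁻¹' {j}) = 0 := by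
  by_cases hjle : j ≤ r
  · have hsum := sum_meas_eq_one μ hY r hYr
    have hsub : ({0, r} : Finset ℕ) ⊆ Finset.range (r+1) := by
      intro x hx
      simp only [Finset.mem_insert, Finset.mem_singleton] at hx
      rcases hx with rfl | rfl <;> simp [Finset.mem_range]
    rw [← Finset.sum_sdiff hsub] at hsum
    have h2 : ∑ x ∈ ({0, r} : Finset ℕ), μ (Y ⁻¹' {x}) = 1 := by
      rw [Finset.sum_pair (by omega : (0:ℕ) ≠ r), h0, hrr]
      rw [← two_mul, ENNReal.mul_inv_cancel (by norm_num) (by norm_num)]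
    rw [h2] at hsum
    have hrest : ∑ x ∈ Finset.range (r+1) \ {0, r}, μ (Y ⁻¹' {x}) = 0 := by
      have h' : ∑ x ∈ Finset.range (r+1) \ {0, r}, μ (Y ⁻¹' {x}) + 1 = 0 + 1 := by
        rw [zero_add]; exact hsum
      exact (ENNReal.add_left_inj ENNReal.one_ne_top).mp h'
    have hjmem : j ∈ Finset.range (r+1) \ {0, r} := by
      simp only [Finset.mem_sdiff, Finset.mem_range, Finset.mem_insert, Finset.mem_singleton]
      exact ⟨by omega, by tauto⟩
    exact (Finset.sum_eq_zero_iff.mp hrest) j hjmem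
  · have : Y ⁻¹' {j} = ∅ := by
      ext ω
      simp only [Set.mem_preimage, Set.mem_singleton_iff, Set.mem_empty_iff_false, iff_false]
      intro h; have := hYr ω; omega
    rw [this, measure_empty]

lemma binom_sum {Ω : Type*} [MeasurableSpace Ω] (μ : Measure Ω) [IsProbabilityMeasure μ]
    {n r : ℕ} (hr : 2 ≤ r) (X : Fin n → Ω → ℕ) (hmeas : ∀ i, Measurable (X i))
    (hindep : iIndepFun X μ) (hrange : ∀ i ω, X i ω ≤ r)
    (s : Finset (Fin n))
    (hs : ∀ i ∈ s, μ (X i ⁻¹' {0}) = 2⁻¹ ∧ μ (X i ⁻¹' {r}) = 2⁻¹) :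
    ∀ m, μ ((fun ω => ∑ i ∈ s, X i ω) ⁻¹' {m}) =
      if r ∣ m then ((s.card.choose (m/r) : ENNReal)) * (2:ENNReal)⁻¹ ^ s.card else 0 := by
  classical
  induction s using Finset.induction_on with
  | empty =>
    intro m
    simp only [Finset.sum_empty, Finset.card_empty, pow_zero, mul_one]
    by_cases hm : m = 0
    · subst hm
      have : ((fun _ : Ω => (0:ℕ)) ⁻¹' {0}) = Set.univ := by
        ext ω; simp
      rw [this, measure_univ, if_pos (dvd_zero r)]
      simp
    · have : ((fun _ : Ω => (0:ℕ)) ⁻¹' {m}) = ∅ := by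
        ext ω; simp [Ne.symm hm]
      rw [this, measure_empty]
      by_cases hd : r ∣ m
      · rw [if_pos hd]
        have h1 : 1 ≤ m / r := Nat.one_le_div_iff (by omega) |>.mpr (Nat.le_of_dvd (by omega) hd)
        rw [Nat.choose_eq_zero_of_lt (by omega)]
        simp
      · rw [if_neg hd]
  | @insert a s' ha ih =>
    intro m
    have hsa : ∀ i ∈ s', μ (X i ⁻¹' {0}) = 2⁻¹ ∧ μ (X i ⁻¹' {r}) = 2⁻¹ :=
      fun i hi => hs i (Finset.mem_insert_of_mem hi)
    have ha0 : μ (X a ⁻¹' {0}) = 2⁻¹ := (hs a (Finset.mem_insert_self a s')).1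
    have har : μ (X a ⁻¹' {r}) = 2⁻¹ := (hs a (Finset.mem_insert_self a s')).2
    have ihs := ih hsa
    have hT : Measurable (fun ω => ∑ i ∈ s', X i ω) := Finset.measurable_sum s' (fun i _ => hmeas i)
    have hind : IndepFun (∑ j ∈ s', X j) (X a) μ :=
      hindep.indepFun_finsetSum_of_notMem hmeas ha
    have hind' : IndepFun (fun ω => ∑ j ∈ s', X j ω) (X a) μ := by
      convert hind using 1
      ext ω; simp
    have hset : ((fun ω => ∑ i ∈ insert a s', X i ω) ⁻¹' {m})
        = {ω | X a ω + (∑ i ∈ s', X i ω) = m} := by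
      ext ω
      simp only [Set.mem_preimage, Set.mem_singleton_iff, Set.mem_setOf_eq,
        Finset.sum_insert ha]
    rw [hset, meas_add_eq_sum μ (hmeas a) hT r (hrange a) hind' m]
    have hsub : ({0, r} : Finset ℕ) ⊆ Finset.range (r+1) := by
      intro x hx
      simp only [Finset.mem_insert, Finset.mem_singleton] at hx
      rcases hx with rfl | rfl <;> simp [Finset.mem_range]
    have hzero : ∀ j ∈ Finset.range (r+1), j ∉ ({0, r} : Finset ℕ) →
        (if j ≤ m then μ (X a ⁻¹' {j})
          * μ ((fun ω => ∑ i ∈ s', X i ω) ⁻¹' {m - j}) else 0) = 0 := by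
      intro j _ hj
      simp only [Finset.mem_insert, Finset.mem_singleton] at hj
      push_neg at hj
      rw [meas_middle_zero μ (hmeas a) hr (hrange a) ha0 har hj.1 hj.2, zero_mul]
      simp
    rw [← Finset.sum_subset hsub hzero, Finset.sum_pair (show (0:ℕ) ≠ r by omega)]
    rw [if_pos (Nat.zero_le m), Nat.sub_zero, ha0, har, ihs m,
      Finset.card_insert_of_notMem ha]
    by_cases hd : r ∣ m
    · obtain ⟨k, rfl⟩ := hd
      rw [if_pos (dvd_mul_right r k), Nat.mul_div_cancel_left k (by omega : 0 < r)]
      by_cases hk : k = 0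
      · subst hk
        rw [mul_zero, if_pos (dvd_zero r), if_neg (by omega : ¬ r ≤ 0),
          Nat.choose_zero_right, Nat.choose_zero_right, pow_succ]
        push_cast
        ring
      · obtain ⟨k', rfl⟩ : ∃ k', k = k'+1 := ⟨k-1, by omega⟩
        have hle : r ≤ r * (k' + 1) := by nlinarith
        have hsub' : r * (k' + 1) - r = r * k' := by
          have : r * (k' + 1) = r * k' + r := by ring
          omega
        rw [if_pos hle, hsub', ihs (r * k'), if_pos (dvd_mul_right r k'),
          Nat.mul_div_cancel_left k' (by omega : 0 < r),
          if_pos (dvd_mul_right r (k' + 1)),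
          Nat.choose_succ_succ s'.card k', pow_succ]
        push_cast
        ring
    · rw [if_neg hd, if_neg hd]
      by_cases hle : r ≤ m
      · have hnd : ¬ r ∣ m - r := by
          intro h
          have h2 := Nat.dvd_add h (dvd_refl r)
          rw [Nat.sub_add_cancel hle] at h2
          exact hd h2
        rw [if_pos hle, ihs (m - r), if_neg hnd]
        simp
      · rw [if_neg hle]
        simp

lemma sum_range_partition {M : Type*} [AddCommMonoid M] (f : ℕ → M) (n r : ℕ)
    (hr : 2 ≤ r) (hn : 1 ≤ n) :
    ∑ m ∈ Finset.range (n*r+1), f m =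
      (∑ l ∈ Finset.range (n+1), f (l*r)) +
      ∑ k ∈ Finset.range n, ∑ j ∈ Finset.Ico 1 r, f (k*r+j) := by
  classical
  have hrpos : 0 < r := by omega
  have hA : ∑ l ∈ Finset.range (n+1), f (l*r)
      = ∑ m ∈ (Finset.range (n+1)).image (· * r), f m := by
    rw [Finset.sum_image]
    intro x _ y _ h
    exact Nat.eq_of_mul_eq_mul_right hrpos h
  have hB : (∑ k ∈ Finset.range n, ∑ j ∈ Finset.Ico 1 r, f (k*r+j))
      = ∑ m ∈ ((Finset.range n) ×ˢ (Finset.Ico 1 r)).image (fun p => p.1*r+p.2), f m := by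
    rw [Finset.sum_image, Finset.sum_product]
    rintro ⟨a, b⟩ hab ⟨c, d⟩ hcd h
    simp only [Finset.coe_product, Set.mem_prod, Finset.mem_coe, Finset.mem_product, Finset.mem_range, Finset.mem_Ico] at hab hcd
    simp only at h
    have hb : b < r := hab.2.2
    have hd : d < r := hcd.2.2
    have hbd : b = d := by
      have e1 : b % r = d % r := by rw [← Nat.mul_add_mod' a r b, h, Nat.mul_add_mod']
      rwa [Nat.mod_eq_of_lt hb, Nat.mod_eq_of_lt hd] at e1
    subst hbd
    have hac : a = c := Nat.eq_of_mul_eq_mul_right hrpos (by omega)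
    simp [hac]
  rw [hA, hB, ← Finset.sum_union]
  · congr 1
    ext m
    simp only [Finset.mem_union, Finset.mem_image, Finset.mem_range, Finset.mem_product,
      Finset.mem_Ico, Prod.exists]
    constructor
    · intro hm
      by_cases hd : r ∣ m
      · left
        have hlt : m / r < n + 1 := by
          rw [Nat.div_lt_iff_lt_mul hrpos, add_mul, one_mul]
          omega
        exact ⟨m / r, hlt, Nat.div_mul_cancel hd⟩
      · right
        refine ⟨m / r, m % r, ⟨?_, ?_, Nat.mod_lt m hrpos⟩, ?_⟩
        · rw [Nat.div_lt_iff_lt_mul hrpos]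
          have : m ≠ n * r := fun h => hd (h ▸ dvd_mul_left r n)
          omega
        · rcases Nat.eq_zero_or_pos (m % r) with h0 | h1
          · exact absurd (Nat.dvd_of_mod_eq_zero h0) hd
          · omega
        · rw [mul_comm]
          exact Nat.div_add_mod m r
    · rintro (⟨l, hl, rfl⟩ | ⟨k, j, ⟨hk, hj1, hj2⟩, rfl⟩)
      · have : l * r ≤ n * r := Nat.mul_le_mul_right r (by omega)
        omega
      · have h1 : k * r ≤ (n-1) * r := Nat.mul_le_mul_right r (by omega)
        have h2 : (n-1) * r + r = n * r := by
          have h3 : n - 1 + 1 = n := by omega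
          calc (n-1)*r + r = ((n-1)+1) * r := by ring
          _ = n * r := by rw [h3]
        omega
  · rw [Finset.disjoint_left]
    intro m hm1 hm2
    simp only [Finset.mem_image, Finset.mem_range] at hm1
    obtain ⟨l, hl, rfl⟩ := hm1
    simp only [Finset.mem_image, Finset.mem_product, Finset.mem_range, Finset.mem_Ico,
      Prod.exists] at hm2
    obtain ⟨k, j, ⟨hk, hj1, hj2⟩, h⟩ := hm2
    have h1 : (l*r) % r = 0 := Nat.mul_mod_left l r
    have h2 : (k*r+j) % r = j % r := Nat.mul_add_mod' k r j
    rw [h] at h2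
    rw [Nat.mod_eq_of_lt hj2] at h2
    omega

lemma binom_weight_pos (m k : ℕ) (hk : k ∈ Finset.range (m+1)) :
    0 < (m.choose k : ℝ) * (2 : ℝ) ^ (-(m : ℤ)) := by
  apply mul_pos
  · exact_mod_cast Nat.choose_pos (by simpa [Nat.lt_succ_iff] using hk)
  · positivity

lemma sum_binom_weight (m : ℕ) :
    ∑ k ∈ Finset.range (m+1), (m.choose k : ℝ) * (2 : ℝ) ^ (-(m : ℤ)) = 1 := by
  rw [← Finset.sum_mul]
  have h1 : ∑ k ∈ Finset.range (m+1), (m.choose k : ℝ) = 2 ^ m := by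
    rw [← Nat.cast_sum]
    rw [Nat.sum_range_choose]
    push_cast
    ring
  rw [h1, zpow_neg, zpow_natCast, mul_inv_cancel₀ (by positivity)]

lemma sum_F_scaled (c : ℝ) (hc : 0 < c) (m : ℕ) :
    ∑ k ∈ Finset.range (m+1),
      (c * ((m.choose k : ℝ) * (2:ℝ)^(-(m:ℤ))))
        * Real.logb 2 (c * ((m.choose k : ℝ) * (2:ℝ)^(-(m:ℤ))))
    = c * Real.logb 2 c - c * HB m := by
  have h : ∀ k ∈ Finset.range (m+1),
      (c * ((m.choose k : ℝ) * (2:ℝ)^(-(m:ℤ))))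
        * Real.logb 2 (c * ((m.choose k : ℝ) * (2:ℝ)^(-(m:ℤ))))
      = c * Real.logb 2 c * ((m.choose k : ℝ) * (2:ℝ)^(-(m:ℤ)))
        + c * (((m.choose k : ℝ) * (2:ℝ)^(-(m:ℤ)))
            * Real.logb 2 ((m.choose k : ℝ) * (2:ℝ)^(-(m:ℤ)))) := by
    intro k hk
    have hb := binom_weight_pos m k hk
    rw [Real.logb_mul hc.ne' hb.ne']
    ring
  rw [Finset.sum_congr rfl h, Finset.sum_add_distrib, ← Finset.mul_sum, ← Finset.mul_sum,
    sum_binom_weight, mul_one, HB]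
  ring

/-- Auxiliary distribution function. -/
noncomputable def qfun (r c : ℕ) : ℕ → ℝ :=
  fun k => if r ∣ k then ((c.choose (k/r) : ℝ)) * (2:ℝ)^(-(c:ℤ)) else 0

lemma qfun_zero {r c k : ℕ} (h : ¬ r ∣ k) : qfun r c k = 0 := if_neg h

lemma qfun_dvd {r : ℕ} (c : ℕ) (hr : 0 < r) (t : ℕ) :
    qfun r c (r * t) = (c.choose t : ℝ) * (2:ℝ)^(-(c:ℤ)) := by
  rw [qfun]
  simp only [if_pos (dvd_mul_right r t), Nat.mul_div_cancel_left t hr]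

end Helpers

/-- If `X₁, …, X_{n-1}` are uniform on `{0, r}` and `X_n` puts mass
`w₀/2` on each of `0` and `r` and mass `(1-w₀)/(r-1)` on each `j ∈ {1, …, r-1}`
(`0 < w₀ < 1`), then the entropy of `S_n = X₁ + ⋯ + X_n` equals
`w₀ H(B_n) + (1-w₀)(H(B_{n-1}) + log₂(r-1)) + h(w₀)`. -/
theorem entropy_of_mixture_sum (r n : ℕ) (hr : 2 ≤ r) (hn : 1 ≤ n)
    (w₀ : ℝ) (hw₀0 : 0 < w₀) (hw₀1 : w₀ < 1)
    {Ω : Type*} [MeasurableSpace Ω] (μ : Measure Ω) [IsProbabilityMeasure μ]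
    (X : Fin n → Ω → ℕ) (hmeas : ∀ i, Measurable (X i))
    (hindep : iIndepFun X μ)
    (hrange : ∀ i ω, X i ω ≤ r)
    (hfirst : ∀ i : Fin n, (i : ℕ) < n - 1 →
      (μ {ω | X i ω = 0}).toReal = 1 / 2 ∧ (μ {ω | X i ω = r}).toReal = 1 / 2)
    (hlast : ∀ i : Fin n, (i : ℕ) = n - 1 →
      (μ {ω | X i ω = 0}).toReal = w₀ / 2 ∧ (μ {ω | X i ω = r}).toReal = w₀ / 2 ∧
      (∀ j, 1 ≤ j → j ≤ r - 1 →
        (μ {ω | X i ω = j}).toReal = (1 - w₀) / ((r : ℝ) - 1))) :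
    entS μ (fun ω => ∑ i, X i ω) (n * r) =
      w₀ * HB n + (1 - w₀) * (HB (n - 1) + Real.logb 2 ((r : ℝ) - 1)) + binEnt w₀ := by
  classical
  have hrpos : 0 < r := by omega
  set lst : Fin n := ⟨n-1, by omega⟩ with hlstdef
  set s : Finset (Fin n) := Finset.univ.erase lst with hsdef
  have hlstval : (lst : ℕ) = n - 1 := rfl
  have hcard : s.card = n - 1 := by
    rw [hsdef, Finset.card_erase_of_mem (Finset.mem_univ _), Finset.card_univ,
      Fintype.card_fin]
  -- the first n-1 variables are fair {0,r} coins
  have hfair : ∀ i ∈ s, μ (X i ⁻¹' {0}) = 2⁻¹ ∧ μ (X i ⁻¹' {r}) = 2⁻¹ := by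
    intro i hi
    have hi' : (i : ℕ) < n - 1 := by
      have h1 := Finset.ne_of_mem_erase hi
      have h2 : (i:ℕ) ≠ n - 1 := fun h => h1 (Fin.ext (h.trans hlstval.symm))
      have := i.isLt
      omega
    obtain ⟨h0, hr'⟩ := hfirst i hi'
    constructor
    · exact (ENNReal.toReal_eq_toReal_iff' (measure_ne_top μ _) (by simp)).mp
        (by rw [show μ (X i ⁻¹' {0}) = μ {ω | X i ω = 0} from rfl, h0]; simp)
    · exact (ENNReal.toReal_eq_toReal_iff' (measure_ne_top μ _) (by simp)).mp
        (by rw [show μ (X i ⁻¹' {r}) = μ {ω | X i ω = r} from rfl, hr']; simp)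
  have hq := binom_sum μ hr X hmeas hindep hrange s hfair
  have hqT : ∀ k, (μ ((fun ω => ∑ i ∈ s, X i ω) ⁻¹' {k})).toReal = qfun r (n-1) k := by
    intro k
    rw [hq k, qfun, hcard]
    split_ifs with hd
    · rw [ENNReal.toReal_mul, ENNReal.toReal_pow, ENNReal.toReal_inv, zpow_neg,
        zpow_natCast, ← inv_pow]
      norm_num
    · simp
  -- measurability and independence for the split S = X lst + T
  have hTmeas : Measurable (fun ω => ∑ i ∈ s, X i ω) :=
    Finset.measurable_sum s (fun i _ => hmeas i)
  have hind : IndepFun (∑ j ∈ s, X j) (X lst) μ :=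
    hindep.indepFun_finsetSum_of_notMem hmeas (Finset.notMem_erase lst Finset.univ)
  have hind' : IndepFun (fun ω => ∑ j ∈ s, X j ω) (X lst) μ := by
    convert hind using 1
    ext ω; simp
  have hsum_eq : ∀ ω, X lst ω + ∑ i ∈ s, X i ω = ∑ i, X i ω := by
    intro ω
    rw [hsdef]
    exact Finset.add_sum_erase Finset.univ (fun i => X i ω) (Finset.mem_univ lst)
  have hsplit : ∀ m : ℕ, {ω | ∑ i, X i ω = m}
      = {ω | X lst ω + (∑ i ∈ s, X i ω) = m} := by
    intro m; ext ω
    simp only [Set.mem_setOf_eq, hsum_eq ω]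
  have hS : ∀ m, (μ {ω | ∑ i, X i ω = m}).toReal
      = ∑ j ∈ Finset.range (r+1),
          (if j ≤ m then (μ (X lst ⁻¹' {j})).toReal * qfun r (n-1) (m - j) else 0) := by
    intro m
    have hne : ∀ j ∈ Finset.range (r+1),
        (if j ≤ m then μ (X lst ⁻¹' {j})
          * μ ((fun ω => ∑ i ∈ s, X i ω) ⁻¹' {m - j}) else 0) ≠ ⊤ := by
      intro j _
      split_ifs with hjm
      · exact ENNReal.mul_ne_top (measure_ne_top μ _) (measure_ne_top μ _)
      · simp
    rw [hsplit m, meas_add_eq_sum μ (hmeas lst) hTmeas r (hrange lst) hind' m,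
      ENNReal.toReal_sum hne]
    refine Finset.sum_congr rfl fun j _ => ?_
    split_ifs with hjm
    · rw [ENNReal.toReal_mul, hqT (m - j)]
    · simp
  -- values of the last variable
  obtain ⟨hp0, hpr, hpmid⟩ := hlast lst hlstval
  have hp0' : (μ (X lst ⁻¹' {0})).toReal = w₀/2 := by
    rw [show μ (X lst ⁻¹' {0}) = μ {ω | X lst ω = 0} from rfl, hp0]
  have hpr' : (μ (X lst ⁻¹' {r})).toReal = w₀/2 := by
    rw [show μ (X lst ⁻¹' {r}) = μ {ω | X lst ω = r} from rfl, hpr]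
  have hpm' : ∀ j, 1 ≤ j → j < r →
      (μ (X lst ⁻¹' {j})).toReal = (1-w₀)/((r:ℝ)-1) := by
    intro j h1 h2
    rw [show μ (X lst ⁻¹' {j}) = μ {ω | X lst ω = j} from rfl]
    exact hpmid j h1 (by omega)
  have hsub2 : ({0, r} : Finset ℕ) ⊆ Finset.range (r+1) := by
    intro x hx
    simp only [Finset.mem_insert, Finset.mem_singleton] at hx
    rcases hx with rfl | rfl <;> simp [Finset.mem_range]
  have hz : (2:ℝ)^(-(n:ℤ)) = (2:ℝ)^(-((n-1:ℕ):ℤ)) * 2⁻¹ := by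
    rw [← zpow_neg_one, ← zpow_add₀ (two_ne_zero)]
    congr 1
    push_cast [Nat.cast_sub hn]
    ring
  -- the distribution of S on multiples of r
  have hdiv : ∀ t : ℕ, (μ {ω | ∑ i, X i ω = r * t}).toReal
      = w₀ * ((n.choose t : ℝ) * (2:ℝ)^(-(n:ℤ))) := by
    intro t
    rw [hS (r*t)]
    have hzero : ∀ j ∈ Finset.range (r+1), j ∉ ({0, r} : Finset ℕ) →
        (if j ≤ r*t then (μ (X lst ⁻¹' {j})).toReal * qfun r (n-1) (r*t - j) else 0) = 0 := by
      intro j hj hj'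
      simp only [Finset.mem_insert, Finset.mem_singleton] at hj'
      push_neg at hj'
      simp only [Finset.mem_range] at hj
      by_cases hjm : j ≤ r*t
      · rw [if_pos hjm]
        have hnd : ¬ r ∣ (r*t - j) := by
          intro hdd
          have h3 : r*t - (r*t - j) = j := by omega
          have h4 := Nat.dvd_sub (dvd_mul_right r t) hdd
          rw [h3] at h4
          have := Nat.le_of_dvd (by omega) h4
          omega
        rw [qfun_zero hnd, mul_zero]
      · rw [if_neg hjm]
    rw [← Finset.sum_subset hsub2 hzero, Finset.sum_pair (show (0:ℕ) ≠ r by omega),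
      if_pos (Nat.zero_le _), Nat.sub_zero, hp0', qfun_dvd (n-1) hrpos t]
    by_cases ht : t = 0
    · subst ht
      rw [mul_zero, if_neg (by omega : ¬ r ≤ 0), Nat.choose_zero_right,
        Nat.choose_zero_right, hz]
      push_cast
      ring
    · obtain ⟨t', rfl⟩ : ∃ t', t = t'+1 := ⟨t-1, by omega⟩
      rw [if_pos (by nlinarith : r ≤ r*(t'+1))]
      have hsub' : r*(t'+1) - r = r*t' := by
        have : r*(t'+1) = r*t' + r := by ring
        omega
      rw [hsub', qfun_dvd (n-1) hrpos t', hpr', hz]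
      have hn1 : n = (n-1)+1 := by omega
      have hcn : n.choose (t'+1) = (n-1).choose t' + (n-1).choose (t'+1) := by
        conv_lhs => rw [hn1]
        exact Nat.choose_succ_succ (n-1) t'
      rw [hcn]
      push_cast
      ring
  -- the distribution of S off multiples of r
  have hndiv : ∀ m : ℕ, ¬ r ∣ m → (μ {ω | ∑ i, X i ω = m}).toReal
      = (1-w₀)/((r:ℝ)-1) * (((n-1).choose (m/r) : ℝ) * (2:ℝ)^(-((n-1:ℕ):ℤ))) := by
    intro m hd
    rw [hS m]
    have h1 : 1 ≤ m % r := by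
      rcases Nat.eq_zero_or_pos (m % r) with h0 | h1
      · exact absurd (Nat.dvd_of_mod_eq_zero h0) hd
      · exact h1
    have h2 : m % r < r := Nat.mod_lt m hrpos
    have hothers : ∀ j ∈ Finset.range (r+1), j ≠ m % r →
        (if j ≤ m then (μ (X lst ⁻¹' {j})).toReal * qfun r (n-1) (m - j) else 0) = 0 := by
      intro j hj hjne
      simp only [Finset.mem_range] at hj
      by_cases hjm : j ≤ m
      · rw [if_pos hjm]
        have hnd : ¬ r ∣ (m - j) := by
          rintro ⟨t, ht⟩
          by_cases hjr : j = r
          · have hm : m = r * t + r := by omega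
            apply hd
            rw [hm]
            exact Dvd.dvd.add (dvd_mul_right r t) dvd_rfl
          · have hjr' : j < r := by omega
            have hm : m = r * t + j := by omega
            have : m % r = j := by rw [hm, Nat.mul_add_mod, Nat.mod_eq_of_lt hjr']
            exact hjne this.symm
        rw [qfun_zero hnd, mul_zero]
      · rw [if_neg hjm]
    rw [Finset.sum_eq_single_of_mem (m % r) (by simp only [Finset.mem_range]; omega) hothers,
      if_pos (Nat.mod_le m r), hpm' _ h1 h2]
    have h3 : m - m % r = r * (m / r) := by
      have := Nat.div_add_mod m r
      omega
    rw [h3, qfun_dvd (n-1) hrpos (m/r)]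
  -- entropy computation
  have hq0 : (0:ℝ) < 1 - w₀ := by linarith
  have hrR : (0:ℝ) < (r:ℝ) - 1 := by
    have : (2:ℝ) ≤ (r:ℝ) := by exact_mod_cast hr
    linarith
  set qc : ℝ := (1-w₀)/((r:ℝ)-1) with hqc
  have hqcpos : 0 < qc := div_pos hq0 hrR
  simp only [entS]
  rw [sum_range_partition (fun m => (μ {ω | ∑ i, X i ω = m}).toReal
      * Real.logb 2 (μ {ω | ∑ i, X i ω = m}).toReal) n r hr hn]
  have hA : ∑ l ∈ Finset.range (n+1), (μ {ω | ∑ i, X i ω = l*r}).toReal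
        * Real.logb 2 (μ {ω | ∑ i, X i ω = l*r}).toReal
      = w₀ * Real.logb 2 w₀ - w₀ * HB n := by
    rw [← sum_F_scaled w₀ hw₀0 n]
    refine Finset.sum_congr rfl fun l hl => ?_
    rw [show l*r = r*l from mul_comm l r, hdiv l]
  have hBt : ∀ k ∈ Finset.range n, ∀ j ∈ Finset.Ico 1 r,
      (μ {ω | ∑ i, X i ω = k*r+j}).toReal
        = qc * (((n-1).choose k : ℝ) * (2:ℝ)^(-((n-1:ℕ):ℤ))) := by
    intro k hk j hj
    simp only [Finset.mem_Ico] at hj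
    have hjr : j < r := hj.2
    have hnd : ¬ r ∣ (k*r+j) := by
      rintro ⟨t, ht⟩
      have h0 : (k*r+j) % r = 0 := by rw [ht]; exact Nat.mul_mod_right r t
      have h1 : (k*r+j) % r = j % r := Nat.mul_add_mod' k r j
      rw [Nat.mod_eq_of_lt hjr] at h1
      omega
    have hdivval : (k*r+j)/r = k := by
      rw [add_comm, Nat.add_mul_div_right j k hrpos, Nat.div_eq_of_lt hjr, zero_add]
    rw [hndiv _ hnd, hdivval, hqc]
  have hB : ∑ k ∈ Finset.range n, ∑ j ∈ Finset.Ico 1 r,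
        (μ {ω | ∑ i, X i ω = k*r+j}).toReal
          * Real.logb 2 (μ {ω | ∑ i, X i ω = k*r+j}).toReal
      = ((r:ℝ)-1) * (qc * Real.logb 2 qc - qc * HB (n-1)) := by
    have hstep : ∀ k ∈ Finset.range n, ∑ j ∈ Finset.Ico 1 r,
        (μ {ω | ∑ i, X i ω = k*r+j}).toReal
          * Real.logb 2 (μ {ω | ∑ i, X i ω = k*r+j}).toReal
        = ((r:ℝ)-1) * ((qc * (((n-1).choose k : ℝ) * (2:ℝ)^(-((n-1:ℕ):ℤ))))
            * Real.logb 2 (qc * (((n-1).choose k : ℝ) * (2:ℝ)^(-((n-1:ℕ):ℤ))))) := by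
      intro k hk
      rw [Finset.sum_congr rfl (fun j hj => by rw [hBt k hk j hj]),
        Finset.sum_const, Nat.card_Ico, nsmul_eq_mul]
      congr 1
      push_cast [Nat.cast_sub (by omega : 1 ≤ r)]
      ring
    rw [Finset.sum_congr rfl hstep, ← Finset.mul_sum]
    congr 1
    rw [← sum_F_scaled qc hqcpos (n-1), show n-1+1 = n from by omega]
  rw [hA, hB]
  have hlq : Real.logb 2 qc = Real.logb 2 (1-w₀) - Real.logb 2 ((r:ℝ)-1) := by
    rw [hqc, Real.logb_div (by linarith) (by linarith)]
  have hrq : ((r:ℝ)-1) * qc = 1 - w₀ := by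
    rw [hqc]
    field_simp
  rw [binEnt, hlq]
  linear_combination (Real.logb 2 ((r:ℝ)-1) - Real.logb 2 (1-w₀) + HB (n-1)) * hrq
end

section
/- Let r ≥ 1 and let X_1, X_2 be independent random variables taking values in {0, 1, …, r}, with S_2 = X_1 + X_2. Then P(S_2 = r)² − 4·P(S_2 = 0)·P(S_2 = 2r) ≥ (P(X_1 = 0)P(X_2 = r) − P(X_1 = r)P(X_2 = 0))² ≥ 0. In particular, the conditional distribution of S_2 given S_2 ≡ 0 (mod r), supported on {0, r, 2r}, is ultra-log-concave of order 2. -/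
open MeasureTheory ProbabilityTheory Real

/-- For independent `X₁, X₂` with values in `{0, …, r}` and
`S₂ = X₁ + X₂`:
`P(S₂=r)² - 4 P(S₂=0) P(S₂=2r) ≥ (P(X₁=0)P(X₂=r) - P(X₁=r)P(X₂=0))² ≥ 0`;
in particular `P(S₂=r)² ≥ 4 P(S₂=0) P(S₂=2r)`, i.e. the conditional distribution of
`S₂` given `S₂ ≡ 0 (mod r)`, supported on `{0, r, 2r}`, is ultra-log-concave of order 2. -/
theorem sum_two_ulc (r : ℕ) (hr : 1 ≤ r)
    {Ω : Type*} [MeasurableSpace Ω] (μ : Measure Ω) [IsProbabilityMeasure μ]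
    (X₁ X₂ : Ω → ℕ) (h₁ : Measurable X₁) (h₂ : Measurable X₂)
    (hind : IndepFun X₁ X₂ μ)
    (hr₁ : ∀ ω, X₁ ω ≤ r) (hr₂ : ∀ ω, X₂ ω ≤ r) :
    (μ {ω | X₁ ω + X₂ ω = r}).toReal ^ 2 -
        4 * (μ {ω | X₁ ω + X₂ ω = 0}).toReal * (μ {ω | X₁ ω + X₂ ω = 2 * r}).toReal ≥
      ((μ {ω | X₁ ω = 0}).toReal * (μ {ω | X₂ ω = r}).toReal -
        (μ {ω | X₁ ω = r}).toReal * (μ {ω | X₂ ω = 0}).toReal) ^ 2 ∧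
    ((μ {ω | X₁ ω = 0}).toReal * (μ {ω | X₂ ω = r}).toReal -
        (μ {ω | X₁ ω = r}).toReal * (μ {ω | X₂ ω = 0}).toReal) ^ 2 ≥ 0 ∧
    (μ {ω | X₁ ω + X₂ ω = r}).toReal ^ 2 ≥
      4 * (μ {ω | X₁ ω + X₂ ω = 0}).toReal * (μ {ω | X₁ ω + X₂ ω = 2 * r}).toReal := by

  have hmul : ∀ (s t : Set ℕ), μ (X₁ ⁻¹' s ∩ X₂ ⁻¹' t) = μ (X₁ ⁻¹' s) * μ (X₂ ⁻¹' t) := by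
    intro s t
    exact hind.measure_inter_preimage_eq_mul s t (MeasurableSet.of_discrete) (MeasurableSet.of_discrete)
  have hA : ({ω | X₁ ω + X₂ ω = 0} : Set Ω) = X₁ ⁻¹' {0} ∩ X₂ ⁻¹' {0} := by
    ext ω; simp [Set.mem_preimage]
  have hB : ({ω | X₁ ω + X₂ ω = 2 * r} : Set Ω) = X₁ ⁻¹' {r} ∩ X₂ ⁻¹' {r} := by
    ext ω
    have := hr₁ ω; have := hr₂ ω
    simp [Set.mem_preimage]; omega
  have hp0 : (μ {ω | X₁ ω + X₂ ω = 0}).toReal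
      = (μ {ω | X₁ ω = 0}).toReal * (μ {ω | X₂ ω = 0}).toReal := by
    rw [hA, hmul, ENNReal.toReal_mul]; rfl
  have hp2 : (μ {ω | X₁ ω + X₂ ω = 2 * r}).toReal
      = (μ {ω | X₁ ω = r}).toReal * (μ {ω | X₂ ω = r}).toReal := by
    rw [hB, hmul, ENNReal.toReal_mul]; rfl
  have hsub : (X₁ ⁻¹' {0} ∩ X₂ ⁻¹' {r}) ∪ (X₁ ⁻¹' {r} ∩ X₂ ⁻¹' {0}) ⊆ {ω | X₁ ω + X₂ ω = r} := by
    rintro ω (⟨h1, h2⟩ | ⟨h1, h2⟩) <;> simp only [Set.mem_preimage, Set.mem_singleton_iff] at h1 h2 <;>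
      simp [Set.mem_setOf_eq, h1, h2]
  have hdisj : Disjoint (X₁ ⁻¹' {0} ∩ X₂ ⁻¹' {r}) (X₁ ⁻¹' {r} ∩ X₂ ⁻¹' {0}) := by
    rw [Set.disjoint_iff]
    rintro ω ⟨⟨h1, _⟩, ⟨h2, _⟩⟩
    simp only [Set.mem_preimage, Set.mem_singleton_iff] at h1 h2
    omega
  have hmeas : MeasurableSet (X₁ ⁻¹' {r} ∩ X₂ ⁻¹' {0}) :=
    (h₁ MeasurableSet.of_discrete).inter (h₂ MeasurableSet.of_discrete)
  have hpr : μ {ω | X₁ ω + X₂ ω = r} ≥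
      μ (X₁ ⁻¹' {0}) * μ (X₂ ⁻¹' {r}) + μ (X₁ ⁻¹' {r}) * μ (X₂ ⁻¹' {0}) := by
    calc μ {ω | X₁ ω + X₂ ω = r}
        ≥ μ ((X₁ ⁻¹' {0} ∩ X₂ ⁻¹' {r}) ∪ (X₁ ⁻¹' {r} ∩ X₂ ⁻¹' {0})) := measure_mono hsub
      _ = μ (X₁ ⁻¹' {0} ∩ X₂ ⁻¹' {r}) + μ (X₁ ⁻¹' {r} ∩ X₂ ⁻¹' {0}) :=
          measure_union hdisj hmeas
      _ = μ (X₁ ⁻¹' {0}) * μ (X₂ ⁻¹' {r}) + μ (X₁ ⁻¹' {r}) * μ (X₂ ⁻¹' {0}) := by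
          rw [hmul, hmul]
  have hprR : (μ {ω | X₁ ω + X₂ ω = r}).toReal ≥
      (μ {ω | X₁ ω = 0}).toReal * (μ {ω | X₂ ω = r}).toReal +
      (μ {ω | X₁ ω = r}).toReal * (μ {ω | X₂ ω = 0}).toReal := by
    have h1 := ENNReal.toReal_mono (measure_ne_top μ _) hpr
    rw [ENNReal.toReal_add (by finiteness) (by finiteness), ENNReal.toReal_mul,
      ENNReal.toReal_mul] at h1
    exact h1
  set a := (μ {ω | X₁ ω = 0}).toReal
  set b := (μ {ω | X₂ ω = 0}).toReal
  set c := (μ {ω | X₁ ω = r}).toReal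
  set d := (μ {ω | X₂ ω = r}).toReal
  have ha : 0 ≤ a := ENNReal.toReal_nonneg
  have hb : 0 ≤ b := ENNReal.toReal_nonneg
  have hc : 0 ≤ c := ENNReal.toReal_nonneg
  have hd : 0 ≤ d := ENNReal.toReal_nonneg
  refine ⟨?_, sq_nonneg _, ?_⟩ <;> rw [hp0, hp2] <;>
    nlinarith [hprR, sq_nonneg (a * d - c * b), sq_nonneg (a * d + c * b),
      mul_nonneg ha hd, mul_nonneg hc hb]
end

section
/- Let r ≥ 2 and let X_1, X_2 be independent random variables taking values in {0, 1, …, r}, with S_2 = X_1 + X_2. Set w₀ = P(S_2 ≡ 0 (mod r)) = P(S_2 = 0) + P(S_2 = r) + P(S_2 = 2r). Then H(S_2) ≤ w₀·(3/2) + (1 − w₀)·(1 + log₂(r − 1)) + h(w₀). -/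
open MeasureTheory ProbabilityTheory Real

/- Auxiliary lemmas -/

lemma xlogx_ge (x : ℝ) (hx : 0 ≤ x) : x - 1 ≤ x * Real.log x := by
  rcases eq_or_lt_of_le hx with h|h
  · simp [← h]
  · have h1 : Real.log x⁻¹ ≤ x⁻¹ - 1 := Real.log_le_sub_one_of_pos (by positivity)
    rw [Real.log_inv] at h1
    have h2 := mul_le_mul_of_nonneg_left h1 h.le
    have h3 : x * x⁻¹ = 1 := mul_inv_cancel₀ h.ne'
    nlinarith [h2]

lemma xlogx_quad (x : ℝ) (hx : 0 ≤ x) (hx2 : x ≤ 2) :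
    (x - 1) + (x-1)^2/4 ≤ x * Real.log x := by
  rcases eq_or_lt_of_le hx with h|h
  · simp [← h]; norm_num
  · set s : ℝ := x ^ ((4:ℝ)⁻¹) with hs
    have hspos : 0 < s := Real.rpow_pos_of_pos h _
    have hs4 : s^4 = x := by
      rw [hs, ← Real.rpow_natCast (x ^ ((4:ℝ)⁻¹)) 4, ← Real.rpow_mul hx]
      norm_num
    have hlog : Real.log x = 4 * Real.log s := by
      rw [← hs4, Real.log_pow]; norm_num
    have h1 : (1:ℝ) - s⁻¹ ≤ Real.log s := by
      have := Real.log_le_sub_one_of_pos (inv_pos.mpr hspos)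
      rw [Real.log_inv] at this; linarith
    have h2 : 4*s^3*(s - 1) ≤ x * Real.log x := by
      rw [hlog, ← hs4]
      have h3 : s^4 * (4 * ((1:ℝ) - s⁻¹)) = 4*s^3*(s-1) := by
        field_simp
      nlinarith [mul_le_mul_of_nonneg_left h1 (by positivity : (0:ℝ) ≤ 4*s^4)]
    have hs2 : s^4 ≤ 2 := by rw [hs4]; exact hx2
    nlinarith [sq_nonneg (s-1), sq_nonneg (s^2-1), sq_nonneg (s+1), mul_pos hspos hspos, sq_nonneg ((s-1)*(s+1)), mul_nonneg (sq_nonneg (s-1)) hspos.le, mul_nonneg (mul_nonneg (sq_nonneg (s-1)) hspos.le) hspos.le, hs4, h2]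


-- Gibbs termwise: for 0 ≤ p, 0 < q : -(p log p) ≤ -(p log q) + q - p
lemma ent_term (p q : ℝ) (hp : 0 ≤ p) (hq : 0 < q) :
    -(p * Real.log p) ≤ -(p * Real.log q) + q - p := by
  rcases eq_or_lt_of_le hp with h|h
  · simp [← h]; linarith
  · have h1 : Real.log (q / p) ≤ q / p - 1 := Real.log_le_sub_one_of_pos (by positivity)
    rw [Real.log_div hq.ne' h.ne'] at h1
    have h2 := mul_le_mul_of_nonneg_left h1 h.le
    have h3 : p * (q / p - 1) = q - p := by field_simp
    nlinarith [h2]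


-- key three point lemma, natural log version:
set_option maxHeartbeats 1000000 in
lemma key3_log (u v w : ℝ) (hu : 0 ≤ u) (hv : 0 ≤ v) (hw : 0 ≤ w)
    (hsum : u + v + w = 1) (hc : 4*(u*w) ≤ v^2) :
    -(u * Real.log u) - v * Real.log v - w * Real.log w ≤ (3/2) * Real.log 2 := by
  have hlog2 : (0:ℝ) < Real.log 2 := Real.log_pos (by norm_num)
  set X : ℝ := 2*u + v with hX
  set Y : ℝ := 2*w + v with hY
  clear_value X Y
  rcases eq_or_lt_of_le (by rw [hX]; positivity : (0:ℝ) ≤ X) with hX0 | hXpos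
  · -- X = 0 : u = v = 0, w = 1
    have hu0 : u = 0 := by nlinarith [hX0]
    have hv0 : v = 0 := by nlinarith [hX0]
    have hw1 : w = 1 := by linarith
    simp [hu0, hv0, hw1]
    positivity
  rcases eq_or_lt_of_le (by rw [hY]; positivity : (0:ℝ) ≤ Y) with hY0 | hYpos
  · have hw0 : w = 0 := by nlinarith [hY0]
    have hv0 : v = 0 := by nlinarith [hY0]
    have hu1 : u = 1 := by linarith
    simp [hw0, hv0, hu1]
    positivity
  -- Gibbs step
  have hq0 : (0:ℝ) < X^2/4 := by positivity
  have hq1 : (0:ℝ) < X*Y/2 := by positivity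
  have hq2 : (0:ℝ) < Y^2/4 := by positivity
  have t0 := ent_term u (X^2/4) hu hq0
  have t1 := ent_term v (X*Y/2) hv hq1
  have t2 := ent_term w (Y^2/4) hw hq2
  have hqsum : X^2/4 + X*Y/2 + Y^2/4 = 1 := by
    have : X + Y = 2 := by rw [hX, hY]; linarith
    nlinarith [this]
  -- rewrite the cross entropy
  have e0 : Real.log (X^2/4) = 2 * Real.log X - 2 * Real.log 2 := by
    rw [show X^2/4 = (X/2)^2 by ring, Real.log_pow, Real.log_div hXpos.ne' (by norm_num)]
    push_cast; ring
  have e1 : Real.log (X*Y/2) = Real.log X + Real.log Y - Real.log 2 := by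
    rw [Real.log_div (by positivity) (by norm_num), Real.log_mul hXpos.ne' hYpos.ne']
  have e2 : Real.log (Y^2/4) = 2 * Real.log Y - 2 * Real.log 2 := by
    rw [show Y^2/4 = (Y/2)^2 by ring, Real.log_pow, Real.log_div hYpos.ne' (by norm_num)]
    push_cast; ring
  have step1 : -(u * Real.log u) - v * Real.log v - w * Real.log w ≤
      -(X * Real.log X) - Y * Real.log Y + (2 - v) * Real.log 2 := by
    have : -(u * Real.log (X^2/4)) - v * Real.log (X*Y/2) - w * Real.log (Y^2/4)
        = -(X * Real.log X) - Y * Real.log Y + (2 - v) * Real.log 2 := by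
      rw [e0, e1, e2, hX, hY]
      linear_combination (2 * Real.log 2) * hsum
    linarith [t0, t1, t2, hqsum, this.le, this.ge]
  -- final: show X log X + Y log Y ≥ (1/2 - v) log 2
  have hXle : X ≤ 2 := by rw [hX]; linarith
  have hYle : Y ≤ 2 := by rw [hY]; linarith
  have hfin : (1/2 - v) * Real.log 2 ≤ X * Real.log X + Y * Real.log Y := by
    rcases le_or_gt (1/2 : ℝ) v with hv2 | hv2
    · have := xlogx_ge X hXpos.le
      have := xlogx_ge Y hYpos.le
      have hXY : X - 1 + (Y - 1) = 0 := by rw [hX, hY]; linarith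
      nlinarith [hlog2]
    · have q1 := xlogx_quad X hXpos.le hXle
      have q2 := xlogx_quad Y hYpos.le hYle
      have ht : (X-1)^2 + (Y-1)^2 = 2*(u-w)^2 := by
        rw [hX, hY]; linear_combination (2*(u+v+w-1)) * hsum
      have huw : u + w = 1 - v := by linarith
      have ht2 : 1 - 2*v ≤ (u-w)^2 := by nlinarith [hc, huw]
      have hl1 : Real.log 2 ≤ 1 := by
        have := Real.log_le_sub_one_of_pos (by norm_num : (0:ℝ) < 2); linarith
      nlinarith [mul_le_mul_of_nonneg_left hl1 (by linarith : (0:ℝ) ≤ 1/2 - v)]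
  linarith


-- scaled, logb version
lemma key3W (u v w W : ℝ) (hu : 0 ≤ u) (hv : 0 ≤ v) (hw : 0 ≤ w)
    (hsum : u + v + w = W) (hW1 : W ≤ 1) (hc : 4*(u*w) ≤ v^2) :
    -(u * Real.logb 2 u) - v * Real.logb 2 v - w * Real.logb 2 w ≤
      (3/2) * W - W * Real.logb 2 W := by
  have hlog2 : (0:ℝ) < Real.log 2 := Real.log_pos (by norm_num)
  have hW0 : 0 ≤ W := by linarith
  rcases eq_or_lt_of_le hW0 with h0 | hWpos
  · have hu0 : u = 0 := by linarith
    have hv0 : v = 0 := by linarith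
    have hw0 : w = 0 := by linarith
    simp [hu0, hv0, hw0, ← h0]
  have key := key3_log (u/W) (v/W) (w/W) (by positivity) (by positivity) (by positivity)
    (by field_simp; linarith) (by
      rw [div_pow, show (4:ℝ)*(u/W*(w/W)) = 4*(u*w)/W^2 by ring,
        div_le_div_iff₀ (by positivity) (by positivity)]
      nlinarith [mul_le_mul_of_nonneg_right hc (sq_nonneg W)])
  have expand : ∀ p : ℝ, 0 ≤ p → p/W * Real.log (p/W) = (p * Real.log p - p * Real.log W)/W := by
    intro p hp
    rcases eq_or_lt_of_le hp with h|h
    · simp [← h]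
    · rw [Real.log_div h.ne' hWpos.ne']; field_simp
  rw [expand u hu, expand v hv, expand w hw] at key
  have key2 := mul_le_mul_of_nonneg_left key hWpos.le
  have hWne : W ≠ 0 := hWpos.ne'
  have key3 : -(u * Real.log u) - v * Real.log v - w * Real.log w ≤
      W * ((3/2) * Real.log 2) - W * Real.log W := by
    have e : W * (-((u * Real.log u - u * Real.log W)/W) - (v * Real.log v - v * Real.log W)/W
        - (w * Real.log w - w * Real.log W)/W)
        = -(u * Real.log u) - v * Real.log v - w * Real.log w + (u+v+w) * Real.log W := by
      field_simp; ring
    rw [e, hsum] at key2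
    linarith
  simp only [Real.logb]
  refine le_of_mul_le_mul_right ?_ hlog2
  have e1 : (-(u * (Real.log u / Real.log 2)) - v * (Real.log v / Real.log 2)
      - w * (Real.log w / Real.log 2)) * Real.log 2
      = -(u * Real.log u) - v * Real.log v - w * Real.log w := by
    field_simp
  have e2 : ((3/2)*W - W*(Real.log W / Real.log 2)) * Real.log 2
      = W*((3/2)*Real.log 2) - W*Real.log W := by
    field_simp
  rw [e1, e2]
  exact key3

-- max entropy lemma over a finset
lemma maxent {ι : Type*} (s : Finset ι) (p : ι → ℝ) (hp : ∀ i ∈ s, 0 ≤ p i)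
    (T : ℝ) (hT : ∑ i ∈ s, p i = T) :
    -∑ i ∈ s, p i * Real.logb 2 (p i) ≤ T * Real.logb 2 (s.card) - T * Real.logb 2 T := by
  have hlog2 : (0:ℝ) < Real.log 2 := Real.log_pos (by norm_num)
  have hT0 : 0 ≤ T := hT ▸ Finset.sum_nonneg hp
  rcases eq_or_lt_of_le hT0 with h0 | hTpos
  · have hz : ∀ i ∈ s, p i = 0 := by
      intro i hi
      have := (Finset.sum_eq_zero_iff_of_nonneg hp).mp (hT.trans h0.symm)
      exact this i hi
    rw [Finset.sum_eq_zero (fun i hi => by rw [hz i hi]; simp), ← h0]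
    simp
  · have hne : s.Nonempty := by
      by_contra h
      rw [Finset.not_nonempty_iff_eq_empty] at h
      rw [h] at hT; simp at hT; rw [← hT] at hTpos; exact lt_irrefl _ hTpos
    have hcard : (0:ℝ) < s.card := by
      have := Finset.card_pos.mpr hne; exact_mod_cast this
    set q : ℝ := T / s.card with hq
    have hqpos : 0 < q := by positivity
    have step : ∑ i ∈ s, -(p i * Real.log (p i)) ≤
        ∑ i ∈ s, (-(p i * Real.log q) + q - p i) :=
      Finset.sum_le_sum (fun i hi => ent_term (p i) q (hp i hi) hqpos)
    have rhs_eq : ∑ i ∈ s, (-(p i * Real.log q) + q - p i)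
        = -(T * Real.log q) + s.card * q - T := by
      rw [Finset.sum_sub_distrib, Finset.sum_add_distrib, Finset.sum_neg_distrib,
        ← Finset.sum_mul, hT, Finset.sum_const, nsmul_eq_mul]
    have hcq : (s.card : ℝ) * q = T := by rw [hq]; field_simp
    have hlogq : Real.log q = Real.log T - Real.log (s.card) := by
      rw [hq, Real.log_div hTpos.ne' hcard.ne']
    have step2 : -∑ i ∈ s, p i * Real.log (p i) ≤ T * Real.log (s.card) - T * Real.log T := by
      rw [← Finset.sum_neg_distrib]
      calc ∑ i ∈ s, -(p i * Real.log (p i)) ≤ -(T * Real.log q) + s.card * q - T := by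
            rw [← rhs_eq]; exact step
        _ = T * Real.log (s.card) - T * Real.log T := by rw [hlogq, hcq]; ring
    -- convert to logb
    simp only [Real.logb]
    refine le_of_mul_le_mul_right ?_ hlog2
    have e1 : (-∑ i ∈ s, p i * (Real.log (p i) / Real.log 2)) * Real.log 2
        = -∑ i ∈ s, p i * Real.log (p i) := by
      rw [neg_mul, Finset.sum_mul]
      congr 1
      refine Finset.sum_congr rfl (fun i hi => ?_)
      field_simp
    have e2 : (T * (Real.log (s.card) / Real.log 2) - T * (Real.log T / Real.log 2)) * Real.log 2
        = T * Real.log (s.card) - T * Real.log T := by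
      field_simp
    rw [e1, e2]
    exact step2

/-- For `r ≥ 2` and independent `X₁, X₂` with values in `{0, …, r}`,
setting `w₀ = P(S₂ ≡ 0 (mod r)) = P(S₂=0) + P(S₂=r) + P(S₂=2r)`, one has
`H(S₂) ≤ w₀ · (3/2) + (1-w₀)(1 + log₂(r-1)) + h(w₀)`. -/
theorem entropy_sum_two_upper_bound (r : ℕ) (hr : 2 ≤ r)
    {Ω : Type*} [MeasurableSpace Ω] (μ : Measure Ω) [IsProbabilityMeasure μ]
    (X₁ X₂ : Ω → ℕ) (h₁ : Measurable X₁) (h₂ : Measurable X₂)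
    (hind : IndepFun X₁ X₂ μ)
    (hr₁ : ∀ ω, X₁ ω ≤ r) (hr₂ : ∀ ω, X₂ ω ≤ r)
    (w₀ : ℝ)
    (hw₀ : w₀ = (μ {ω | X₁ ω + X₂ ω = 0}).toReal + (μ {ω | X₁ ω + X₂ ω = r}).toReal +
      (μ {ω | X₁ ω + X₂ ω = 2 * r}).toReal) :
    entS μ (fun ω => X₁ ω + X₂ ω) (2 * r) ≤
      w₀ * (3 / 2) + (1 - w₀) * (1 + Real.logb 2 ((r : ℝ) - 1)) + binEnt w₀ := by
  classical
  set p : ℕ → ℝ := fun j => (μ {ω | X₁ ω + X₂ ω = j}).toReal with hp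
  have hSmeas : ∀ j : ℕ, MeasurableSet {ω | X₁ ω + X₂ ω = j} := by
    intro j
    exact (h₁.add h₂) (measurableSet_singleton j)
  have hfin : ∀ j : ℕ, μ {ω | X₁ ω + X₂ ω = j} ≠ ⊤ := fun j => measure_ne_top μ _
  have hpnn : ∀ j, 0 ≤ p j := fun j => ENNReal.toReal_nonneg
  -- total mass one
  have htotal : ∑ j ∈ Finset.range (2*r+1), p j = 1 := by
    have hdisj : (Finset.range (2*r+1) : Set ℕ).PairwiseDisjoint
        (fun j => {ω | X₁ ω + X₂ ω = j}) := by
      intro i _ j _ hij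
      simp only [Function.onFun, Set.disjoint_left]
      intro ω hi hj
      exact hij (hi ▸ hj ▸ rfl)
    have hcover : ⋃ j ∈ Finset.range (2*r+1), {ω | X₁ ω + X₂ ω = j} = Set.univ := by
      ext ω
      simp only [Set.mem_iUnion, Finset.mem_range, Set.mem_univ, iff_true]
      exact ⟨X₁ ω + X₂ ω, by have := hr₁ ω; have := hr₂ ω; omega, rfl⟩
    have := measure_biUnion_finset (μ := μ) hdisj (fun j _ => hSmeas j)
    rw [hcover, measure_univ] at this
    rw [hp]
    rw [← ENNReal.toReal_sum (fun j _ => hfin j), ← this]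
    simp
  -- independence facts
  set a : ℝ := (μ (X₁ ⁻¹' {0})).toReal with ha
  set b : ℝ := (μ (X₁ ⁻¹' {r})).toReal with hb
  set c : ℝ := (μ (X₂ ⁻¹' {0})).toReal with hc
  set d : ℝ := (μ (X₂ ⁻¹' {r})).toReal with hd
  have hmul : ∀ s t : Set ℕ, μ (X₁ ⁻¹' s ∩ X₂ ⁻¹' t) = μ (X₁ ⁻¹' s) * μ (X₂ ⁻¹' t) := by
    intro s t
    exact hind.measure_inter_preimage_eq_mul s t (by trivial) (by trivial)
  have hvE0 : {ω | X₁ ω + X₂ ω = 0} = X₁ ⁻¹' {0} ∩ X₂ ⁻¹' {0} := by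
    ext ω; simp [Nat.add_eq_zero]
  have hvE2 : {ω | X₁ ω + X₂ ω = 2*r} = X₁ ⁻¹' {r} ∩ X₂ ⁻¹' {r} := by
    ext ω
    simp only [Set.mem_setOf_eq, Set.mem_inter_iff, Set.mem_preimage, Set.mem_singleton_iff]
    have := hr₁ ω; have := hr₂ ω; omega
  have hu0 : p 0 = a * c := by
    rw [hp]; simp only []
    rw [hvE0, hmul, ENNReal.toReal_mul]
  have hw2 : p (2*r) = b * d := by
    rw [hp]; simp only []
    rw [hvE2, hmul, ENNReal.toReal_mul]
  have hvr : a * d + b * c ≤ p r := by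
    have hsub : (X₁ ⁻¹' {0} ∩ X₂ ⁻¹' {r}) ∪ (X₁ ⁻¹' {r} ∩ X₂ ⁻¹' {0}) ⊆
        {ω | X₁ ω + X₂ ω = r} := by
      intro ω hω
      rcases hω with h | h <;>
        · simp only [Set.mem_inter_iff, Set.mem_preimage, Set.mem_singleton_iff] at h
          simp [h.1, h.2]
    have hdisj2 : Disjoint (X₁ ⁻¹' {0} ∩ X₂ ⁻¹' {r}) (X₁ ⁻¹' {r} ∩ X₂ ⁻¹' {0}) := by
      rw [Set.disjoint_left]
      intro ω h1 h2
      simp only [Set.mem_inter_iff, Set.mem_preimage, Set.mem_singleton_iff] at h1 h2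
      omega
    have hmeas2 : MeasurableSet (X₁ ⁻¹' {r} ∩ X₂ ⁻¹' {0}) :=
      (h₁ (measurableSet_singleton r)).inter (h₂ (measurableSet_singleton 0))
    have hle : μ (X₁ ⁻¹' {0} ∩ X₂ ⁻¹' {r}) + μ (X₁ ⁻¹' {r} ∩ X₂ ⁻¹' {0}) ≤
        μ {ω | X₁ ω + X₂ ω = r} := by
      rw [← measure_union hdisj2 hmeas2]
      exact measure_mono hsub
    have := ENNReal.toReal_mono (hfin r) hle
    rw [ENNReal.toReal_add (by finiteness) (by finiteness), hmul, hmul,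
      ENNReal.toReal_mul, ENNReal.toReal_mul] at this
    exact this
  have hcON : 4 * (p 0 * p (2*r)) ≤ (p r)^2 := by
    have h1 : 0 ≤ a * d := by positivity
    have h2 : 0 ≤ b * c := by positivity
    have h3 : (a*d + b*c)^2 ≤ (p r)^2 :=
      pow_le_pow_left₀ (by positivity) hvr 2
    rw [hu0, hw2]
    nlinarith [sq_nonneg (a*d - b*c), h3]
  -- split the sum
  set A : Finset ℕ := {0, r, 2*r} with hA
  have hAsub : A ⊆ Finset.range (2*r+1) := by
    intro j hj
    rw [hA] at hj
    simp only [Finset.mem_insert, Finset.mem_singleton] at hj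
    rcases hj with h|h|h <;> simp [h] <;> omega
  have hAcard : A.card = 3 := by
    rw [hA]
    rw [Finset.card_insert_of_notMem (by simp; omega),
      Finset.card_insert_of_notMem (by simp; omega), Finset.card_singleton]
  have hsumA : ∑ j ∈ A, p j = p 0 + p r + p (2*r) := by
    rw [hA, Finset.sum_insert (by simp; omega), Finset.sum_insert (by simp; omega),
      Finset.sum_singleton]
    ring
  have hw₀p : w₀ = p 0 + p r + p (2*r) := hw₀
  -- w₀ ≤ 1 and sum over B
  set B : Finset ℕ := Finset.range (2*r+1) \ A with hB
  have hsplit : ∑ j ∈ B, p j + ∑ j ∈ A, p j = ∑ j ∈ Finset.range (2*r+1), p j :=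
    Finset.sum_sdiff hAsub
  have hsumB : ∑ j ∈ B, p j = 1 - w₀ := by
    rw [hw₀p, ← hsumA]; linarith [hsplit, htotal]
  have hw₀le : w₀ ≤ 1 := by
    have : 0 ≤ ∑ j ∈ B, p j := Finset.sum_nonneg (fun j _ => hpnn j)
    linarith [hsumB]
  have hw₀nn : 0 ≤ w₀ := by
    rw [hw₀p]
    have := hpnn 0; have := hpnn r; have := hpnn (2*r)
    linarith
  have hBcard : B.card = 2*r - 2 := by
    rw [hB, Finset.card_sdiff_of_subset hAsub, Finset.card_range, hAcard]
    omega
  -- apply the two bounds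
  have boundA : -(p 0 * Real.logb 2 (p 0)) - p r * Real.logb 2 (p r)
      - p (2*r) * Real.logb 2 (p (2*r)) ≤ (3/2) * w₀ - w₀ * Real.logb 2 w₀ :=
    key3W _ _ _ _ (hpnn 0) (hpnn r) (hpnn (2*r)) hw₀p.symm hw₀le hcON
  have boundB : -∑ j ∈ B, p j * Real.logb 2 (p j) ≤
      (1 - w₀) * Real.logb 2 (B.card) - (1 - w₀) * Real.logb 2 (1 - w₀) :=
    maxent B p (fun j _ => hpnn j) (1 - w₀) hsumB
  -- card arithmetic
  have hcardval : ((B.card : ℕ) : ℝ) = 2 * ((r:ℝ) - 1) := by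
    rw [hBcard]
    have h3 : (2:ℕ) ≤ 2*r := by omega
    push_cast [Nat.cast_sub h3]
    ring
  have hlogcard : Real.logb 2 (B.card) = 1 + Real.logb 2 ((r:ℝ) - 1) := by
    rw [hcardval, Real.logb_mul (by norm_num) (by
      have : (1:ℝ) ≤ (r:ℝ) - 1 := by
        have : (2:ℝ) ≤ (r:ℝ) := by exact_mod_cast hr
        linarith
      linarith)]
    simp
  -- final assembly
  have hentdef : entS μ (fun ω => X₁ ω + X₂ ω) (2 * r)
      = -∑ j ∈ Finset.range (2*r+1), p j * Real.logb 2 (p j) := rfl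
  have hsplitf : ∑ j ∈ B, (p j * Real.logb 2 (p j)) + ∑ j ∈ A, (p j * Real.logb 2 (p j))
      = ∑ j ∈ Finset.range (2*r+1), (p j * Real.logb 2 (p j)) :=
    Finset.sum_sdiff hAsub
  have hent : entS μ (fun ω => X₁ ω + X₂ ω) (2 * r)
      = (-∑ j ∈ A, p j * Real.logb 2 (p j)) + (-∑ j ∈ B, p j * Real.logb 2 (p j)) := by
    rw [hentdef, ← hsplitf]
    ring
  have hsumAf : ∑ j ∈ A, p j * Real.logb 2 (p j)
      = p 0 * Real.logb 2 (p 0) + p r * Real.logb 2 (p r)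
        + p (2*r) * Real.logb 2 (p (2*r)) := by
    rw [hA, Finset.sum_insert (by simp; omega), Finset.sum_insert (by simp; omega),
      Finset.sum_singleton]
    ring
  rw [hent, hsumAf, binEnt]
  rw [hlogcard] at boundB
  have : -(p 0 * Real.logb 2 (p 0) + p r * Real.logb 2 (p r)
      + p (2*r) * Real.logb 2 (p (2*r)))
      = -(p 0 * Real.logb 2 (p 0)) - p r * Real.logb 2 (p r)
      - p (2*r) * Real.logb 2 (p (2*r)) := by ring
  rw [this]
  linarith [boundA, boundB]
end

section
/- Let X_1, X_2, X_3 be independent random variables taking values in {0, 1, 2} and S_3 = X_1 + X_2 + X_3. Then P(S_3 = 2)² ≥ 3·P(S_3 = 0)·P(S_3 = 4). -/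
open MeasureTheory ProbabilityTheory Real

lemma ulc_keyBad (u1 u2 u3 g1 g2 g3 : ℝ) (h1 : 0 ≤ u1) (h2 : 0 ≤ u2) (h3 : 0 ≤ u3)
    (_k1 : 0 ≤ g1) (k2 : 0 ≤ g2) (k3 : 0 ≤ g3) (c1 : 2*(u2+u3) ≤ u1) :
    3*(u1*u2+u1*u3+u2*u3) + 3*(u1*g1+u2*g2+u3*g3) ≤ (u1+u2+u3+g1+g2+g3)^2 := by
  nlinarith [sq_nonneg (2*(g1+g2+g3) - u1 + 2*u2 + 2*u3),
    mul_nonneg (by linarith : (0:ℝ) ≤ u1 - 2*(u2+u3)) (by linarith : (0:ℝ) ≤ u1 + 2*(u2+u3)),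
    sq_nonneg (u2-u3), sq_nonneg (u2+u3),
    mul_nonneg k2 (by linarith : (0:ℝ) ≤ 2*(u1+u3) - u2),
    mul_nonneg k3 (by linarith : (0:ℝ) ≤ 2*(u1+u2) - u3)]

lemma ulc_key (u1 u2 u3 g1 g2 g3 : ℝ) (h1 : 0 ≤ u1) (h2 : 0 ≤ u2) (h3 : 0 ≤ u3)
    (k1 : 0 ≤ g1) (k2 : 0 ≤ g2) (k3 : 0 ≤ g3) :
    3*(u1*u2+u1*u3+u2*u3) + 3*(u1*g1+u2*g2+u3*g3) ≤ (u1+u2+u3+g1+g2+g3)^2 := by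
  rcases le_total u1 (2*(u2+u3)) with c1|c1
  · rcases le_total u2 (2*(u1+u3)) with c2|c2
    · rcases le_total u3 (2*(u1+u2)) with c3|c3
      · nlinarith [sq_nonneg (g1+g2+g3), sq_nonneg (u1-u2), sq_nonneg (u1-u3),
          sq_nonneg (u2-u3),
          mul_nonneg k1 (by linarith : (0:ℝ) ≤ 2*(u2+u3) - u1),
          mul_nonneg k2 (by linarith : (0:ℝ) ≤ 2*(u1+u3) - u2),
          mul_nonneg k3 (by linarith : (0:ℝ) ≤ 2*(u1+u2) - u3)]
      · have := ulc_keyBad u3 u1 u2 g3 g1 g2 h3 h1 h2 k3 k1 k2 (by linarith)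
        linarith [this]
    · have := ulc_keyBad u2 u3 u1 g2 g3 g1 h2 h3 h1 k2 k3 k1 (by linarith)
      linarith [this]
  · exact ulc_keyBad u1 u2 u3 g1 g2 g3 h1 h2 h3 k1 k2 k3 c1

lemma ulc_poly (a1 a2 a3 b1 b2 b3 c1 c2 c3 : ℝ)
    (ha1 : 0 ≤ a1) (ha2 : 0 ≤ a2) (ha3 : 0 ≤ a3)
    (hb1 : 0 ≤ b1) (hb2 : 0 ≤ b2) (hb3 : 0 ≤ b3)
    (hc1 : 0 ≤ c1) (hc2 : 0 ≤ c2) (hc3 : 0 ≤ c3) :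
    3*(a1*a2*a3)*(c1*c2*a3 + c1*a2*c3 + a1*c2*c3 + c1*b2*b3 + b1*c2*b3 + b1*b2*c3)
      ≤ (c1*a2*a3 + a1*c2*a3 + a1*a2*c3 + b1*b2*a3 + b1*a2*b3 + a1*b2*b3)^2 := by
  rcases eq_or_lt_of_le ha1 with h1|h1
  · rw [← h1]; ring_nf; positivity
  rcases eq_or_lt_of_le ha2 with h2|h2
  · rw [← h2]; ring_nf; positivity
  rcases eq_or_lt_of_le ha3 with h3|h3
  · rw [← h3]; ring_nf; positivity
  have hk := ulc_key (c1/a1) (c2/a2) (c3/a3) (b2*b3/(a2*a3)) (b1*b3/(a1*a3)) (b1*b2/(a1*a2))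
    (by positivity) (by positivity) (by positivity) (by positivity) (by positivity) (by positivity)
  have hA : (0:ℝ) < (a1*a2*a3)^2 := by positivity
  have hmul := mul_le_mul_of_nonneg_left hk (le_of_lt hA)
  calc 3*(a1*a2*a3)*(c1*c2*a3 + c1*a2*c3 + a1*c2*c3 + c1*b2*b3 + b1*c2*b3 + b1*b2*c3)
      = (a1*a2*a3)^2 * (3*((c1/a1)*(c2/a2)+(c1/a1)*(c3/a3)+(c2/a2)*(c3/a3))
          + 3*((c1/a1)*(b2*b3/(a2*a3))+(c2/a2)*(b1*b3/(a1*a3))+(c3/a3)*(b1*b2/(a1*a2)))) := by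
        field_simp
        ring
    _ ≤ (a1*a2*a3)^2 * ((c1/a1)+(c2/a2)+(c3/a3)+(b2*b3/(a2*a3))+(b1*b3/(a1*a3))+(b1*b2/(a1*a2)))^2 := hmul
    _ = (c1*a2*a3 + a1*c2*a3 + a1*a2*c3 + b1*b2*a3 + b1*a2*b3 + a1*b2*b3)^2 := by
        field_simp
        ring

lemma ulc_sum_six_le {Ω : Type*} [MeasurableSpace Ω] (μ : Measure Ω)
    (B1 B2 B3 B4 B5 B6 T : Set Ω)
    (m2 : MeasurableSet B2) (m3 : MeasurableSet B3) (m4 : MeasurableSet B4)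
    (m5 : MeasurableSet B5) (m6 : MeasurableSet B6)
    (d12 : Disjoint B1 B2) (d13 : Disjoint B1 B3) (d14 : Disjoint B1 B4)
    (d15 : Disjoint B1 B5) (d16 : Disjoint B1 B6)
    (d23 : Disjoint B2 B3) (d24 : Disjoint B2 B4) (d25 : Disjoint B2 B5) (d26 : Disjoint B2 B6)
    (d34 : Disjoint B3 B4) (d35 : Disjoint B3 B5) (d36 : Disjoint B3 B6)
    (d45 : Disjoint B4 B5) (d46 : Disjoint B4 B6) (d56 : Disjoint B5 B6)
    (s1 : B1 ⊆ T) (s2 : B2 ⊆ T) (s3 : B3 ⊆ T) (s4 : B4 ⊆ T) (s5 : B5 ⊆ T) (s6 : B6 ⊆ T) :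
    μ B1 + μ B2 + μ B3 + μ B4 + μ B5 + μ B6 ≤ μ T := by
  have e2 : μ (B1 ∪ B2) = μ B1 + μ B2 := measure_union d12 m2
  have e3 : μ (B1 ∪ B2 ∪ B3) = μ (B1 ∪ B2) + μ B3 :=
    measure_union (d13.union_left d23) m3
  have e4 : μ (B1 ∪ B2 ∪ B3 ∪ B4) = μ (B1 ∪ B2 ∪ B3) + μ B4 :=
    measure_union ((d14.union_left d24).union_left d34) m4
  have e5 : μ (B1 ∪ B2 ∪ B3 ∪ B4 ∪ B5) = μ (B1 ∪ B2 ∪ B3 ∪ B4) + μ B5 :=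
    measure_union (((d15.union_left d25).union_left d35).union_left d45) m5
  have e6 : μ (B1 ∪ B2 ∪ B3 ∪ B4 ∪ B5 ∪ B6) = μ (B1 ∪ B2 ∪ B3 ∪ B4 ∪ B5) + μ B6 :=
    measure_union ((((d16.union_left d26).union_left d36).union_left d46).union_left d56) m6
  have hsub : B1 ∪ B2 ∪ B3 ∪ B4 ∪ B5 ∪ B6 ⊆ T :=
    Set.union_subset (Set.union_subset (Set.union_subset (Set.union_subset
      (Set.union_subset s1 s2) s3) s4) s5) s6
  calc μ B1 + μ B2 + μ B3 + μ B4 + μ B5 + μ B6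
      = μ (B1 ∪ B2 ∪ B3 ∪ B4 ∪ B5 ∪ B6) := by rw [e6, e5, e4, e3, e2]
    _ ≤ μ T := measure_mono hsub

lemma ulc_le_sum_six {Ω : Type*} [MeasurableSpace Ω] (μ : Measure Ω)
    (B1 B2 B3 B4 B5 B6 T : Set Ω)
    (hsub : T ⊆ B1 ∪ B2 ∪ B3 ∪ B4 ∪ B5 ∪ B6) :
    μ T ≤ μ B1 + μ B2 + μ B3 + μ B4 + μ B5 + μ B6 := by
  refine (measure_mono hsub).trans ?_
  refine (measure_union_le _ _).trans ?_
  gcongr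
  refine (measure_union_le _ _).trans ?_
  gcongr
  refine (measure_union_le _ _).trans ?_
  gcongr
  refine (measure_union_le _ _).trans ?_
  gcongr
  exact measure_union_le _ _

set_option maxHeartbeats 2000000 in
/-- For independent `X₁, X₂, X₃` on `{0,1,2}` and `S₃ = X₁+X₂+X₃`: `P(S₃=2)² ≥ 3 P(S₃=0) P(S₃=4)`. -/
theorem sum_three_ulc_even_k1
    {Ω : Type*} [MeasurableSpace Ω] (μ : Measure Ω) [IsProbabilityMeasure μ]
    (X : Fin 3 → Ω → ℕ) (hmeas : ∀ i, Measurable (X i))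
    (hindep : iIndepFun X μ)
    (hrange : ∀ i ω, X i ω ≤ 2) :
    (μ {ω | ∑ i, X i ω = 2}).toReal ^ 2 ≥
      3 * (μ {ω | ∑ i, X i ω = 0}).toReal * (μ {ω | ∑ i, X i ω = 4}).toReal := by
  -- single-point probabilities
  set a1 := (μ (X 0 ⁻¹' {(0:ℕ)})).toReal with ha1'
  set a2 := (μ (X 1 ⁻¹' {(0:ℕ)})).toReal with ha2'
  set a3 := (μ (X 2 ⁻¹' {(0:ℕ)})).toReal with ha3'
  set b1 := (μ (X 0 ⁻¹' {(1:ℕ)})).toReal with hb1'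
  set b2 := (μ (X 1 ⁻¹' {(1:ℕ)})).toReal with hb2'
  set b3 := (μ (X 2 ⁻¹' {(1:ℕ)})).toReal with hb3'
  set c1 := (μ (X 0 ⁻¹' {(2:ℕ)})).toReal with hc1'
  set c2 := (μ (X 1 ⁻¹' {(2:ℕ)})).toReal with hc2'
  set c3 := (μ (X 2 ⁻¹' {(2:ℕ)})).toReal with hc3'
  have measE : ∀ v0 v1 v2 : ℕ,
      (μ {ω | X 0 ω = v0 ∧ X 1 ω = v1 ∧ X 2 ω = v2}).toReal
        = (μ (X 0 ⁻¹' {v0})).toReal * (μ (X 1 ⁻¹' {v1})).toReal * (μ (X 2 ⁻¹' {v2})).toReal := by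
    intro v0 v1 v2
    have hset : {ω | X 0 ω = v0 ∧ X 1 ω = v1 ∧ X 2 ω = v2}
        = ⋂ i, X i ⁻¹' {(![v0, v1, v2]) i} := by
      ext ω
      simp only [Set.mem_iInter, Set.mem_preimage, Set.mem_singleton_iff, Set.mem_setOf_eq]
      constructor
      · rintro ⟨h0, h1, h2⟩ i; fin_cases i <;> simpa
      · intro h; exact ⟨h 0, h 1, h 2⟩
    rw [hset, hindep.meas_iInter (fun i => ⟨{(![v0, v1, v2]) i}, measurableSet_singleton _, rfl⟩),
      Fin.prod_univ_three]
    simp [ENNReal.toReal_mul]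
  have mSt : ∀ v0 v1 v2 : ℕ, MeasurableSet {ω | X 0 ω = v0 ∧ X 1 ω = v1 ∧ X 2 ω = v2} := by
    intro v0 v1 v2
    have h : {ω | X 0 ω = v0 ∧ X 1 ω = v1 ∧ X 2 ω = v2}
        = (X 0 ⁻¹' {v0}) ∩ ((X 1 ⁻¹' {v1}) ∩ (X 2 ⁻¹' {v2})) := rfl
    rw [h]
    exact ((hmeas 0) (measurableSet_singleton _)).inter
      (((hmeas 1) (measurableSet_singleton _)).inter ((hmeas 2) (measurableSet_singleton _)))
  -- bound for P(S=0)
  have hS0 : (μ {ω | ∑ i, X i ω = 0}).toReal ≤ a1 * a2 * a3 := by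
    have hsub : {ω | ∑ i, X i ω = 0} ⊆ {ω | X 0 ω = 0 ∧ X 1 ω = 0 ∧ X 2 ω = 0} := by
      intro ω hω
      simp only [Set.mem_setOf_eq, Fin.sum_univ_three] at hω ⊢
      omega
    calc (μ {ω | ∑ i, X i ω = 0}).toReal
        ≤ (μ {ω | X 0 ω = 0 ∧ X 1 ω = 0 ∧ X 2 ω = 0}).toReal :=
          ENNReal.toReal_mono (measure_ne_top μ _) (measure_mono hsub)
      _ = a1 * a2 * a3 := measE 0 0 0
  -- bound for P(S=4)
  have hS4 : (μ {ω | ∑ i, X i ω = 4}).toReal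
      ≤ c1*c2*a3 + c1*a2*c3 + a1*c2*c3 + c1*b2*b3 + b1*c2*b3 + b1*b2*c3 := by
    have hsub : {ω | ∑ i, X i ω = 4} ⊆
        {ω | X 0 ω = 2 ∧ X 1 ω = 2 ∧ X 2 ω = 0} ∪ {ω | X 0 ω = 2 ∧ X 1 ω = 0 ∧ X 2 ω = 2}
        ∪ {ω | X 0 ω = 0 ∧ X 1 ω = 2 ∧ X 2 ω = 2} ∪ {ω | X 0 ω = 2 ∧ X 1 ω = 1 ∧ X 2 ω = 1}
        ∪ {ω | X 0 ω = 1 ∧ X 1 ω = 2 ∧ X 2 ω = 1} ∪ {ω | X 0 ω = 1 ∧ X 1 ω = 1 ∧ X 2 ω = 2} := by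
      intro ω hω
      have h0 := hrange 0 ω
      have h1 := hrange 1 ω
      have h2 := hrange 2 ω
      simp only [Set.mem_setOf_eq, Fin.sum_univ_three] at hω
      simp only [Set.mem_union, Set.mem_setOf_eq]
      omega
    have h := ulc_le_sum_six μ _ _ _ _ _ _ _ hsub
    have hfin : μ {ω | X 0 ω = 2 ∧ X 1 ω = 2 ∧ X 2 ω = 0}
        + μ {ω | X 0 ω = 2 ∧ X 1 ω = 0 ∧ X 2 ω = 2}
        + μ {ω | X 0 ω = 0 ∧ X 1 ω = 2 ∧ X 2 ω = 2}
        + μ {ω | X 0 ω = 2 ∧ X 1 ω = 1 ∧ X 2 ω = 1}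
        + μ {ω | X 0 ω = 1 ∧ X 1 ω = 2 ∧ X 2 ω = 1}
        + μ {ω | X 0 ω = 1 ∧ X 1 ω = 1 ∧ X 2 ω = 2} ≠ ⊤ := by finiteness
    have h' := ENNReal.toReal_mono hfin h
    rw [ENNReal.toReal_add, ENNReal.toReal_add, ENNReal.toReal_add, ENNReal.toReal_add,
      ENNReal.toReal_add] at h'
    · rw [measE, measE, measE, measE, measE, measE] at h'
      exact h'
    all_goals first
      | exact measure_ne_top μ _
      | finiteness
  -- bound for P(S=2)
  have hS2 : c1*a2*a3 + a1*c2*a3 + a1*a2*c3 + b1*b2*a3 + b1*a2*b3 + a1*b2*b3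
      ≤ (μ {ω | ∑ i, X i ω = 2}).toReal := by
    have h := ulc_sum_six_le μ
      {ω | X 0 ω = 2 ∧ X 1 ω = 0 ∧ X 2 ω = 0} {ω | X 0 ω = 0 ∧ X 1 ω = 2 ∧ X 2 ω = 0}
      {ω | X 0 ω = 0 ∧ X 1 ω = 0 ∧ X 2 ω = 2} {ω | X 0 ω = 1 ∧ X 1 ω = 1 ∧ X 2 ω = 0}
      {ω | X 0 ω = 1 ∧ X 1 ω = 0 ∧ X 2 ω = 1} {ω | X 0 ω = 0 ∧ X 1 ω = 1 ∧ X 2 ω = 1}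
      {ω | ∑ i, X i ω = 2}
      (mSt _ _ _) (mSt _ _ _) (mSt _ _ _) (mSt _ _ _) (mSt _ _ _)
      (by rw [Set.disjoint_left]; rintro ω ⟨p1, p2, p3⟩ ⟨q1, q2, q3⟩; omega)
      (by rw [Set.disjoint_left]; rintro ω ⟨p1, p2, p3⟩ ⟨q1, q2, q3⟩; omega)
      (by rw [Set.disjoint_left]; rintro ω ⟨p1, p2, p3⟩ ⟨q1, q2, q3⟩; omega)
      (by rw [Set.disjoint_left]; rintro ω ⟨p1, p2, p3⟩ ⟨q1, q2, q3⟩; omega)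
      (by rw [Set.disjoint_left]; rintro ω ⟨p1, p2, p3⟩ ⟨q1, q2, q3⟩; omega)
      (by rw [Set.disjoint_left]; rintro ω ⟨p1, p2, p3⟩ ⟨q1, q2, q3⟩; omega)
      (by rw [Set.disjoint_left]; rintro ω ⟨p1, p2, p3⟩ ⟨q1, q2, q3⟩; omega)
      (by rw [Set.disjoint_left]; rintro ω ⟨p1, p2, p3⟩ ⟨q1, q2, q3⟩; omega)
      (by rw [Set.disjoint_left]; rintro ω ⟨p1, p2, p3⟩ ⟨q1, q2, q3⟩; omega)
      (by rw [Set.disjoint_left]; rintro ω ⟨p1, p2, p3⟩ ⟨q1, q2, q3⟩; omega)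
      (by rw [Set.disjoint_left]; rintro ω ⟨p1, p2, p3⟩ ⟨q1, q2, q3⟩; omega)
      (by rw [Set.disjoint_left]; rintro ω ⟨p1, p2, p3⟩ ⟨q1, q2, q3⟩; omega)
      (by rw [Set.disjoint_left]; rintro ω ⟨p1, p2, p3⟩ ⟨q1, q2, q3⟩; omega)
      (by rw [Set.disjoint_left]; rintro ω ⟨p1, p2, p3⟩ ⟨q1, q2, q3⟩; omega)
      (by rw [Set.disjoint_left]; rintro ω ⟨p1, p2, p3⟩ ⟨q1, q2, q3⟩; omega)
      (by intro ω hω; simp only [Set.mem_setOf_eq, Fin.sum_univ_three] at hω ⊢; omega)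
      (by intro ω hω; simp only [Set.mem_setOf_eq, Fin.sum_univ_three] at hω ⊢; omega)
      (by intro ω hω; simp only [Set.mem_setOf_eq, Fin.sum_univ_three] at hω ⊢; omega)
      (by intro ω hω; simp only [Set.mem_setOf_eq, Fin.sum_univ_three] at hω ⊢; omega)
      (by intro ω hω; simp only [Set.mem_setOf_eq, Fin.sum_univ_three] at hω ⊢; omega)
      (by intro ω hω; simp only [Set.mem_setOf_eq, Fin.sum_univ_three] at hω ⊢; omega)
    have hfin : μ {ω | X 0 ω = 2 ∧ X 1 ω = 0 ∧ X 2 ω = 0}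
        + μ {ω | X 0 ω = 0 ∧ X 1 ω = 2 ∧ X 2 ω = 0}
        + μ {ω | X 0 ω = 0 ∧ X 1 ω = 0 ∧ X 2 ω = 2}
        + μ {ω | X 0 ω = 1 ∧ X 1 ω = 1 ∧ X 2 ω = 0}
        + μ {ω | X 0 ω = 1 ∧ X 1 ω = 0 ∧ X 2 ω = 1}
        + μ {ω | X 0 ω = 0 ∧ X 1 ω = 1 ∧ X 2 ω = 1} ≠ ⊤ := by finiteness
    have h' := ENNReal.toReal_mono (measure_ne_top μ _) h
    rw [ENNReal.toReal_add, ENNReal.toReal_add, ENNReal.toReal_add, ENNReal.toReal_add,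
      ENNReal.toReal_add] at h'
    · rw [measE, measE, measE, measE, measE, measE] at h'
      exact h'
    all_goals first
      | exact measure_ne_top μ _
      | finiteness
  have hpoly := ulc_poly a1 a2 a3 b1 b2 b3 c1 c2 c3
    ENNReal.toReal_nonneg ENNReal.toReal_nonneg ENNReal.toReal_nonneg
    ENNReal.toReal_nonneg ENNReal.toReal_nonneg ENNReal.toReal_nonneg
    ENNReal.toReal_nonneg ENNReal.toReal_nonneg ENNReal.toReal_nonneg
  have h0nn : (0:ℝ) ≤ (μ {ω | ∑ i, X i ω = 0}).toReal := ENNReal.toReal_nonneg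
  have h4nn : (0:ℝ) ≤ (μ {ω | ∑ i, X i ω = 4}).toReal := ENNReal.toReal_nonneg
  have hAnn : (0:ℝ) ≤ a1 * a2 * a3 := by positivity
  have hS2nn : (0:ℝ) ≤ c1*a2*a3 + a1*c2*a3 + a1*a2*c3 + b1*b2*a3 + b1*a2*b3 + a1*b2*b3 := by
    positivity
  have hsq := pow_le_pow_left₀ hS2nn hS2 2
  have hprod : (μ {ω | ∑ i, X i ω = 0}).toReal * (μ {ω | ∑ i, X i ω = 4}).toReal
      ≤ (a1 * a2 * a3) * (c1*c2*a3 + c1*a2*c3 + a1*c2*c3 + c1*b2*b3 + b1*c2*b3 + b1*b2*c3) :=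
    mul_le_mul hS0 hS4 h4nn hAnn
  nlinarith [hsq, hpoly, hprod]
end

section
/- Let X_1, X_2, X_3 be independent random variables taking values in {0, 1, 2} and S_3 = X_1 + X_2 + X_3. Then P(S_3 = 4)² ≥ 3·P(S_3 = 2)·P(S_3 = 6). -/
open MeasureTheory ProbabilityTheory Real

/-- Key six-variable inequality, stated with squares so that everything is
positivity-friendly: `(a+b+c+d+e+f)² ≥ 3(ab+bc+ca+af+be+cd)` for nonneg reals. -/
lemma key6 (x y z u v w : ℝ) :
    3 * (x^2*y^2 + y^2*z^2 + z^2*x^2 + x^2*w^2 + y^2*v^2 + z^2*u^2)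
      ≤ (x^2+y^2+z^2+u^2+v^2+w^2)^2 := by
  set S : ℝ := x^2+y^2+z^2+u^2+v^2+w^2 with hS
  rcases eq_or_lt_of_le (show (0:ℝ) ≤ S by positivity) with hs|hs
  · have hx : x^2 = 0 := by nlinarith [sq_nonneg x, sq_nonneg y, sq_nonneg z, sq_nonneg u, sq_nonneg v, sq_nonneg w]
    have hy : y^2 = 0 := by nlinarith [sq_nonneg x, sq_nonneg y, sq_nonneg z, sq_nonneg u, sq_nonneg v, sq_nonneg w]
    have hz : z^2 = 0 := by nlinarith [sq_nonneg x, sq_nonneg y, sq_nonneg z, sq_nonneg u, sq_nonneg v, sq_nonneg w]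
    rw [hx, hy, hz]
    nlinarith [sq_nonneg S]
  · set a : ℝ := x^2; set b : ℝ := y^2; set c : ℝ := z^2
    set d : ℝ := u^2; set e : ℝ := v^2; set f : ℝ := w^2
    have key : S * (S^2 - 3 * (a*b + b*c + c*a + a*f + b*e + c*d)) =
        (a+b+c) * ((a-b)^2 + (b-c)^2 + (a-c)^2) / 2 +
        (f*f*f + 3*e*f*f + 3*e*e*f + e*e*e + 3*d*f*f + 6*d*e*f + 3*d*e*e + 3*d*d*f
          + 3*d*d*e + d*d*d + 3*c*f*f + 6*c*e*f + 3*c*e*e + 3*c*d*f + 3*c*d*e + 3*c*c*f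
          + 3*c*c*e + 3*b*f*f + 3*b*e*f + 6*b*d*f + 3*b*d*e + 3*b*d*d + 3*b*c*f + 3*b*b*f
          + 3*b*b*d + 3*a*e*f + 3*a*e*e + 3*a*d*f + 6*a*d*e + 3*a*d*d + 3*a*c*e + 3*a*b*d
          + 3*a*a*e + 3*a*a*d) := by
      simp only [hS, a, b, c, d, e, f]; ring
    have hpos : 0 ≤ S * (S^2 - 3 * (a*b + b*c + c*a + a*f + b*e + c*d)) := by
      rw [key]; simp only [a, b, c, d, e, f]; positivity
    by_contra h
    push_neg at h
    have : S * (S^2 - 3 * (a*b + b*c + c*a + a*f + b*e + c*d)) < 0 :=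
      mul_neg_of_pos_of_neg hs (by linarith)
    linarith

/-- Key nine-variable inequality:  ultra-log-concavity at `k = 2` in terms of the
individual point masses. -/
lemma key9 (p1 q1 r1 p2 q2 r2 p3 q3 r3 : ℝ)
    (hp1 : 0 ≤ p1) (hq1 : 0 ≤ q1) (hr1 : 0 ≤ r1)
    (hp2 : 0 ≤ p2) (hq2 : 0 ≤ q2) (hr2 : 0 ≤ r2)
    (hp3 : 0 ≤ p3) (hq3 : 0 ≤ q3) (hr3 : 0 ≤ r3) :
    3 * (r1*p2*p3 + p1*r2*p3 + p1*p2*r3 + q1*q2*p3 + q1*p2*q3 + p1*q2*q3) * (r1*r2*r3)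
      ≤ (r1*r2*p3 + r1*p2*r3 + p1*r2*r3 + r1*q2*q3 + q1*r2*q3 + q1*q2*r3)^2 := by
  have ha : 0 ≤ r1*r2*p3 := by positivity
  have hb : 0 ≤ r1*p2*r3 := by positivity
  have hc : 0 ≤ p1*r2*r3 := by positivity
  have hd : 0 ≤ r1*q2*q3 := by positivity
  have he : 0 ≤ q1*r2*q3 := by positivity
  have hf : 0 ≤ q1*q2*r3 := by positivity
  have h := key6 (Real.sqrt (r1*r2*p3)) (Real.sqrt (r1*p2*r3)) (Real.sqrt (p1*r2*r3))
      (Real.sqrt (r1*q2*q3)) (Real.sqrt (q1*r2*q3)) (Real.sqrt (q1*q2*r3))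
  rw [Real.sq_sqrt ha, Real.sq_sqrt hb, Real.sq_sqrt hc, Real.sq_sqrt hd,
      Real.sq_sqrt he, Real.sq_sqrt hf] at h
  nlinarith [h]

/-- Measure of a disjoint union of six sets. -/
lemma meas_union6 {Ω : Type*} [MeasurableSpace Ω] (μ : Measure Ω)
    (A B C D E F : Set Ω)
    (mB : MeasurableSet B) (mC : MeasurableSet C) (mD : MeasurableSet D)
    (mE : MeasurableSet E) (mF : MeasurableSet F)
    (hAB : Disjoint A B) (hAC : Disjoint A C) (hAD : Disjoint A D)
    (hAE : Disjoint A E) (hAF : Disjoint A F)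
    (hBC : Disjoint B C) (hBD : Disjoint B D) (hBE : Disjoint B E) (hBF : Disjoint B F)
    (hCD : Disjoint C D) (hCE : Disjoint C E) (hCF : Disjoint C F)
    (hDE : Disjoint D E) (hDF : Disjoint D F) (hEF : Disjoint E F) :
    μ (A ∪ (B ∪ (C ∪ (D ∪ (E ∪ F))))) =
      μ A + (μ B + (μ C + (μ D + (μ E + μ F)))) := by
  rw [measure_union (hAB.union_right (hAC.union_right (hAD.union_right
        (hAE.union_right hAF))))
      (mB.union (mC.union (mD.union (mE.union mF)))),
     measure_union (hBC.union_right (hBD.union_right (hBE.union_right hBF)))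
      (mC.union (mD.union (mE.union mF))),
     measure_union (hCD.union_right (hCE.union_right hCF)) (mD.union (mE.union mF)),
     measure_union (hDE.union_right hDF) (mE.union mF),
     measure_union hEF mF]

/-- For independent `X₁, X₂, X₃` on `{0,1,2}` and `S₃ = X₁+X₂+X₃`: `P(S₃=4)² ≥ 3 P(S₃=2) P(S₃=6)`. -/
theorem sum_three_ulc_even_k2
    {Ω : Type*} [MeasurableSpace Ω] (μ : Measure Ω) [IsProbabilityMeasure μ]
    (X : Fin 3 → Ω → ℕ) (hmeas : ∀ i, Measurable (X i))
    (hindep : iIndepFun X μ)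
    (hrange : ∀ i ω, X i ω ≤ 2) :
    (μ {ω | ∑ i, X i ω = 4}).toReal ^ 2 ≥
      3 * (μ {ω | ∑ i, X i ω = 2}).toReal * (μ {ω | ∑ i, X i ω = 6}).toReal := by
  classical
  set E : ℕ → ℕ → ℕ → Set Ω := fun x y z => X 0 ⁻¹' {x} ∩ X 1 ⁻¹' {y} ∩ X 2 ⁻¹' {z} with hE
  have hEmeas : ∀ x y z, MeasurableSet (E x y z) := fun x y z =>
    (((hmeas 0) (measurableSet_singleton x)).inter ((hmeas 1) (measurableSet_singleton y))).inter
      ((hmeas 2) (measurableSet_singleton z))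
  have hdisj : ∀ x y z x' y' z', (x ≠ x' ∨ y ≠ y' ∨ z ≠ z') →
      Disjoint (E x y z) (E x' y' z') := by
    intro x y z x' y' z' hne
    rw [Set.disjoint_left]
    intro ω hmem hmem'
    simp only [hE, Set.mem_inter_iff, Set.mem_preimage, Set.mem_singleton_iff] at hmem hmem'
    omega
  have hEmul : ∀ x y z, μ (E x y z) =
      μ (X 0 ⁻¹' {x}) * μ (X 1 ⁻¹' {y}) * μ (X 2 ⁻¹' {z}) := by
    intro x y z
    have h := hindep.measure_inter_preimage_eq_mul Finset.univ
      (sets := fun i => {![x, y, z] i}) (fun i _ => measurableSet_singleton _)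
    have hset : (⋂ i ∈ (Finset.univ : Finset (Fin 3)), X i ⁻¹' {![x, y, z] i}) = E x y z := by
      ext ω
      simp [hE, Fin.forall_fin_succ, and_assoc]
    rw [hset] at h
    rw [h, Fin.prod_univ_three]
    rfl
  have h4 : {ω | ∑ i, X i ω = 4} =
      E 2 2 0 ∪ (E 2 0 2 ∪ (E 0 2 2 ∪ (E 2 1 1 ∪ (E 1 2 1 ∪ E 1 1 2)))) := by
    ext ω
    have h0 := hrange 0 ω; have h1 := hrange 1 ω; have h2 := hrange 2 ω
    simp only [Set.mem_setOf_eq, Fin.sum_univ_three, hE, Set.mem_union, Set.mem_inter_iff,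
      Set.mem_preimage, Set.mem_singleton_iff]
    omega
  have h2' : {ω | ∑ i, X i ω = 2} =
      E 2 0 0 ∪ (E 0 2 0 ∪ (E 0 0 2 ∪ (E 1 1 0 ∪ (E 1 0 1 ∪ E 0 1 1)))) := by
    ext ω
    have h0 := hrange 0 ω; have h1 := hrange 1 ω; have h2 := hrange 2 ω
    simp only [Set.mem_setOf_eq, Fin.sum_univ_three, hE, Set.mem_union, Set.mem_inter_iff,
      Set.mem_preimage, Set.mem_singleton_iff]
    omega
  have h6 : {ω | ∑ i, X i ω = 6} = E 2 2 2 := by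
    ext ω
    have h0 := hrange 0 ω; have h1 := hrange 1 ω; have h2 := hrange 2 ω
    simp only [Set.mem_setOf_eq, Fin.sum_univ_three, hE, Set.mem_inter_iff,
      Set.mem_preimage, Set.mem_singleton_iff]
    omega
  have m4 : μ {ω | ∑ i, X i ω = 4} =
      μ (E 2 2 0) + (μ (E 2 0 2) + (μ (E 0 2 2) + (μ (E 2 1 1) + (μ (E 1 2 1) + μ (E 1 1 2))))) := by
    rw [h4]
    exact meas_union6 μ _ _ _ _ _ _ (hEmeas _ _ _) (hEmeas _ _ _) (hEmeas _ _ _)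
      (hEmeas _ _ _) (hEmeas _ _ _)
      (hdisj _ _ _ _ _ _ (by omega)) (hdisj _ _ _ _ _ _ (by omega))
      (hdisj _ _ _ _ _ _ (by omega)) (hdisj _ _ _ _ _ _ (by omega))
      (hdisj _ _ _ _ _ _ (by omega)) (hdisj _ _ _ _ _ _ (by omega))
      (hdisj _ _ _ _ _ _ (by omega)) (hdisj _ _ _ _ _ _ (by omega))
      (hdisj _ _ _ _ _ _ (by omega)) (hdisj _ _ _ _ _ _ (by omega))
      (hdisj _ _ _ _ _ _ (by omega)) (hdisj _ _ _ _ _ _ (by omega))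
      (hdisj _ _ _ _ _ _ (by omega)) (hdisj _ _ _ _ _ _ (by omega))
      (hdisj _ _ _ _ _ _ (by omega))
  have m2 : μ {ω | ∑ i, X i ω = 2} =
      μ (E 2 0 0) + (μ (E 0 2 0) + (μ (E 0 0 2) + (μ (E 1 1 0) + (μ (E 1 0 1) + μ (E 0 1 1))))) := by
    rw [h2']
    exact meas_union6 μ _ _ _ _ _ _ (hEmeas _ _ _) (hEmeas _ _ _) (hEmeas _ _ _)
      (hEmeas _ _ _) (hEmeas _ _ _)
      (hdisj _ _ _ _ _ _ (by omega)) (hdisj _ _ _ _ _ _ (by omega))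
      (hdisj _ _ _ _ _ _ (by omega)) (hdisj _ _ _ _ _ _ (by omega))
      (hdisj _ _ _ _ _ _ (by omega)) (hdisj _ _ _ _ _ _ (by omega))
      (hdisj _ _ _ _ _ _ (by omega)) (hdisj _ _ _ _ _ _ (by omega))
      (hdisj _ _ _ _ _ _ (by omega)) (hdisj _ _ _ _ _ _ (by omega))
      (hdisj _ _ _ _ _ _ (by omega)) (hdisj _ _ _ _ _ _ (by omega))
      (hdisj _ _ _ _ _ _ (by omega)) (hdisj _ _ _ _ _ _ (by omega))
      (hdisj _ _ _ _ _ _ (by omega))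
  have t4 : (μ {ω | ∑ i, X i ω = 4}).toReal =
      (μ (E 2 2 0)).toReal + (μ (E 2 0 2)).toReal + (μ (E 0 2 2)).toReal +
      (μ (E 2 1 1)).toReal + (μ (E 1 2 1)).toReal + (μ (E 1 1 2)).toReal := by
    rw [m4,
        ENNReal.toReal_add (measure_ne_top μ _) (by finiteness),
        ENNReal.toReal_add (measure_ne_top μ _) (by finiteness),
        ENNReal.toReal_add (measure_ne_top μ _) (by finiteness),
        ENNReal.toReal_add (measure_ne_top μ _) (by finiteness),
        ENNReal.toReal_add (measure_ne_top μ _) (by finiteness)]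
    ring
  have t2 : (μ {ω | ∑ i, X i ω = 2}).toReal =
      (μ (E 2 0 0)).toReal + (μ (E 0 2 0)).toReal + (μ (E 0 0 2)).toReal +
      (μ (E 1 1 0)).toReal + (μ (E 1 0 1)).toReal + (μ (E 0 1 1)).toReal := by
    rw [m2,
        ENNReal.toReal_add (measure_ne_top μ _) (by finiteness),
        ENNReal.toReal_add (measure_ne_top μ _) (by finiteness),
        ENNReal.toReal_add (measure_ne_top μ _) (by finiteness),
        ENNReal.toReal_add (measure_ne_top μ _) (by finiteness),
        ENNReal.toReal_add (measure_ne_top μ _) (by finiteness)]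
    ring
  have t6 : (μ {ω | ∑ i, X i ω = 6}).toReal = (μ (E 2 2 2)).toReal := by rw [h6]
  set P : Fin 3 → ℕ → ℝ := fun i k => (μ (X i ⁻¹' {k})).toReal with hP
  have hEreal : ∀ x y z, (μ (E x y z)).toReal = P 0 x * P 1 y * P 2 z := by
    intro x y z
    rw [hEmul, ENNReal.toReal_mul, ENNReal.toReal_mul]
  have hPnonneg : ∀ i k, 0 ≤ P i k := fun i k => ENNReal.toReal_nonneg
  have hkey := key9 (P 0 0) (P 0 1) (P 0 2) (P 1 0) (P 1 1) (P 1 2) (P 2 0) (P 2 1) (P 2 2)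
    (hPnonneg 0 0) (hPnonneg 0 1) (hPnonneg 0 2) (hPnonneg 1 0) (hPnonneg 1 1) (hPnonneg 1 2)
    (hPnonneg 2 0) (hPnonneg 2 1) (hPnonneg 2 2)
  rw [ge_iff_le, t4, t2, t6, hEreal, hEreal, hEreal, hEreal, hEreal, hEreal, hEreal, hEreal,
      hEreal, hEreal, hEreal, hEreal, hEreal]
  nlinarith [hkey]
end

section
/- Let X_1, X_2, X_3 be independent random variables taking values in {0, 1, 2} and S_3 = X_1 + X_2 + X_3. Then P(S_3 = 3)² ≥ 4·P(S_3 = 1)·P(S_3 = 5). In particular, the conditional distribution of S_3 given S_3 odd, supported on {1, 3, 5}, is ultra-log-concave of order 2. -/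
open MeasureTheory ProbabilityTheory Real

lemma ulc_alg (a1 b1 c1 a2 b2 c2 a3 b3 c3 : ℝ)
    (ha1 : 0 ≤ a1) (hb1 : 0 ≤ b1) (hc1 : 0 ≤ c1)
    (ha2 : 0 ≤ a2) (hb2 : 0 ≤ b2) (hc2 : 0 ≤ c2)
    (ha3 : 0 ≤ a3) (hb3 : 0 ≤ b3) (hc3 : 0 ≤ c3) :
    4 * (b1*a2*a3 + a1*b2*a3 + a1*a2*b3) * (b1*c2*c3 + c1*b2*c3 + c1*c2*b3) ≤
    (b1*b2*b3 + a1*b2*c3 + a1*c2*b3 + b1*a2*c3 + b1*c2*a3 + c1*a2*b3 + c1*b2*a3)^2 := by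
  rcases le_or_gt 0 ((a1*c2-a2*c1)*(a1*c3-a3*c1)) with hxy | hxy
  · have key : (b1*b2*b3 + a1*b2*c3 + a1*c2*b3 + b1*a2*c3 + b1*c2*a3 + c1*a2*b3 + c1*b2*a3)^2
        - 4 * (b1*a2*a3 + a1*b2*a3 + a1*a2*b3) * (b1*c2*c3 + c1*b2*c3 + c1*c2*b3)
        = (b1*(a2*c3-a3*c2) + (a1*(b2*c3-b3*c2) - c1*(a3*b2-a2*b3)))^2
          + b2*b3*(4*((a1*c2-a2*c1)*(a1*c3-a3*c1)))
          + b2*b3*(b1^2*(b2*b3 + 2*(a2*c3) + 2*(a3*c2)))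
          + b2*b3*(2*b1*(a1*(b2*c3+b3*c2) + c1*(a2*b3+a3*b2))) := by ring
    have t1 : 0 ≤ (b1*(a2*c3-a3*c2) + (a1*(b2*c3-b3*c2) - c1*(a3*b2-a2*b3)))^2 := sq_nonneg _
    have t2 : 0 ≤ b2*b3*(4*((a1*c2-a2*c1)*(a1*c3-a3*c1))) :=
      mul_nonneg (mul_nonneg hb2 hb3) (by linarith)
    have t3 : 0 ≤ b2*b3*(b1^2*(b2*b3 + 2*(a2*c3) + 2*(a3*c2))) := by
      have h : 0 ≤ b2*b3 + 2*(a2*c3) + 2*(a3*c2) := by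
        have := mul_nonneg hb2 hb3; have := mul_nonneg ha2 hc3; have := mul_nonneg ha3 hc2
        linarith
      exact mul_nonneg (mul_nonneg hb2 hb3) (mul_nonneg (sq_nonneg b1) h)
    have t4 : 0 ≤ b2*b3*(2*b1*(a1*(b2*c3+b3*c2) + c1*(a2*b3+a3*b2))) := by
      have h : 0 ≤ a1*(b2*c3+b3*c2) + c1*(a2*b3+a3*b2) := by
        have := mul_nonneg ha1 (add_nonneg (mul_nonneg hb2 hc3) (mul_nonneg hb3 hc2))
        have := mul_nonneg hc1 (add_nonneg (mul_nonneg ha2 hb3) (mul_nonneg ha3 hb2))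
        linarith
      exact mul_nonneg (mul_nonneg hb2 hb3) (mul_nonneg (by linarith) h)
    linarith
  rcases le_or_gt 0 ((a1*c3-a3*c1)*(a2*c3-a3*c2)) with hyz | hyz
  · have key : (b1*b2*b3 + a1*b2*c3 + a1*c2*b3 + b1*a2*c3 + b1*c2*a3 + c1*a2*b3 + c1*b2*a3)^2
        - 4 * (b1*a2*a3 + a1*b2*a3 + a1*a2*b3) * (b1*c2*c3 + c1*b2*c3 + c1*c2*b3)
        = (b3*(a1*c2-a2*c1) + (a3*(b1*c2-b2*c1) - c3*(a2*b1-a1*b2)))^2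
          + b1*b2*(4*((a1*c3-a3*c1)*(a2*c3-a3*c2)))
          + b1*b2*(b3^2*(b1*b2 + 2*(a1*c2) + 2*(a2*c1)))
          + b1*b2*(2*b3*(a3*(b1*c2+b2*c1) + c3*(a1*b2+a2*b1))) := by ring
    have t1 : 0 ≤ (b3*(a1*c2-a2*c1) + (a3*(b1*c2-b2*c1) - c3*(a2*b1-a1*b2)))^2 := sq_nonneg _
    have t2 : 0 ≤ b1*b2*(4*((a1*c3-a3*c1)*(a2*c3-a3*c2))) :=
      mul_nonneg (mul_nonneg hb1 hb2) (by linarith)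
    have t3 : 0 ≤ b1*b2*(b3^2*(b1*b2 + 2*(a1*c2) + 2*(a2*c1))) := by
      have h : 0 ≤ b1*b2 + 2*(a1*c2) + 2*(a2*c1) := by
        have := mul_nonneg hb1 hb2; have := mul_nonneg ha1 hc2; have := mul_nonneg ha2 hc1
        linarith
      exact mul_nonneg (mul_nonneg hb1 hb2) (mul_nonneg (sq_nonneg b3) h)
    have t4 : 0 ≤ b1*b2*(2*b3*(a3*(b1*c2+b2*c1) + c3*(a1*b2+a2*b1))) := by
      have h : 0 ≤ a3*(b1*c2+b2*c1) + c3*(a1*b2+a2*b1) := by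
        have := mul_nonneg ha3 (add_nonneg (mul_nonneg hb1 hc2) (mul_nonneg hb2 hc1))
        have := mul_nonneg hc3 (add_nonneg (mul_nonneg ha1 hb2) (mul_nonneg ha2 hb1))
        linarith
      exact mul_nonneg (mul_nonneg hb1 hb2) (mul_nonneg (by linarith) h)
    linarith
  · exfalso
    set x := a1*c2-a2*c1 with hxdef
    set y := a1*c3-a3*c1 with hydef
    set z := a2*c3-a3*c2 with hzdef
    rcases lt_trichotomy y 0 with hy | hy | hy
    · have hx : 0 < x := by nlinarith
      have hz : 0 < z := by nlinarith
      have e : a1*z = a2*y - a3*x := by rw [hxdef, hydef, hzdef]; ring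
      have h1 : a1*z ≤ 0 := by
        have := mul_nonneg ha3 hx.le
        have : a2*y ≤ 0 := mul_nonpos_of_nonneg_of_nonpos ha2 hy.le
        nlinarith [mul_nonneg ha3 hx.le]
      have ha1z : 0 ≤ a1*z := mul_nonneg ha1 hz.le
      have ha10 : a1 = 0 := by
        rcases eq_or_lt_of_le ha1 with h | h
        · exact h.symm
        · nlinarith
      rw [hxdef, ha10] at hx
      nlinarith [mul_nonneg ha2 hc1]
    · rw [hy, mul_zero] at hxy; exact absurd hxy (lt_irrefl 0)
    · have hx : x < 0 := by nlinarith
      have hz : z < 0 := by nlinarith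
      have e : c1*z = c2*y - c3*x := by rw [hxdef, hydef, hzdef]; ring
      have h1 : 0 ≤ c1*z := by nlinarith [mul_nonneg hc2 hy.le, mul_nonpos_of_nonneg_of_nonpos hc3 hx.le]
      have hc10 : c1 = 0 := by
        rcases eq_or_lt_of_le hc1 with h | h
        · exact h.symm
        · nlinarith
      rw [hxdef, hc10] at hx
      nlinarith [mul_nonneg ha1 hc2]

/-- For independent `X₁, X₂, X₃` on `{0,1,2}` and `S₃ = X₁+X₂+X₃`: `P(S₃=3)² ≥ 4 P(S₃=1) P(S₃=5)`, i.e. the conditional distribution of `S₃` given `S₃` odd, supported on `{1,3,5}`, is ultra-log-concave of order 2. -/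
theorem sum_three_ulc_odd
    {Ω : Type*} [MeasurableSpace Ω] (μ : Measure Ω) [IsProbabilityMeasure μ]
    (X : Fin 3 → Ω → ℕ) (hmeas : ∀ i, Measurable (X i))
    (hindep : iIndepFun X μ)
    (hrange : ∀ i ω, X i ω ≤ 2) :
    (μ {ω | ∑ i, X i ω = 3}).toReal ^ 2 ≥
      4 * (μ {ω | ∑ i, X i ω = 1}).toReal * (μ {ω | ∑ i, X i ω = 5}).toReal := by
  have hE : ∀ a b c : ℕ, μ (X 0 ⁻¹' {a} ∩ X 1 ⁻¹' {b} ∩ X 2 ⁻¹' {c})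
      = μ (X 0 ⁻¹' {a}) * μ (X 1 ⁻¹' {b}) * μ (X 2 ⁻¹' {c}) := by
    intro a b c
    have h := hindep.meas_iInter (s := fun i => X i ⁻¹' {(![a, b, c]) i})
      (fun i => ⟨{(![a, b, c]) i}, measurableSet_singleton _, rfl⟩)
    have hset : (⋂ i, X i ⁻¹' {(![a, b, c]) i})
        = X 0 ⁻¹' {a} ∩ X 1 ⁻¹' {b} ∩ X 2 ⁻¹' {c} := by
      ext ω
      simp [Set.mem_iInter, Fin.forall_fin_succ, and_assoc]
    rw [hset, Fin.prod_univ_three] at h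
    simpa using h
  have key : ∀ (n : ℕ) (T : Finset (ℕ × ℕ × ℕ)),
      (∀ a b c : ℕ, a ≤ 2 → b ≤ 2 → c ≤ 2 → a + b + c = n → (a, b, c) ∈ T) →
      (∀ p ∈ T, p.1 + p.2.1 + p.2.2 = n) →
      μ {ω | X 0 ω + X 1 ω + X 2 ω = n}
        = ∑ p ∈ T, μ (X 0 ⁻¹' {p.1}) * μ (X 1 ⁻¹' {p.2.1}) * μ (X 2 ⁻¹' {p.2.2}) := by
    intro n T hT1 hT2
    have hset : {ω | X 0 ω + X 1 ω + X 2 ω = n}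
        = ⋃ p ∈ T, (X 0 ⁻¹' {p.1} ∩ X 1 ⁻¹' {p.2.1} ∩ X 2 ⁻¹' {p.2.2}) := by
      ext ω
      simp only [Set.mem_setOf_eq, Set.mem_iUnion, Set.mem_inter_iff, Set.mem_preimage,
        Set.mem_singleton_iff, exists_prop]
      constructor
      · intro h
        exact ⟨(X 0 ω, X 1 ω, X 2 ω),
          hT1 _ _ _ (hrange 0 ω) (hrange 1 ω) (hrange 2 ω) h, ⟨rfl, rfl⟩, rfl⟩
      · rintro ⟨p, hp, ⟨h0, h1⟩, h2⟩
        rw [h0, h1, h2]; exact hT2 p hp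
    have hdisj : (T : Set (ℕ × ℕ × ℕ)).PairwiseDisjoint
        (fun p => X 0 ⁻¹' {p.1} ∩ X 1 ⁻¹' {p.2.1} ∩ X 2 ⁻¹' {p.2.2}) := by
      intro p _ q _ hpq
      refine Set.disjoint_left.2 fun ω hω hω' => hpq ?_
      simp only [Set.mem_inter_iff, Set.mem_preimage, Set.mem_singleton_iff] at hω hω'
      obtain ⟨⟨h0, h1⟩, h2⟩ := hω
      obtain ⟨⟨g0, g1⟩, g2⟩ := hω'
      exact Prod.ext (h0 ▸ g0) (Prod.ext (h1 ▸ g1) (h2 ▸ g2))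
    have hm : ∀ p ∈ T, MeasurableSet (X 0 ⁻¹' {p.1} ∩ X 1 ⁻¹' {p.2.1} ∩ X 2 ⁻¹' {p.2.2}) :=
      fun p _ => (((hmeas 0) (measurableSet_singleton _)).inter
        ((hmeas 1) (measurableSet_singleton _))).inter ((hmeas 2) (measurableSet_singleton _))
    rw [hset, measure_biUnion_finset hdisj hm]
    exact Finset.sum_congr rfl fun p _ => hE p.1 p.2.1 p.2.2
  have hfin : ∀ a b c : ℕ, μ (X 0 ⁻¹' {a}) * μ (X 1 ⁻¹' {b}) * μ (X 2 ⁻¹' {c}) ≠ ⊤ :=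
    fun a b c => ENNReal.mul_ne_top (ENNReal.mul_ne_top (measure_ne_top μ _)
      (measure_ne_top μ _)) (measure_ne_top μ _)
  have toR : ∀ (n : ℕ) (T : Finset (ℕ × ℕ × ℕ)),
      (∀ a b c : ℕ, a ≤ 2 → b ≤ 2 → c ≤ 2 → a + b + c = n → (a, b, c) ∈ T) →
      (∀ p ∈ T, p.1 + p.2.1 + p.2.2 = n) →
      (μ {ω | X 0 ω + X 1 ω + X 2 ω = n}).toReal
        = ∑ p ∈ T, (μ (X 0 ⁻¹' {p.1})).toReal * (μ (X 1 ⁻¹' {p.2.1})).toReal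
            * (μ (X 2 ⁻¹' {p.2.2})).toReal := by
    intro n T h1 h2
    rw [key n T h1 h2, ENNReal.toReal_sum (fun p _ => hfin _ _ _)]
    simp [ENNReal.toReal_mul]
  have h1 := toR 1 {(1,0,0),(0,1,0),(0,0,1)}
    (by intro a b c ha hb hc hs; interval_cases a <;> interval_cases b <;>
      interval_cases c <;> revert hs <;> decide) (by decide)
  have h3 := toR 3 {(1,1,1),(0,1,2),(0,2,1),(1,0,2),(1,2,0),(2,0,1),(2,1,0)}
    (by intro a b c ha hb hc hs; interval_cases a <;> interval_cases b <;>
      interval_cases c <;> revert hs <;> decide) (by decide)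
  have h5 := toR 5 {(1,2,2),(2,1,2),(2,2,1)}
    (by intro a b c ha hb hc hs; interval_cases a <;> interval_cases b <;>
      interval_cases c <;> revert hs <;> decide) (by decide)
  simp (config := { decide := true }) [Finset.sum_insert, Finset.mem_insert,
    Finset.mem_singleton, Finset.sum_singleton, Prod.mk.injEq] at h1 h3 h5
  simp only [Fin.sum_univ_three]
  rw [ge_iff_le, h1, h3, h5]
  nlinarith [ulc_alg (μ (X 0 ⁻¹' {0})).toReal (μ (X 0 ⁻¹' {1})).toReal (μ (X 0 ⁻¹' {2})).toReal
      (μ (X 1 ⁻¹' {0})).toReal (μ (X 1 ⁻¹' {1})).toReal (μ (X 1 ⁻¹' {2})).toReal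
      (μ (X 2 ⁻¹' {0})).toReal (μ (X 2 ⁻¹' {1})).toReal (μ (X 2 ⁻¹' {2})).toReal
      ENNReal.toReal_nonneg ENNReal.toReal_nonneg ENNReal.toReal_nonneg
      ENNReal.toReal_nonneg ENNReal.toReal_nonneg ENNReal.toReal_nonneg
      ENNReal.toReal_nonneg ENNReal.toReal_nonneg ENNReal.toReal_nonneg]
end
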